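/- arXiv:1310.1514 — 10 statements merged into one kernel-verified Lean document; each statement's English description precedes it below -/
import Mathlib

section
/- Let K be a convex body in ℝⁿ that is ε-smooth, i.e., K = K' + εBⁿ for some convex body K' and ε > 0. Then the spherical image map u_K : ∂K → S^{n-1}, which assigns to each boundary point its (unique) outer unit normal, is Lipschitz with Lipschitz constant 1/ε. -/
open Metric Set Pointwise
open scoped RealInnerProductSpace

/-- An ε-smooth convex body (K = K' + εBⁿ) has a 1/ε-Lipschitz spherical image map:
if `u` assigns to each boundary point an outer unit normal, then `u` is Lipschitz
with constant 1/ε on the boundary of K. -/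
theorem spherical_image_lipschitz
    (n : ℕ) (ε : ℝ) (hε : 0 < ε)
    (K K' : Set (EuclideanSpace ℝ (Fin n)))
    (hK'ne : K'.Nonempty) (hK'cpt : IsCompact K') (hK'cvx : Convex ℝ K')
    (hsmooth : K = K' + closedBall (0 : EuclideanSpace ℝ (Fin n)) ε)
    (u : EuclideanSpace ℝ (Fin n) → EuclideanSpace ℝ (Fin n))
    (hu_unit : ∀ x ∈ frontier K, ‖u x‖ = 1)
    (hu_normal : ∀ x ∈ frontier K, ∀ y ∈ K, ⟪y - x, u x⟫ ≤ 0) :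
    ∀ x ∈ frontier K, ∀ y ∈ frontier K, ‖u x - u y‖ ≤ ε⁻¹ * ‖x - y‖ := by
  have hKcl : IsClosed K := by
    rw [hsmooth]
    exact (hK'cpt.add (isCompact_closedBall _ _)).isClosed
  have hball : ∀ z ∈ frontier K, ε • u z ∈ closedBall (0 : EuclideanSpace ℝ (Fin n)) ε := by
    intro z hz
    simp [mem_closedBall, dist_zero_right, norm_smul, hu_unit z hz, abs_of_pos hε]
  have key : ∀ z ∈ frontier K, z - ε • u z ∈ K' := by
    intro z hz
    have hzK : z ∈ K := hKcl.closure_eq ▸ frontier_subset_closure hz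
    rw [hsmooth] at hzK
    obtain ⟨k, hk, b, hb, hkb⟩ := Set.mem_add.1 hzK
    have hkK : k + ε • u z ∈ K := by
      rw [hsmooth]; exact Set.add_mem_add hk (hball z hz)
    have h1 : ⟪k + ε • u z - z, u z⟫ ≤ 0 := hu_normal z hz _ hkK
    have h1' : ⟪k - z, u z⟫ ≤ -ε := by
      have hin : ⟪k + ε • u z - z, u z⟫ = ⟪k - z, u z⟫ + ε * (‖u z‖ * ‖u z‖) := by
        rw [show k + ε • u z - z = (k - z) + ε • u z by abel, inner_add_left,
          real_inner_smul_left, real_inner_self_eq_norm_mul_norm]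
      rw [hin, hu_unit z hz] at h1
      linarith
    have hnb : ‖k - z‖ ≤ ε := by
      have hbe : k - z = -b := by rw [← hkb]; abel
      rw [hbe, norm_neg]
      simpa [mem_closedBall, dist_zero_right] using hb
    have hzero : ‖(k - z) + ε • u z‖ ^ 2 ≤ 0 := by
      have hexp := norm_add_sq_real (k - z) (ε • u z)
      have h2 : ⟪k - z, ε • u z⟫ = ε * ⟪k - z, u z⟫ := real_inner_smul_right _ _ _
      have h3 : ‖ε • u z‖ = ε := by
        rw [norm_smul, hu_unit z hz, mul_one, Real.norm_eq_abs, abs_of_pos hε]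
      have hn0 : (0:ℝ) ≤ ‖k - z‖ := norm_nonneg _
      nlinarith [hexp]
    have hvz : (k - z) + ε • u z = 0 := by
      have := norm_nonneg ((k - z) + ε • u z)
      have : ‖(k - z) + ε • u z‖ = 0 := by nlinarith
      exact norm_eq_zero.1 this
    have : k = z - ε • u z := by
      linear_combination (norm := module) hvz
    rwa [← this]
  intro x hx y hy
  -- the two cross points
  have hp : (y - ε • u y) + ε • u x ∈ K := by
    rw [hsmooth]; exact Set.add_mem_add (key y hy) (hball x hx)
  have hq : (x - ε • u x) + ε • u y ∈ K := by
    rw [hsmooth]; exact Set.add_mem_add (key x hx) (hball y hy)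
  have h1 : ⟪(y - ε • u y) + ε • u x - x, u x⟫ ≤ 0 := hu_normal x hx _ hp
  have h2 : ⟪(x - ε • u x) + ε • u y - y, u y⟫ ≤ 0 := hu_normal y hy _ hq
  have e1 : ⟪(y - ε • u y) + ε • u x - x, u x⟫
      = ⟪y - x, u x⟫ - ε * ⟪u y, u x⟫ + ε * (‖u x‖ * ‖u x‖) := by
    rw [show (y - ε • u y) + ε • u x - x = (y - x) + ε • (u x - u y) by module]
    simp only [inner_add_left, inner_sub_left, real_inner_smul_left,
      real_inner_self_eq_norm_mul_norm]
    ring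
  have e2 : ⟪(x - ε • u x) + ε • u y - y, u y⟫
      = ⟪x - y, u y⟫ - ε * ⟪u x, u y⟫ + ε * (‖u y‖ * ‖u y‖) := by
    rw [show (x - ε • u x) + ε • u y - y = (x - y) + ε • (u y - u x) by module]
    simp only [inner_add_left, inner_sub_left, real_inner_smul_left,
      real_inner_self_eq_norm_mul_norm]
    ring
  rw [e1, hu_unit x hx] at h1
  rw [e2, hu_unit y hy] at h2
  have hsym : ⟪u y, u x⟫ = ⟪u x, u y⟫ := real_inner_comm _ _
  have hns : ‖u x - u y‖ ^ 2 = 2 - 2 * ⟪u x, u y⟫ := by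
    rw [norm_sub_sq_real, hu_unit x hx, hu_unit y hy]; ring
  have hxy : ⟪x - y, u x - u y⟫ = -⟪y - x, u x⟫ - ⟪x - y, u y⟫ := by
    rw [inner_sub_right]
    have : ⟪x - y, u x⟫ = -⟪y - x, u x⟫ := by
      rw [show x - y = -(y - x) by abel, inner_neg_left]
    rw [this]
  have hmain : ε * ‖u x - u y‖ ^ 2 ≤ ⟪x - y, u x - u y⟫ := by
    rw [hxy, hns]
    nlinarith
  have hcs : ⟪x - y, u x - u y⟫ ≤ ‖x - y‖ * ‖u x - u y‖ := real_inner_le_norm _ _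
  rcases eq_or_lt_of_le (norm_nonneg (u x - u y)) with h0 | h0
  · rw [← h0]
    positivity
  · have h : ε * ‖u x - u y‖ ≤ ‖x - y‖ := by nlinarith
    rw [← inv_mul_cancel_left₀ hε.ne' ‖u x - u y‖]
    exact mul_le_mul_of_nonneg_left h (by positivity)
end

section
/- Let ε ∈ (0,1), δ ∈ (0, ε/2), and let K, L ⊂ ℝⁿ be ε-smooth convex bodies with d_H(K,L) ≤ δ. Then the nearest-point projection p : ∂K → ∂L onto the boundary of L is well-defined (every x ∈ ∂K has a unique nearest point on ∂L) and satisfies |p(x) − x| ≤ δ for all x ∈ ∂K. -/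
open Metric Set Pointwise
open scoped RealInnerProductSpace

section Helpers

variable {E : Type*} [NormedAddCommGroup E] [InnerProductSpace ℝ E]

private lemma seg_cross {L : Set E} (hL : IsClosed L) {b a : E} (hb : b ∈ L) (ha : a ∉ L) :
    ∃ z ∈ segment ℝ b a, z ∈ frontier L := by
  by_contra h
  push_neg at h
  have hsub : segment ℝ b a ⊆ interior L ∪ Lᶜ := by
    intro w hw
    by_cases hwL : w ∈ L
    · have hwf : w ∉ frontier L := h w hw
      rw [hL.frontier_eq] at hwf
      simp only [Set.mem_diff, not_and, not_not] at hwf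
      exact Or.inl (hwf hwL)
    · exact Or.inr hwL
  have hbmem : b ∈ interior L := by
    have hwf := h b (left_mem_segment ℝ b a)
    rw [hL.frontier_eq] at hwf
    simp only [Set.mem_diff, not_and, not_not] at hwf
    exact hwf hb
  obtain ⟨w, -, hw1, hw2⟩ := (convex_segment b a).isPreconnected (interior L) Lᶜ
    isOpen_interior hL.isOpen_compl hsub ⟨b, left_mem_segment ℝ b a, hbmem⟩
    ⟨a, right_mem_segment ℝ b a, ha⟩
  exact hw2 (interior_subset hw1)

private lemma support_vec [CompleteSpace E] {L : Set E} (hconv : Convex ℝ L) {y₀ : E}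
    (hy₀ : y₀ ∈ interior L) {y : E} (hy : y ∈ frontier L) :
    ∃ v : E, ‖v‖ = 1 ∧ ∀ z ∈ L, ⟪v, z⟫ ≤ ⟪v, y⟫ := by
  have hyni : y ∉ interior L := hy.2
  obtain ⟨f, hf⟩ := geometric_hahn_banach_open_point hconv.interior isOpen_interior hyni
  set w := (InnerProductSpace.toDual ℝ E).symm f with hwdef
  have hwapp : ∀ z, ⟪w, z⟫ = f z := fun z => InnerProductSpace.toDual_symm_apply
  have hw0 : w ≠ 0 := by
    intro h0
    have h1 := hf y₀ hy₀
    have h2 : f y₀ = 0 := by rw [← hwapp y₀, h0, inner_zero_left]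
    have h3 : f y = 0 := by rw [← hwapp y, h0, inner_zero_left]
    rw [h2, h3] at h1
    exact lt_irrefl 0 h1
  have hle : ∀ z ∈ L, f z ≤ f y := by
    intro z hz
    have hseg : openSegment ℝ z y₀ ⊆ interior L :=
      hconv.openSegment_closure_interior_subset_interior (subset_closure hz) hy₀
    have hzc : z ∈ closure (interior L) := by
      have hz2 : z ∈ closure (openSegment ℝ z y₀) := by
        rw [closure_openSegment]; exact left_mem_segment ℝ z y₀
      exact closure_mono hseg hz2
    have hcl : IsClosed {u : E | f u ≤ f y} := isClosed_le f.continuous continuous_const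
    exact hcl.closure_subset_iff.mpr (fun u hu => (hf u hu).le) hzc
  refine ⟨‖w‖⁻¹ • w, ?_, ?_⟩
  · rw [norm_smul, norm_inv, norm_norm, inv_mul_cancel₀ (norm_ne_zero_iff.mpr hw0)]
  · intro z hz
    rw [real_inner_smul_left, real_inner_smul_left]
    have hzy := hle z hz
    rw [← hwapp z, ← hwapp y] at hzy
    exact mul_le_mul_of_nonneg_left hzy (by positivity)

private lemma frontier_far {L : Set E} {c : E} {r : ℝ} (h : closedBall c r ⊆ L) {z : E}
    (hz : z ∈ frontier L) : r ≤ dist c z := by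
  have hball : ball c r ⊆ interior L :=
    interior_maximal (ball_subset_closedBall.trans h) isOpen_ball
  by_contra hlt
  push_neg at hlt
  exact hz.2 (hball (mem_ball.mpr (by rwa [dist_comm])))

private lemma norm_add_lt_two {u₁ u₂ : E} (h1 : ‖u₁‖ = 1) (h2 : ‖u₂‖ = 1) (hne : u₁ ≠ u₂) :
    ‖u₁ + u₂‖ < 2 := by
  have hp := parallelogram_law_with_norm ℝ u₁ u₂
  have hpos : 0 < ‖u₁ - u₂‖ := norm_pos_iff.mpr (sub_ne_zero.mpr hne)
  nlinarith [norm_nonneg (u₁ + u₂)]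

private lemma midpoint_closer {x z₁ z₂ : E} (hne : z₁ ≠ z₂) {d : ℝ}
    (h1 : ‖x - z₁‖ = d) (h2 : ‖x - z₂‖ = d) :
    ‖x - ((1/2 : ℝ) • z₁ + (1/2 : ℝ) • z₂)‖ < d := by
  have hp := parallelogram_law_with_norm ℝ (x - z₁) (x - z₂)
  have hkey : x - ((1/2 : ℝ) • z₁ + (1/2 : ℝ) • z₂) = (1/2 : ℝ) • ((x - z₁) + (x - z₂)) := by
    module
  have hpos : 0 < ‖(x - z₁) - (x - z₂)‖ := by
    have : (x - z₁) - (x - z₂) = z₂ - z₁ := by abel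
    rw [this]
    exact norm_pos_iff.mpr (sub_ne_zero.mpr (Ne.symm hne))
  have hd0 : 0 ≤ d := h1 ▸ norm_nonneg _
  rw [hkey, norm_smul]
  have habs : ‖(1/2 : ℝ)‖ = 1/2 := by rw [Real.norm_eq_abs]; norm_num
  rw [habs]
  nlinarith [norm_nonneg ((x - z₁) + (x - z₂))]

private lemma ball_subset_smooth {L' : Set E} {ε : ℝ} {p : E} (hp : p ∈ L') :
    closedBall p ε ⊆ L' + closedBall (0 : E) ε := by
  intro z hz
  refine Set.mem_add.mpr ⟨p, hp, z - p, ?_, by abel⟩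
  rw [mem_closedBall, dist_zero_right, ← dist_eq_norm]
  exact hz

end Helpers

/-- For ε-smooth convex bodies K, L with Hausdorff distance at most δ < ε/2, every point
x of ∂K has a unique nearest point on ∂L, and this nearest point is at distance at most δ
from x. -/
theorem nearest_point_projection_wellDefined
    (n : ℕ) (ε δ : ℝ) (hε : ε ∈ Set.Ioo (0:ℝ) 1) (hδ : δ ∈ Set.Ioo (0:ℝ) (ε/2))
    (K L : Set (EuclideanSpace ℝ (Fin n)))
    (hKsmooth : ∃ K' : Set (EuclideanSpace ℝ (Fin n)), K'.Nonempty ∧ IsCompact K' ∧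
      Convex ℝ K' ∧ K = K' + closedBall (0 : EuclideanSpace ℝ (Fin n)) ε)
    (hLsmooth : ∃ L' : Set (EuclideanSpace ℝ (Fin n)), L'.Nonempty ∧ IsCompact L' ∧
      Convex ℝ L' ∧ L = L' + closedBall (0 : EuclideanSpace ℝ (Fin n)) ε)
    (hd : hausdorffDist K L ≤ δ) :
    ∀ x ∈ frontier K, ∃ y,
      (y ∈ frontier L ∧ dist x y = infDist x (frontier L) ∧ dist x y ≤ δ) ∧
      ∀ z, z ∈ frontier L ∧ dist x z = infDist x (frontier L) → z = y := by
  obtain ⟨hε0, hε1⟩ := hε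
  obtain ⟨hδ0, hδε⟩ := hδ
  obtain ⟨K', hK'ne, hK'cpt, hK'conv, hKeq⟩ := hKsmooth
  obtain ⟨L', hL'ne, hL'cpt, hL'conv, hLeq⟩ := hLsmooth
  obtain ⟨pK, hpK⟩ := hK'ne
  obtain ⟨pL, hpL⟩ := hL'ne
  have hKcpt : IsCompact K := by rw [hKeq]; exact hK'cpt.add (isCompact_closedBall 0 ε)
  have hLcpt : IsCompact L := by rw [hLeq]; exact hL'cpt.add (isCompact_closedBall 0 ε)
  have hKcl : IsClosed K := hKcpt.isClosed
  have hLcl : IsClosed L := hLcpt.isClosed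
  have hKconv : Convex ℝ K := by rw [hKeq]; exact hK'conv.add (convex_closedBall 0 ε)
  have hLconv : Convex ℝ L := by rw [hLeq]; exact hL'conv.add (convex_closedBall 0 ε)
  have hsubK : closedBall pK ε ⊆ K := by rw [hKeq]; exact ball_subset_smooth hpK
  have hsubL : closedBall pL ε ⊆ L := by rw [hLeq]; exact ball_subset_smooth hpL
  have hKne : K.Nonempty := ⟨pK, hsubK (mem_closedBall_self hε0.le)⟩
  have hLne : L.Nonempty := ⟨pL, hsubL (mem_closedBall_self hε0.le)⟩
  have hintK : pK ∈ interior K :=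
    interior_maximal (ball_subset_closedBall.trans hsubK) isOpen_ball (mem_ball_self hε0)
  have hintL : pL ∈ interior L :=
    interior_maximal (ball_subset_closedBall.trans hsubL) isOpen_ball (mem_ball_self hε0)
  have hfin : EMetric.hausdorffEdist K L ≠ ⊤ :=
    hausdorffEdist_ne_top_of_nonempty_of_bounded hKne hLne hKcpt.isBounded hLcpt.isBounded
  have hfsubL : frontier L ⊆ L := by
    intro z hz
    have hzc := frontier_subset_closure hz
    rwa [hLcl.closure_eq] at hzc
  intro x hx
  have hxK : x ∈ K := by rw [← hKcl.closure_eq]; exact hx.1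
  obtain ⟨ν, hν1, hνsupp⟩ := support_vec hKconv hintK hx
  -- For every t > δ there is a frontier point of L within t of x.
  have hcross : ∀ t : ℝ, δ < t → ∃ z ∈ frontier L, dist x z ≤ t := by
    intro t ht
    have ht0 : 0 < t := hδ0.trans ht
    set a := x + t • ν with ha
    have haK : ∀ w ∈ K, t ≤ dist a w := by
      intro w hw
      have h1 : ⟪ν, w⟫ ≤ ⟪ν, x⟫ := hνsupp w hw
      have h2 : ⟪ν, a - w⟫ ≤ ‖ν‖ * ‖a - w‖ := real_inner_le_norm ν (a - w)
      have h3 : ⟪ν, a - w⟫ = t + (⟪ν, x⟫ - ⟪ν, w⟫) := by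
        rw [ha, inner_sub_right, inner_add_right, real_inner_smul_right,
          real_inner_self_eq_norm_mul_norm, hν1]
        ring
      rw [hν1, one_mul] at h2
      rw [dist_eq_norm]
      linarith
    have haL : a ∉ L := by
      intro haL
      have hub : infDist a K ≤ δ := by
        have h := infDist_le_hausdorffDist_of_mem haL
          (by rw [EMetric.hausdorffEdist_comm]; exact hfin)
        rw [hausdorffDist_comm] at h
        exact h.trans hd
      have hlb : ¬ infDist a K < t := by
        rw [infDist_lt_iff hKne]
        rintro ⟨w, hwK, hwlt⟩
        exact absurd hwlt (not_lt.mpr (haK w hwK))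
      push_neg at hlb
      linarith
    obtain ⟨b, hbL, hbd⟩ := hLcpt.exists_infDist_eq_dist hLne x
    have hbδ : dist x b ≤ δ := by
      rw [← hbd]
      exact (infDist_le_hausdorffDist_of_mem hxK hfin).trans hd
    obtain ⟨z, hzseg, hzf⟩ := seg_cross hLcl hbL haL
    refine ⟨z, hzf, ?_⟩
    have hamem : a ∈ closedBall x t := by
      rw [mem_closedBall, ha, dist_eq_norm, add_sub_cancel_left, norm_smul, Real.norm_eq_abs,
        abs_of_pos ht0, hν1, mul_one]
    have hsub2 : segment ℝ b a ⊆ closedBall x t :=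
      (convex_closedBall x t).segment_subset (mem_closedBall'.mpr (hbδ.trans ht.le)) hamem
    have hz2 := hsub2 hzseg
    rw [mem_closedBall] at hz2
    rwa [dist_comm]
  have hinf : infDist x (frontier L) ≤ δ := by
    by_contra hlt
    push_neg at hlt
    obtain ⟨z, hzf, hzd⟩ := hcross ((δ + infDist x (frontier L)) / 2) (by linarith)
    have h3 : infDist x (frontier L) ≤ dist x z := infDist_le_dist_of_mem hzf
    linarith
  have hfne : (frontier L).Nonempty := by
    obtain ⟨z, hz, -⟩ := hcross (δ + 1) (by linarith)
    exact ⟨z, hz⟩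
  have hfcpt : IsCompact (frontier L) := hLcpt.of_isClosed_subset isClosed_frontier hfsubL
  obtain ⟨y, hyf, hyd⟩ := hfcpt.exists_infDist_eq_dist hfne x
  have hyδ : dist x y ≤ δ := by rw [← hyd]; exact hinf
  refine ⟨y, ⟨hyf, hyd.symm, hyδ⟩, ?_⟩
  rintro z ⟨hzf, hzd⟩
  have hdz : dist x z = dist x y := hzd.trans hyd
  by_contra hne
  by_cases hxint : x ∈ interior L
  · -- x in the interior of L: rolling-ball uniqueness
    set d := dist x y with hddef
    have hd0 : 0 < d := by
      rcases Metric.isOpen_iff.mp isOpen_interior x hxint with ⟨r, hr0, hrsub⟩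
      have hyb : ¬ dist y x < r := fun h => hyf.2 (hrsub (mem_ball.mpr h))
      have h2 : r ≤ dist x y := by rw [dist_comm]; exact not_lt.mp hyb
      linarith
    have hdδ : d ≤ δ := hyδ
    have hdε : d < ε := by linarith
    have hball : closedBall x d ⊆ L := by
      have hbsub : ball x d ⊆ L := by
        intro w hw
        by_contra hwL
        obtain ⟨z', hz'seg, hz'f⟩ := seg_cross hLcl (interior_subset hxint) hwL
        have hsub2 : segment ℝ x w ⊆ closedBall x (dist x w) :=
          (convex_closedBall _ _).segment_subset (mem_closedBall_self dist_nonneg)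
            (mem_closedBall'.mpr le_rfl)
        have h1 := hsub2 hz'seg
        rw [mem_closedBall] at h1
        have h2 : infDist x (frontier L) ≤ dist x z' := infDist_le_dist_of_mem hz'f
        rw [hyd] at h2
        rw [mem_ball] at hw
        rw [dist_comm] at h1
        have : dist x w < d := by rw [dist_comm]; exact hw
        linarith
      calc closedBall x d = closure (ball x d) := (closure_ball x hd0.ne').symm
        _ ⊆ L := closure_minimal hbsub hLcl
    have hstruct : ∀ w, w ∈ frontier L → dist x w = d →
        ∃ u : EuclideanSpace ℝ (Fin n), ‖u‖ = 1 ∧ w = x + d • u ∧ x - (ε - d) • u ∈ L' := by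
      intro w hwf hwd
      obtain ⟨v, hv1, hvs⟩ := support_vec hLconv hintL hwf
      have h1 : x + d • v ∈ L := by
        apply hball
        rw [mem_closedBall, dist_eq_norm, add_sub_cancel_left, norm_smul, Real.norm_eq_abs,
          abs_of_pos hd0, hv1, mul_one]
      have h2 := hvs _ h1
      rw [inner_add_right, real_inner_smul_right, real_inner_self_eq_norm_mul_norm, hv1] at h2
      have hwx : ‖w - x‖ = d := by rw [← norm_sub_rev, ← dist_eq_norm]; exact hwd
      have heq : ⟪v, w - x⟫ = ‖v‖ * ‖w - x‖ := by
        refine le_antisymm (real_inner_le_norm _ _) ?_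
        rw [hv1, one_mul, hwx, inner_sub_right]
        linarith
      have hdir := inner_eq_norm_mul_iff_real.mp heq
      rw [hwx, hv1, one_smul] at hdir
      -- hdir : d • v = w - x  (as ‖w-x‖ • v = ‖v‖ • (w-x))
      have hw' : w = x + d • v := by rw [hdir]; abel
      have hwL : w ∈ L := hfsubL hwf
      rw [hLeq] at hwL
      obtain ⟨p, hpL', e, he, hpe⟩ := Set.mem_add.mp hwL
      have heε : ‖e‖ ≤ ε := mem_closedBall_zero_iff.mp he
      have hb2 : p + ε • v ∈ L := by
        rw [hLeq]
        apply ball_subset_smooth hpL'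
        rw [mem_closedBall, dist_eq_norm, add_sub_cancel_left, norm_smul, Real.norm_eq_abs,
          abs_of_pos hε0, hv1, mul_one]
      have h3 := hvs _ hb2
      rw [inner_add_right, real_inner_smul_right, real_inner_self_eq_norm_mul_norm, hv1] at h3
      have h4 : ⟪v, w⟫ = ⟪v, p⟫ + ⟪v, e⟫ := by rw [← hpe, inner_add_right]
      have hcs2 : ⟪v, e⟫ ≤ ‖e‖ := by
        have := real_inner_le_norm v e
        rwa [hv1, one_mul] at this
      have heε2 : ‖e‖ = ε := le_antisymm heε (by linarith)
      have heq2 : ⟪v, e⟫ = ‖v‖ * ‖e‖ := by rw [hv1, one_mul, heε2]; linarith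
      have h5 := inner_eq_norm_mul_iff_real.mp heq2
      rw [heε2, hv1, one_smul] at h5
      -- h5 : ε • v = e
      have hp' : x - (ε - d) • v = p := by
        have hpw : p = w - e := by rw [← hpe]; abel
        rw [hpw, hw', ← h5, sub_smul]
        abel
      exact ⟨v, hv1, hw', by rw [hp']; exact hpL'⟩
    obtain ⟨u₁, hu₁, hy1, hp1⟩ := hstruct y hyf rfl
    obtain ⟨u₂, hu₂, hy2, hp2⟩ := hstruct z hzf hdz
    have hune : u₁ ≠ u₂ := fun h => hne (by rw [hy2, hy1, h])
    set m := (1/2 : ℝ) • (x - (ε - d) • u₁) + (1/2 : ℝ) • (x - (ε - d) • u₂) with hmdef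
    have hm : m ∈ L' := hL'conv hp1 hp2 (by norm_num) (by norm_num) (by norm_num)
    have hmL : closedBall m ε ⊆ L := by rw [hLeq]; exact ball_subset_smooth hm
    have hfar : ε ≤ dist m y := frontier_far hmL hyf
    have hεd : 0 < ε - d := by linarith
    have hxm : dist m x = ((ε - d) / 2) * ‖u₁ + u₂‖ := by
      rw [dist_eq_norm]
      have hmx : m - x = -(((ε - d) / 2) • (u₁ + u₂)) := by
        rw [hmdef]
        module
      rw [hmx, norm_neg, norm_smul, Real.norm_eq_abs, abs_of_pos (by linarith)]
    have hlt2 : ‖u₁ + u₂‖ < 2 := norm_add_lt_two hu₁ hu₂ hune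
    have htri : dist m y ≤ dist m x + dist x y := dist_triangle m x y
    have hmul : ((ε - d) / 2) * ‖u₁ + u₂‖ < ((ε - d) / 2) * 2 :=
      mul_lt_mul_of_pos_left hlt2 (by linarith)
    rw [hxm] at htri
    have : dist x y = d := rfl
    linarith
  · by_cases hxL : x ∈ L
    · -- x on the frontier of L
      have hxf : x ∈ frontier L := by rw [hLcl.frontier_eq]; exact ⟨hxL, hxint⟩
      have h0 : infDist x (frontier L) = 0 := infDist_zero_of_mem hxf
      have hz0 : x = z := dist_eq_zero.mp (hzd.trans h0)
      have hy0 : x = y := dist_eq_zero.mp (by rw [← hyd]; exact h0)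
      exact hne (hz0.symm.trans hy0)
    · -- x outside L
      have hd0 : 0 < dist x y := dist_pos.mpr (fun h => hxL (h ▸ hfsubL hyf))
      set m := (1/2 : ℝ) • z + (1/2 : ℝ) • y with hmdef
      have hmL : m ∈ L := hLconv (hfsubL hzf) (hfsubL hyf) (by norm_num) (by norm_num) (by norm_num)
      have hlt : ‖x - m‖ < dist x y := by
        apply midpoint_closer hne
        · rw [← dist_eq_norm]; exact hdz
        · rw [← dist_eq_norm]
      obtain ⟨w, hwseg, hwf⟩ := seg_cross hLcl hmL hxL
      have hsub2 : segment ℝ m x ⊆ closedBall x (dist x m) :=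
        (convex_closedBall _ _).segment_subset (mem_closedBall'.mpr le_rfl)
          (mem_closedBall_self dist_nonneg)
      have h1 := hsub2 hwseg
      rw [mem_closedBall] at h1
      have h2 : infDist x (frontier L) ≤ dist x w := infDist_le_dist_of_mem hwf
      rw [hyd] at h2
      rw [dist_comm] at h1
      rw [dist_eq_norm, dist_eq_norm] at h1
      rw [dist_eq_norm x w] at h2
      linarith
end

section
/- Let ε ∈ (0,1), δ ∈ (0, ε/2), and let K, L ⊂ ℝⁿ be ε-smooth convex bodies with d_H(K,L) ≤ δ. Then the nearest-point projection map p : ∂K → ∂L, x ↦ p(∂L, x), is bijective. -/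
open Metric Set Pointwise

open RealInnerProductSpace

section AuxLemmas

open Metric Set Pointwise RealInnerProductSpace

variable {E : Type*} [NormedAddCommGroup E] [InnerProductSpace ℝ E]

/-- Existence of the nearest point projection onto a compact convex set, with the
variational characterization. -/
lemma aux_exists_proj [CompleteSpace E] {A : Set E} (hAne : A.Nonempty) (hAc : IsCompact A)
    (hAconv : Convex ℝ A) (z : E) :
    ∃ c ∈ A, dist z c = infDist z A ∧ ∀ a ∈ A, ⟪z - c, a - c⟫ ≤ 0 := by
  obtain ⟨c, hc, hnorm⟩ := exists_norm_eq_iInf_of_complete_convex hAne hAc.isComplete hAconv z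
  have hinf : infDist z A = ‖z - c‖ := by
    rw [infDist_eq_iInf, hnorm]
    congr 1; ext y; rw [dist_eq_norm]
  exact ⟨c, hc, by rw [dist_eq_norm, hinf],
    (norm_eq_iInf_iff_real_inner_le_zero hAconv hc).1 hnorm⟩

/-- Uniqueness of the nearest point in a convex set. -/
lemma aux_nearest_unique {A : Set E} (hAconv : Convex ℝ A) {z c c' : E}
    (hc : c ∈ A) (hc' : c' ∈ A) (hdc : dist z c = infDist z A)
    (hdc' : dist z c' = infDist z A) : c = c' := by
  have hm : (1/2 : ℝ) • c + (1/2 : ℝ) • c' ∈ A :=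
    hAconv hc hc' (by norm_num) (by norm_num) (by norm_num)
  have h1 : infDist z A ≤ dist z ((1/2 : ℝ) • c + (1/2 : ℝ) • c') := infDist_le_dist_of_mem hm
  set x := z - c with hx
  set y := z - c' with hy
  have hxy : z - ((1/2 : ℝ) • c + (1/2 : ℝ) • c') = (1/2 : ℝ) • (x + y) := by
    rw [hx, hy]; module
  have h2 : infDist z A ≤ (1/2 : ℝ) * ‖x + y‖ := by
    rw [dist_eq_norm, hxy, norm_smul] at h1
    simpa using h1
  have hnx : ‖x‖ = infDist z A := by rw [hx, ← dist_eq_norm, hdc]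
  have hny : ‖y‖ = infDist z A := by rw [hy, ← dist_eq_norm, hdc']
  have hsq : ‖x - y‖ ^ 2 ≤ 0 := by
    nlinarith [norm_add_sq_real x y, norm_sub_sq_real x y, norm_nonneg (x + y),
      norm_nonneg (x - y), dist_nonneg (x := z) (y := c), hdc]
  have hxy0 : x - y = 0 := by
    rw [← norm_eq_zero]
    nlinarith [norm_nonneg (x - y)]
  have : c' - c = 0 := by rw [← hxy0, hx, hy]; abel
  have := sub_eq_zero.1 this
  exact this.symm

/-- Points on the outward ray from a nearest point have distance to `A` equal to the
parameter, and the same foot point. -/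
lemma aux_ray {A : Set E} (hAne : A.Nonempty) {c u : E} (hc : c ∈ A) (hu : ‖u‖ = 1)
    (hchar : ∀ a ∈ A, ⟪u, a - c⟫ ≤ 0) {t : ℝ} (ht : 0 ≤ t) :
    infDist (c + t • u) A = t ∧ dist (c + t • u) c = t := by
  have hd : dist (c + t • u) c = t := by
    rw [dist_eq_norm, add_sub_cancel_left, norm_smul, hu, Real.norm_of_nonneg ht, mul_one]
  refine ⟨le_antisymm (le_trans (infDist_le_dist_of_mem hc) hd.le) ?_, hd⟩
  by_contra h
  push_neg at h
  obtain ⟨a, ha, hlt⟩ := (infDist_lt_iff hAne).1 h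
  have expand : c + t • u - a = t • u + (c - a) := by abel
  have h2 : 0 ≤ ⟪u, c - a⟫ := by
    have h := hchar a ha
    have e : c - a = -(a - c) := by abel
    rw [e, inner_neg_right]; linarith
  have hsq : t ^ 2 ≤ ‖c + t • u - a‖ ^ 2 := by
    rw [expand, norm_add_sq_real, real_inner_smul_left, norm_smul, hu,
      Real.norm_of_nonneg ht, mul_one]
    nlinarith [sq_nonneg ‖c - a‖]
  rw [dist_eq_norm] at hlt
  nlinarith [norm_nonneg (c + t • u - a)]




lemma aux_mem_iff {A : Set E} (hAne : A.Nonempty) (hAc : IsCompact A) {ε : ℝ}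
    (hε : 0 ≤ ε) {z : E} : z ∈ A + closedBall 0 ε ↔ infDist z A ≤ ε := by
  rw [hAc.add_closedBall_zero hε, mem_cthickening_iff]
  exact ENNReal.le_ofReal_iff_toReal_le (infEdist_ne_top hAne) hε

lemma aux_unit {s : ℝ} (hs : 0 < s) {z c : E} (hzc : ‖z - c‖ = s) :
    ‖s⁻¹ • (z - c)‖ = 1 := by
  rw [norm_smul, hzc, Real.norm_of_nonneg (by positivity)]
  field_simp

lemma aux_unit_char {s : ℝ} (hs : 0 < s) {A : Set E} {z c : E}
    (hchar : ∀ a ∈ A, ⟪z - c, a - c⟫ ≤ 0) :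
    ∀ a ∈ A, ⟪s⁻¹ • (z - c), a - c⟫ ≤ 0 := fun a ha => by
  rw [real_inner_smul_left]
  exact mul_nonpos_of_nonneg_of_nonpos (by positivity) (hchar a ha)

lemma aux_frontier [FiniteDimensional ℝ E] {A : Set E} (hAne : A.Nonempty)
    (hAc : IsCompact A) (hAconv : Convex ℝ A) {ε : ℝ} (hε : 0 < ε) :
    frontier (A + closedBall 0 ε) = {z | infDist z A = ε} := by
  have hmem : ∀ z : E, z ∈ A + closedBall 0 ε ↔ infDist z A ≤ ε :=
    fun z => aux_mem_iff hAne hAc hε.le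
  have hclosed : IsClosed (A + closedBall 0 ε) := by
    rw [hAc.add_closedBall_zero hε.le]; exact isClosed_cthickening
  have hthick : thickening ε A ⊆ interior (A + closedBall 0 ε) := by
    apply interior_maximal ?_ isOpen_thickening
    intro z hz
    exact (hmem z).2 ((mem_thickening_iff_infDist_lt hAne).1 hz).le
  have hint : ∀ z ∈ interior (A + closedBall 0 ε), infDist z A < ε := by
    intro z hz
    have hle : infDist z A ≤ ε := (hmem z).1 (interior_subset hz)
    rcases hle.lt_or_eq with h | h
    · exact h
    exfalso
    obtain ⟨r, hr, hball⟩ := Metric.isOpen_iff.1 isOpen_interior z hz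
    obtain ⟨c, hc, hd, hchar⟩ := aux_exists_proj hAne hAc hAconv z
    have hzc : ‖z - c‖ = ε := by rw [← dist_eq_norm, hd, h]
    set u := ε⁻¹ • (z - c) with hu
    have hun : ‖u‖ = 1 := aux_unit hε hzc
    have hchar' : ∀ a ∈ A, ⟪u, a - c⟫ ≤ 0 := aux_unit_char hε hchar
    have key := (aux_ray hAne hc hun hchar' (t := ε + r / 2) (by positivity)).1
    have hzeq : z = c + ε • u := by
      rw [hu, smul_smul, mul_inv_cancel₀ hε.ne', one_smul]; abel
    have hdist : dist (c + (ε + r / 2) • u) z = r / 2 := by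
      rw [hzeq, dist_eq_norm]
      have : c + (ε + r / 2) • u - (c + ε • u) = (r / 2) • u := by
        rw [add_smul]; abel
      rw [this, norm_smul, hun, Real.norm_of_nonneg (by positivity), mul_one]
    have hin : c + (ε + r / 2) • u ∈ interior (A + closedBall 0 ε) := by
      apply hball
      rw [mem_ball, hdist]; linarith
    have := (hmem _).1 (interior_subset hin)
    rw [key] at this
    linarith
  ext z
  simp only [mem_setOf_eq]
  rw [frontier, hclosed.closure_eq]
  constructor
  · rintro ⟨hzin, hzout⟩
    have h1 := (hmem z).1 hzin
    rcases h1.lt_or_eq with h | h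
    · exact absurd (hthick ((mem_thickening_iff_infDist_lt hAne).2 h)) hzout
    · exact h
  · intro h
    exact ⟨(hmem z).2 h.le, fun hzint => absurd (hint z hzint) (by rw [h]; exact lt_irrefl _)⟩




/-- Distance from a point to the boundary of an `ε`-smooth body. -/
lemma aux_infDist_frontier [FiniteDimensional ℝ E] {A : Set E} (hAne : A.Nonempty)
    (hAc : IsCompact A) (hAconv : Convex ℝ A) {ε : ℝ} (hε : 0 < ε) {z : E}
    (hs0 : 0 < infDist z A) (hs2 : infDist z A < 2 * ε) :
    infDist z (frontier (A + closedBall 0 ε)) = |infDist z A - ε| := by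
  set s := infDist z A with hs
  obtain ⟨c, hc, hd, hchar⟩ := aux_exists_proj hAne hAc hAconv z
  have hzc : ‖z - c‖ = s := by rw [← dist_eq_norm, hd]
  set u := s⁻¹ • (z - c) with hu
  have hun : ‖u‖ = 1 := aux_unit hs0 hzc
  have hchar' : ∀ a ∈ A, ⟪u, a - c⟫ ≤ 0 := aux_unit_char hs0 hchar
  have hzeq : z = c + s • u := by
    rw [hu, smul_smul, mul_inv_cancel₀ hs0.ne', one_smul]; abel
  set w₀ := c + ε • u with hw₀
  have hw₀A : infDist w₀ A = ε := (aux_ray hAne hc hun hchar' hε.le).1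
  have hw₀fr : w₀ ∈ frontier (A + closedBall 0 ε) := by
    rw [aux_frontier hAne hAc hAconv hε]; exact hw₀A
  have hdzw₀ : dist z w₀ = |s - ε| := by
    rw [hzeq, hw₀, dist_eq_norm]
    have : c + s • u - (c + ε • u) = (s - ε) • u := by rw [sub_smul]; abel
    rw [this, norm_smul, hun, mul_one, Real.norm_eq_abs]
  apply le_antisymm
  · rw [← hdzw₀]; exact infDist_le_dist_of_mem hw₀fr
  · by_contra h
    push_neg at h
    obtain ⟨w, hw, hlt⟩ := (infDist_lt_iff ⟨w₀, hw₀fr⟩).1 h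
    rw [aux_frontier hAne hAc hAconv hε, mem_setOf_eq] at hw
    have h1 : infDist z A ≤ infDist w A + dist z w := infDist_le_infDist_add_dist
    have h2 : infDist w A ≤ infDist z A + dist w z := infDist_le_infDist_add_dist
    rw [dist_comm w z] at h2
    rw [hw] at h1 h2
    rcases abs_cases (s - ε) with ⟨he, _⟩ | ⟨he, _⟩ <;> rw [he] at hlt <;> linarith

/-- Uniqueness of the nearest point on the boundary of an `ε`-smooth body. -/
lemma aux_frontier_nearest_unique {A : Set E} [CompleteSpace E] (hAne : A.Nonempty)
    (hAc : IsCompact A) (hAconv : Convex ℝ A) {ε : ℝ} (hε : 0 < ε) {z c w : E}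
    (hc : c ∈ A) (hczd : dist z c = infDist z A)
    (hs0 : 0 < infDist z A) (hs2 : infDist z A < 2 * ε)
    (hwA : infDist w A = ε) (hwz : dist z w = |infDist z A - ε|) :
    w = c + (ε / infDist z A) • (z - c) := by
  set s := infDist z A with hs
  rcases le_or_gt s ε with hcase | hcase
  · -- z inside: dist z w = ε - s, w z c aligned
    have hwz' : dist z w = ε - s := by rw [hwz, abs_of_nonpos (by linarith)]; ring
    have hwc_le : dist w c ≤ ε := by
      calc dist w c ≤ dist w z + dist z c := dist_triangle _ _ _
        _ = ε := by rw [dist_comm w z, hwz', hczd]; ring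
    have hwc_ge : ε ≤ dist w c := by rw [← hwA]; exact infDist_le_dist_of_mem hc
    have heq : dist w z + dist z c = dist w c := by
      rw [dist_comm w z, hwz', hczd, le_antisymm hwc_le hwc_ge]; ring
    have hbtw : Wbtw ℝ w z c := dist_add_dist_eq_iff.1 heq
    have hseg : z ∈ segment ℝ w c := (mem_segment_iff_wbtw).2 hbtw
    rw [segment_eq_image'] at hseg
    obtain ⟨θ, hθ, hzθ⟩ := hseg
    have hzθ' : w + θ • (c - w) = z := hzθ
    -- z = w + θ • (c - w); so z - c = (1 - θ) • (w - c)
    have hzc : z - c = (1 - θ) • (w - c) := by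
      rw [← hzθ']; module
    have hwcε : ‖w - c‖ = ε := by rw [← dist_eq_norm, le_antisymm hwc_le hwc_ge]
    have hnzc : ‖z - c‖ = s := by rw [← dist_eq_norm, hczd]
    have hθ1 : (1 - θ) * ε = s := by
      have := congrArg norm hzc
      rw [hnzc, norm_smul, hwcε, Real.norm_of_nonneg (by linarith [hθ.2])] at this
      linarith
    have h1θ : 1 - θ = s / ε := by field_simp at hθ1 ⊢; linarith
    rw [h1θ] at hzc
    have : (ε / s) • (z - c) = w - c := by
      rw [hzc, smul_smul]
      rw [show ε / s * (s / ε) = 1 by field_simp]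
      exact one_smul _ _
    rw [this]; abel
  · -- z outside: dist z w = s - ε
    have hwz' : dist z w = s - ε := by rw [hwz, abs_of_pos (by linarith)]
    obtain ⟨cw, hcw, hdcw, _⟩ := aux_exists_proj hAne hAc hAconv w
    rw [hwA] at hdcw
    have hzcw_le : dist z cw ≤ s := by
      calc dist z cw ≤ dist z w + dist w cw := dist_triangle _ _ _
        _ = s := by rw [hwz', hdcw]; ring
    have hzcw_ge : s ≤ dist z cw := infDist_le_dist_of_mem hcw
    have hccw : c = cw :=
      aux_nearest_unique hAconv hc hcw hczd (le_antisymm hzcw_le hzcw_ge)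
    subst hccw
    have heq : dist z w + dist w c = dist z c := by
      rw [hwz', hdcw, hczd]; ring
    have hbtw : Wbtw ℝ z w c := dist_add_dist_eq_iff.1 heq
    have hseg : w ∈ segment ℝ z c := (mem_segment_iff_wbtw).2 hbtw
    rw [segment_eq_image'] at hseg
    obtain ⟨θ, hθ, hwθ⟩ := hseg
    have hwθ' : z + θ • (c - z) = w := hwθ
    have hwc : w - c = (1 - θ) • (z - c) := by
      rw [← hwθ']; module
    have hnzc : ‖z - c‖ = s := by rw [← dist_eq_norm, hczd]
    have hθ1 : (1 - θ) * s = ε := by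
      have := congrArg norm hwc
      rw [← dist_eq_norm, hdcw, norm_smul, hnzc,
        Real.norm_of_nonneg (by linarith [hθ.2])] at this
      linarith
    have h1θ : 1 - θ = ε / s := by field_simp at hθ1 ⊢; linarith
    rw [h1θ] at hwc
    rw [← hwc]; abel




/-- Convexity inequality for the distance to a convex set. -/
lemma aux_infDist_convex {A : Set E} (hAne : A.Nonempty) (hAc : IsCompact A)
    (hAconv : Convex ℝ A) {x y : E} {lam mu : ℝ} (hl : 0 ≤ lam) (hm : 0 ≤ mu)
    (hlm : lam + mu = 1) :
    infDist (lam • x + mu • y) A ≤ lam * infDist x A + mu * infDist y A := by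
  obtain ⟨a, ha, hax⟩ := hAc.exists_infDist_eq_dist hAne x
  obtain ⟨b, hb, hby⟩ := hAc.exists_infDist_eq_dist hAne y
  have hmem : lam • a + mu • b ∈ A := hAconv ha hb hl hm hlm
  calc infDist (lam • x + mu • y) A ≤ dist (lam • x + mu • y) (lam • a + mu • b) :=
        infDist_le_dist_of_mem hmem
    _ ≤ lam * dist x a + mu * dist y b := by
        rw [dist_eq_norm, dist_eq_norm, dist_eq_norm]
        have he : lam • x + mu • y - (lam • a + mu • b) = lam • (x - a) + mu • (y - b) := by
          module
        rw [he]
        refine (norm_add_le _ _).trans ?_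
        rw [norm_smul, norm_smul, Real.norm_of_nonneg hl, Real.norm_of_nonneg hm]
    _ = lam * infDist x A + mu * infDist y A := by rw [hax, hby]

/-- If every point of `A` is within `δ` of `A'`, then `infDist · A'` exceeds
`infDist · A` by at most `δ`. -/
lemma aux_comp {A A' : Set E} (hAc : IsCompact A) (hAne : A.Nonempty) {δ : ℝ}
    (h : ∀ a ∈ A, infDist a A' ≤ δ) (z : E) : infDist z A' ≤ infDist z A + δ := by
  obtain ⟨a, ha, hd⟩ := hAc.exists_infDist_eq_dist hAne z
  calc infDist z A' ≤ infDist a A' + dist z a := infDist_le_infDist_add_dist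
    _ ≤ infDist z A + δ := by rw [← hd]; linarith [h a ha]

/-- Minkowski cancellation: if all points near `b` (within the ε-ball) are δ-close to
`K' + εB`, then `b` is δ-close to `K'`. -/
lemma aux_cancel [FiniteDimensional ℝ E] {K' : Set E} (hK'ne : K'.Nonempty)
    (hK'c : IsCompact K') (hK'conv : Convex ℝ K') {ε δ : ℝ} (hε : 0 < ε) (hδ : 0 < δ)
    {b : E} (hb : ∀ v : E, ‖v‖ ≤ ε → infDist (b + v) (K' + closedBall 0 ε) ≤ δ) :
    infDist b K' ≤ δ := by
  by_contra hcon
  push_neg at hcon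
  set d := infDist b K' with hd
  have hd0 : 0 < d := lt_trans hδ hcon
  obtain ⟨c, hc, hdc, hchar⟩ := aux_exists_proj hK'ne hK'c hK'conv b
  have hbc : ‖b - c‖ = d := by rw [← dist_eq_norm, hdc]
  set u := d⁻¹ • (b - c) with hu
  have hun : ‖u‖ = 1 := by
    rw [hu, norm_smul, hbc, Real.norm_of_nonneg (by positivity)]
    field_simp
  have hεu : ‖ε • u‖ ≤ ε := by
    rw [norm_smul, hun, Real.norm_of_nonneg hε.le, mul_one]
  have hKc : IsCompact (K' + closedBall (0 : E) ε) :=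
    hK'c.add (isCompact_closedBall 0 ε)
  have hKne : (K' + closedBall (0 : E) ε).Nonempty :=
    hK'ne.add ⟨0, mem_closedBall_self hε.le⟩
  obtain ⟨k, hk, hdk⟩ := hKc.exists_infDist_eq_dist hKne (b + ε • u)
  have hdk' : dist (b + ε • u) k ≤ δ := by rw [← hdk]; exact hb (ε • u) hεu
  obtain ⟨a, ha, v, hv, hav⟩ := mem_add.1 hk
  rw [mem_closedBall_zero_iff] at hv
  -- key inner product computation
  have hub : ⟪u, b - c⟫ = d := by
    rw [hu, real_inner_smul_left, real_inner_self_eq_norm_sq, hbc]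
    field_simp
  have huc : 0 ≤ ⟪u, c - a⟫ := by
    have h1 := hchar a ha
    have h2 : ⟪u, a - c⟫ ≤ 0 := by
      rw [hu, real_inner_smul_left]
      exact mul_nonpos_of_nonneg_of_nonpos (by positivity) h1
    have he : c - a = -(a - c) := by abel
    rw [he, inner_neg_right]; linarith
  have huu : ⟪u, u⟫ = 1 := by
    rw [real_inner_self_eq_norm_sq, hun]; norm_num
  have huv : ⟪u, v⟫ ≤ ε := le_trans (real_inner_le_norm u v) (by rw [hun, one_mul]; exact hv)
  have hdecomp : b + ε • u - k = (b - c) + (c - a) + ε • u - v := by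
    rw [← hav]; abel
  have hinner : d ≤ ⟪u, b + ε • u - k⟫ := by
    rw [hdecomp, inner_sub_right, inner_add_right, inner_add_right, real_inner_smul_right,
      hub, huu]
    linarith
  have hbound : ⟪u, b + ε • u - k⟫ ≤ δ := by
    refine le_trans (real_inner_le_norm _ _) ?_
    rw [hun, one_mul, ← dist_eq_norm]
    exact hdk'
  linarith

/-- Two distinct points on a ray through `c` cannot both lie at distance `ε` from a convex
set that contains a point δ-close to `c`, when `δ < ε`. -/
lemma aux_inj_contra {K' : Set E} (hK'ne : K'.Nonempty) (hK'c : IsCompact K')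
    (hK'conv : Convex ℝ K') {δ ε : ℝ} (hε : 0 < ε) (hδε : δ < ε) {c w : E}
    {s₁ s₂ : ℝ} (h1 : 0 < s₁) (h12 : s₁ < s₂) (hcδ : infDist c K' ≤ δ)
    (he1 : infDist (c + (s₁ / ε) • w) K' = ε) (he2 : infDist (c + (s₂ / ε) • w) K' = ε) :
    False := by
  have hs2 : 0 < s₂ := lt_trans h1 h12
  set μ := s₁ / s₂ with hμ
  have hμ0 : 0 < μ := by positivity
  have hμ1 : μ < 1 := by rw [hμ, div_lt_one hs2]; exact h12
  have heq : c + (s₁ / ε) • w = (1 - μ) • c + μ • (c + (s₂ / ε) • w) := by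
    rw [smul_add, smul_smul, hμ]
    rw [show s₁ / s₂ * (s₂ / ε) = s₁ / ε by field_simp]
    rw [sub_smul, one_smul]; abel
  have hconv := aux_infDist_convex hK'ne hK'c hK'conv (x := c) (y := c + (s₂ / ε) • w)
    (lam := 1 - μ) (mu := μ) (by linarith) hμ0.le (by ring)
  rw [← heq, he1, he2] at hconv
  nlinarith

end AuxLemmas

/-- For ε-smooth convex bodies K, L with Hausdorff distance at most δ < ε/2, the
nearest-point projection p : ∂K → ∂L onto the boundary of L is a bijection. -/
theorem nearest_point_projection_bijective
    (n : ℕ) (ε δ : ℝ) (hε : ε ∈ Set.Ioo (0:ℝ) 1) (hδ : δ ∈ Set.Ioo (0:ℝ) (ε/2))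
    (K L : Set (EuclideanSpace ℝ (Fin n)))
    (hKsmooth : ∃ K' : Set (EuclideanSpace ℝ (Fin n)), K'.Nonempty ∧ IsCompact K' ∧
      Convex ℝ K' ∧ K = K' + closedBall (0 : EuclideanSpace ℝ (Fin n)) ε)
    (hLsmooth : ∃ L' : Set (EuclideanSpace ℝ (Fin n)), L'.Nonempty ∧ IsCompact L' ∧
      Convex ℝ L' ∧ L = L' + closedBall (0 : EuclideanSpace ℝ (Fin n)) ε)
    (hd : hausdorffDist K L ≤ δ)
    (p : EuclideanSpace ℝ (Fin n) → EuclideanSpace ℝ (Fin n))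
    (hp : ∀ x ∈ frontier K, p x ∈ frontier L ∧ dist x (p x) = infDist x (frontier L)) :
    Set.BijOn p (frontier K) (frontier L) := by
  obtain ⟨hε0, hε1⟩ := hε
  obtain ⟨hδ0, hδε2⟩ := hδ
  have hδε : δ < ε := by linarith
  obtain ⟨K', hK'ne, hK'c, hK'conv, hKeq⟩ := hKsmooth
  obtain ⟨L', hL'ne, hL'c, hL'conv, hLeq⟩ := hLsmooth
  have hKc : IsCompact K := by rw [hKeq]; exact hK'c.add (isCompact_closedBall 0 ε)
  have hLc : IsCompact L := by rw [hLeq]; exact hL'c.add (isCompact_closedBall 0 ε)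
  have hKne : K.Nonempty := by rw [hKeq]; exact hK'ne.add ⟨0, mem_closedBall_self hε0.le⟩
  have hLne : L.Nonempty := by rw [hLeq]; exact hL'ne.add ⟨0, mem_closedBall_self hε0.le⟩
  have hfin : EMetric.hausdorffEdist K L ≠ ⊤ :=
    hausdorffEdist_ne_top_of_nonempty_of_bounded hKne hLne hKc.isBounded hLc.isBounded
  have hKL : ∀ y ∈ K, infDist y L ≤ δ := fun y hy =>
    le_trans (infDist_le_hausdorffDist_of_mem hy hfin) hd
  have hLK : ∀ y ∈ L, infDist y K ≤ δ := fun y hy =>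
    le_trans (infDist_le_hausdorffDist_of_mem hy (by rwa [EMetric.hausdorffEdist_comm]))
      (by rwa [hausdorffDist_comm])
  -- cancellation: boundaries of the cores are close
  have hL'K' : ∀ b ∈ L', infDist b K' ≤ δ := by
    intro b hb
    apply aux_cancel hK'ne hK'c hK'conv hε0 hδ0
    intro v hv
    rw [← hKeq]
    apply hLK
    rw [hLeq]
    exact add_mem_add hb (by rwa [mem_closedBall_zero_iff])
  have hK'L' : ∀ b ∈ K', infDist b L' ≤ δ := by
    intro b hb
    apply aux_cancel hL'ne hL'c hL'conv hε0 hδ0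
    intro v hv
    rw [← hLeq]
    apply hKL
    rw [hKeq]
    exact add_mem_add hb (by rwa [mem_closedBall_zero_iff])
  have hfrK : frontier K = {z | infDist z K' = ε} := by
    rw [hKeq]; exact aux_frontier hK'ne hK'c hK'conv hε0
  have hfrL : frontier L = {z | infDist z L' = ε} := by
    rw [hLeq]; exact aux_frontier hL'ne hL'c hL'conv hε0
  -- distance bounds on the boundary
  have hbound : ∀ x ∈ frontier K, ε - δ ≤ infDist x L' ∧ infDist x L' ≤ ε + δ := by
    intro x hx
    have hxK' : infDist x K' = ε := by rw [hfrK] at hx; exact hx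
    constructor
    · have := aux_comp hL'c hL'ne hL'K' x
      linarith [hxK' ▸ this]
    · have := aux_comp hK'c hK'ne hK'L' x
      rw [hxK'] at this; linarith
  -- the key formula for p
  have key : ∀ x ∈ frontier K, ∀ c ∈ L', dist x c = infDist x L' →
      p x = c + (ε / infDist x L') • (x - c) := by
    intro x hx c hc hdc
    obtain ⟨hb1, hb2⟩ := hbound x hx
    have hs0 : 0 < infDist x L' := by linarith
    have hs2 : infDist x L' < 2 * ε := by linarith
    have hfd : infDist x (frontier L) = |infDist x L' - ε| := by
      rw [hLeq]
      exact aux_infDist_frontier hL'ne hL'c hL'conv hε0 hs0 hs2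
    obtain ⟨hpxfr, hpxd⟩ := hp x hx
    have hwA : infDist (p x) L' = ε := by rw [hfrL] at hpxfr; exact hpxfr
    have hwz : dist x (p x) = |infDist x L' - ε| := by rw [hpxd, hfd]
    exact aux_frontier_nearest_unique hL'ne hL'c hL'conv hε0 hc hdc hs0 hs2 hwA hwz
  refine ⟨fun x hx => (hp x hx).1, ?_, ?_⟩
  · -- injectivity
    intro x₁ hx₁ x₂ hx₂ hpp
    obtain ⟨c₁, hc₁, hd₁, _⟩ := aux_exists_proj hL'ne hL'c hL'conv x₁
    obtain ⟨c₂, hc₂, hd₂, _⟩ := aux_exists_proj hL'ne hL'c hL'conv x₂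
    set s₁ := infDist x₁ L' with hs₁
    set s₂ := infDist x₂ L' with hs₂
    obtain ⟨hb11, hb12⟩ := hbound x₁ hx₁
    obtain ⟨hb21, hb22⟩ := hbound x₂ hx₂
    have hs₁0 : 0 < s₁ := by linarith
    have hs₂0 : 0 < s₂ := by linarith
    have f₁ : p x₁ = c₁ + (ε / s₁) • (x₁ - c₁) := key x₁ hx₁ c₁ hc₁ hd₁
    have f₂ : p x₂ = c₂ + (ε / s₂) • (x₂ - c₂) := key x₂ hx₂ c₂ hc₂ hd₂
    set y := p x₁ with hy
    have hyfr : y ∈ frontier L := (hp x₁ hx₁).1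
    have hyL' : infDist y L' = ε := by rw [hfrL] at hyfr; exact hyfr
    have hnx₁ : ‖x₁ - c₁‖ = s₁ := by rw [← dist_eq_norm, hd₁]
    have hnx₂ : ‖x₂ - c₂‖ = s₂ := by rw [← dist_eq_norm, hd₂]
    have hdyc₁ : dist y c₁ = ε := by
      rw [f₁, dist_eq_norm, add_sub_cancel_left, norm_smul, hnx₁,
        Real.norm_of_nonneg (by positivity)]
      field_simp
    have hdyc₂ : dist y c₂ = ε := by
      rw [hpp, f₂, dist_eq_norm, add_sub_cancel_left, norm_smul, hnx₂,
        Real.norm_of_nonneg (by positivity)]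
      field_simp
    have hcc : c₁ = c₂ :=
      aux_nearest_unique hL'conv hc₁ hc₂ (by rw [hdyc₁, hyL']) (by rw [hdyc₂, hyL'])
    subst hcc
    -- x_i = c₁ + (s_i/ε) • (y - c₁)
    have hx₁eq : x₁ = c₁ + (s₁ / ε) • (y - c₁) := by
      rw [f₁, add_sub_cancel_left, smul_smul]
      rw [show s₁ / ε * (ε / s₁) = 1 by field_simp]
      rw [one_smul]; abel
    have hx₂eq : x₂ = c₁ + (s₂ / ε) • (y - c₁) := by
      rw [hpp, f₂, add_sub_cancel_left, smul_smul]
      rw [show s₂ / ε * (ε / s₂) = 1 by field_simp]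
      rw [one_smul]; abel
    have hcδ : infDist c₁ K' ≤ δ := hL'K' c₁ hc₁
    have he₁ : infDist (c₁ + (s₁ / ε) • (y - c₁)) K' = ε := by
      rw [← hx₁eq]; rw [hfrK] at hx₁; exact hx₁
    have he₂ : infDist (c₁ + (s₂ / ε) • (y - c₁)) K' = ε := by
      rw [← hx₂eq]; rw [hfrK] at hx₂; exact hx₂
    rcases lt_trichotomy s₁ s₂ with h | h | h
    · exact absurd (aux_inj_contra hK'ne hK'c hK'conv hε0 hδε hs₁0 h hcδ he₁ he₂) id
    · rw [hx₁eq, hx₂eq, h]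
    · exact absurd (aux_inj_contra hK'ne hK'c hK'conv hε0 hδε hs₂0 h hcδ he₂ he₁) id
  · -- surjectivity
    intro y hy
    have hyL' : infDist y L' = ε := by rw [hfrL] at hy; exact hy
    obtain ⟨c, hc, hdyc, hchar⟩ := aux_exists_proj hL'ne hL'c hL'conv y
    rw [hyL'] at hdyc
    have hnyc : ‖y - c‖ = ε := by rw [← dist_eq_norm, hdyc]
    set u := ε⁻¹ • (y - c) with hu
    have hun : ‖u‖ = 1 := aux_unit hε0 hnyc
    have hchar' : ∀ a ∈ L', ⟪u, a - c⟫ ≤ 0 := aux_unit_char hε0 hchar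
    have hray : ∀ t : ℝ, 0 ≤ t → infDist (c + t • u) L' = t ∧ dist (c + t • u) c = t :=
      fun t ht => aux_ray hL'ne hc hun hchar' ht
    set g : ℝ → ℝ := fun t => infDist (c + t • u) K' with hg
    have hgc : Continuous g := by
      apply (continuous_infDist_pt K').comp
      exact continuous_const.add (continuous_id.smul continuous_const)
    have hg0 : g 0 ≤ δ := by
      have : c + (0 : ℝ) • u = c := by rw [zero_smul, add_zero]
      rw [hg]; simp only [this]
      exact hL'K' c hc
    have hg2 : ε ≤ g (2 * ε) := by
      have h1 : infDist (c + (2 * ε) • u) L' = 2 * ε := (hray (2 * ε) (by linarith)).1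
      have h2 := aux_comp hK'c hK'ne hK'L' (c + (2 * ε) • u)
      rw [h1] at h2
      rw [hg]; simp only
      linarith
    have hmono : (0 : ℝ) ≤ 2 * ε := by linarith
    have hIVT := intermediate_value_Icc hmono hgc.continuousOn
    have hmem : ε ∈ Set.Icc (g 0) (g (2 * ε)) := ⟨by linarith, hg2⟩
    obtain ⟨s, hsIcc, hgs⟩ := hIVT hmem
    set x := c + s • u with hx
    have hxfr : x ∈ frontier K := by rw [hfrK]; exact hgs
    have hs : infDist x L' = s := (hray s hsIcc.1).1
    have hdxc : dist x c = s := (hray s hsIcc.1).2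
    have hs0 : 0 < s := by
      rcases hbound x hxfr with ⟨hb1, _⟩
      rw [hs] at hb1; linarith
    have hpx : p x = c + (ε / s) • (x - c) := by
      have := key x hxfr c hc (by rw [hdxc, hs])
      rwa [hs] at this
    have hxc : x - c = s • u := by rw [hx]; abel
    have hpxy : p x = y := by
      rw [hpx, hxc, smul_smul]
      rw [show ε / s * s = ε by field_simp]
      rw [hu, smul_smul]
      rw [show ε * ε⁻¹ = 1 by field_simp]
      rw [one_smul]; abel
    exact ⟨x, hxfr, hpxy⟩
end

section
/- Let ε ∈ (0,1), δ ∈ (0, ε/2), and let K, L ⊂ ℝⁿ be ε-smooth convex bodies with d_H(K,L) ≤ δ. Then for every x ∈ ∂K, the outer unit normals satisfy u_L(p(x)) • u_K(x) ≥ 1 − 2δ/ε, where p(x) is the nearest point to x on ∂L. -/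
open Metric Set Pointwise
open scoped RealInnerProductSpace

/-- For ε-smooth convex bodies K, L with Hausdorff distance at most δ < ε/2, the outer
unit normal of L at the nearest point p(x) ∈ ∂L to x ∈ ∂K and the outer unit normal of K
at x satisfy u_L(p(x)) • u_K(x) ≥ 1 − 2δ/ε. -/
theorem normals_inner_ge
    (n : ℕ) (ε δ : ℝ) (hε : ε ∈ Set.Ioo (0:ℝ) 1) (hδ : δ ∈ Set.Ioo (0:ℝ) (ε/2))
    (K L : Set (EuclideanSpace ℝ (Fin n)))
    (hKsmooth : ∃ K' : Set (EuclideanSpace ℝ (Fin n)), K'.Nonempty ∧ IsCompact K' ∧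
      Convex ℝ K' ∧ K = K' + closedBall (0 : EuclideanSpace ℝ (Fin n)) ε)
    (hLsmooth : ∃ L' : Set (EuclideanSpace ℝ (Fin n)), L'.Nonempty ∧ IsCompact L' ∧
      Convex ℝ L' ∧ L = L' + closedBall (0 : EuclideanSpace ℝ (Fin n)) ε)
    (hd : hausdorffDist K L ≤ δ)
    (p : EuclideanSpace ℝ (Fin n) → EuclideanSpace ℝ (Fin n))
    (hp : ∀ x ∈ frontier K, p x ∈ frontier L ∧ dist x (p x) = infDist x (frontier L))
    (uK uL : EuclideanSpace ℝ (Fin n) → EuclideanSpace ℝ (Fin n))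
    (huK_unit : ∀ x ∈ frontier K, ‖uK x‖ = 1)
    (huK_normal : ∀ x ∈ frontier K, ∀ y ∈ K, ⟪y - x, uK x⟫ ≤ 0)
    (huL_unit : ∀ x ∈ frontier L, ‖uL x‖ = 1)
    (huL_normal : ∀ x ∈ frontier L, ∀ y ∈ L, ⟪y - x, uL x⟫ ≤ 0) :
    ∀ x ∈ frontier K, 1 - 2 * δ / ε ≤ ⟪uL (p x), uK x⟫ := by
  obtain ⟨hε0, hε1⟩ := hε
  obtain ⟨hδ0, hδε⟩ := hδ
  obtain ⟨K', hK'ne, hK'cpt, hK'conv, hKeq⟩ := hKsmooth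
  obtain ⟨L', hL'ne, hL'cpt, hL'conv, hLeq⟩ := hLsmooth
  have hKcpt : IsCompact K := hKeq ▸ hK'cpt.add (isCompact_closedBall _ _)
  have hLcpt : IsCompact L := hLeq ▸ hL'cpt.add (isCompact_closedBall _ _)
  have hKne : K.Nonempty := hKeq ▸ hK'ne.add ⟨0, mem_closedBall_self hε0.le⟩
  have hLne : L.Nonempty := hLeq ▸ hL'ne.add ⟨0, mem_closedBall_self hε0.le⟩
  have hEdist : EMetric.hausdorffEdist K L ≠ ⊤ :=
    hausdorffEdist_ne_top_of_nonempty_of_bounded hKne hLne hKcpt.isBounded hLcpt.isBounded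
  intro x hx
  have hxK : x ∈ K := hKcpt.isClosed.closure_subset (frontier_subset_closure hx)
  -- Step A : every point of L lies in the half space {⟪· - x, uK x⟫ ≤ δ}
  have stepA : ∀ y ∈ L, ⟪y - x, uK x⟫ ≤ δ := by
    intro y hy
    have h1 : infDist y K ≤ δ := by
      have hE2 : EMetric.hausdorffEdist L K ≠ ⊤ := by
        rwa [EMetric.hausdorffEdist, EMetric.hausdorffEdist_comm] at hEdist
      have := infDist_le_hausdorffDist_of_mem hy hE2
      rw [hausdorffDist_comm] at this; exact this.trans hd
    obtain ⟨k, hk, hkd⟩ := hKcpt.exists_infDist_eq_dist hKne y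
    have hdist : ‖y - k‖ ≤ δ := by rw [← dist_eq_norm]; rw [hkd] at h1; exact h1
    have h2 : ⟪k - x, uK x⟫ ≤ 0 := huK_normal x hx k hk
    have h3 : ⟪y - k, uK x⟫ ≤ δ := by
      calc ⟪y - k, uK x⟫ ≤ ‖y - k‖ * ‖uK x‖ := real_inner_le_norm _ _
        _ ≤ δ := by rw [huK_unit x hx]; simpa using hdist
    have : (y - x : EuclideanSpace ℝ (Fin n)) = (k - x) + (y - k) := by abel
    rw [this, inner_add_left]; linarith
  -- Step B : dist x (p x) ≤ δ
  have stepB : dist x (p x) ≤ δ := by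
    rw [(hp x hx).2]
    refine le_of_forall_pos_le_add fun η hη => ?_
    set z := x + (δ + η) • uK x with hz
    have hzL : z ∉ L := by
      intro h
      have := stepA z h
      rw [hz] at this
      simp only [add_sub_cancel_left, real_inner_smul_left] at this
      rw [real_inner_self_eq_norm_sq, huK_unit x hx] at this
      nlinarith
    have hdxz : dist x z = δ + η := by
      rw [dist_eq_norm, hz]
      simp [norm_smul, abs_of_pos (by linarith : (0:ℝ) < δ + η), huK_unit x hx]
    by_cases hxL : x ∈ L
    · obtain ⟨y, hy, hyd⟩ := exists_mem_frontier_infDist_compl_eq_dist hxL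
        (fun h => hzL (h ▸ mem_univ z))
      have : infDist x Lᶜ ≤ dist x z := infDist_le_dist_of_mem hzL
      calc infDist x (frontier L) ≤ dist x y := infDist_le_dist_of_mem hy
        _ = infDist x Lᶜ := hyd.symm
        _ ≤ δ + η := by rw [hdxz] at this; exact this
    · obtain ⟨y, hy, hyd⟩ := exists_mem_frontier_infDist_compl_eq_dist (s := Lᶜ)
        hxL (fun h => hLne.ne_empty (compl_univ_iff.mp h))
      rw [frontier_compl] at hy
      rw [compl_compl] at hyd
      have : infDist x L ≤ δ := le_trans (infDist_le_hausdorffDist_of_mem hxK hEdist) hd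
      calc infDist x (frontier L) ≤ dist x y := infDist_le_dist_of_mem hy
        _ = infDist x L := hyd.symm
        _ ≤ δ + η := by linarith
  -- Step C : decompose p x as q + ε • uL (p x) with closedBall q ε ⊆ L
  have hpL : p x ∈ L := hLcpt.isClosed.closure_subset (frontier_subset_closure (hp x hx).1)
  obtain ⟨q, hq, w, hw, hqw⟩ := by rwa [hLeq, Set.mem_add] at hpL
  have hball : ∀ b : EuclideanSpace ℝ (Fin n), ‖b‖ = 1 → q + ε • b ∈ L := by
    intro b hb
    rw [hLeq]
    exact add_mem_add hq (by simp [mem_closedBall_zero_iff, norm_smul, abs_of_pos hε0, hb])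
  have hvnorm : ‖uL (p x)‖ = 1 := huL_unit _ (hp x hx).1
  have hwv : ⟪w, uL (p x)⟫ ≥ ε := by
    have h := huL_normal (p x) (hp x hx).1 (q + ε • uL (p x)) (hball _ hvnorm)
    have heq : (q + ε • uL (p x) - p x : EuclideanSpace ℝ (Fin n)) = ε • uL (p x) - w := by
      rw [← hqw]; abel
    rw [heq, inner_sub_left, real_inner_smul_left, real_inner_self_eq_norm_sq, hvnorm] at h
    linarith
  have hwnorm : ‖w‖ ≤ ε := by rwa [mem_closedBall_zero_iff] at hw
  have hweq : w = ε • uL (p x) := by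
    have h0 : ‖w - ε • uL (p x)‖ ^ 2 ≤ 0 := by
      have hexp : ‖w - ε • uL (p x)‖ ^ 2
          = ‖w‖ ^ 2 - 2 * ε * ⟪w, uL (p x)⟫ + ε ^ 2 * ‖uL (p x)‖ ^ 2 := by
        rw [← real_inner_self_eq_norm_sq, inner_sub_sub_self, real_inner_smul_left,
          real_inner_smul_left, real_inner_smul_right, real_inner_smul_right,
          real_inner_self_eq_norm_sq, real_inner_self_eq_norm_sq,
          real_inner_comm (uL (p x)) w]
        ring
      rw [hexp, hvnorm]
      have h1 : ‖w‖ ^ 2 ≤ ε ^ 2 := by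
        apply sq_le_sq' <;> nlinarith [norm_nonneg w]
      nlinarith
    have : ‖w - ε • uL (p x)‖ = 0 := by nlinarith [norm_nonneg (w - ε • uL (p x))]
    rw [norm_eq_zero, sub_eq_zero] at this
    exact this
  -- Step E : combine
  have hunorm : ‖uK x‖ = 1 := huK_unit x hx
  have hA : ⟪q + ε • uK x - x, uK x⟫ ≤ δ := stepA _ (hball _ hunorm)
  have hqeq : q = p x - ε • uL (p x) := by
    rw [← hweq, eq_sub_iff_add_eq]; exact hqw
  have hqx : (q + ε • uK x - x : EuclideanSpace ℝ (Fin n))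
      = (p x - x) - ε • uL (p x) + ε • uK x := by
    rw [hqeq]; abel
  rw [hqx, inner_add_left, inner_sub_left, real_inner_smul_left, real_inner_smul_left,
    real_inner_self_eq_norm_sq, hunorm] at hA
  have hpx : ⟪p x - x, uK x⟫ ≥ -δ := by
    have h1 : |⟪p x - x, uK x⟫| ≤ ‖p x - x‖ * ‖uK x‖ := abs_real_inner_le_norm _ _
    have h2 : ‖p x - x‖ ≤ δ := by rw [← dist_eq_norm, dist_comm]; exact stepB
    rw [hunorm, mul_one] at h1
    have := abs_le.mp (h1.trans h2)
    linarith [this.1]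
  have hfinal : ε * ⟪uL (p x), uK x⟫ ≥ ε - 2 * δ := by nlinarith
  calc 1 - 2 * δ / ε = (ε - 2 * δ) / ε := by field_simp
    _ ≤ ⟪uL (p x), uK x⟫ := by
      rw [div_le_iff₀ hε0]; nlinarith
end

section
/- Let ε ∈ (0,1), δ ∈ (0, ε/2), and let K, L ⊂ ℝⁿ be ε-smooth convex bodies with d_H(K,L) ≤ δ. Then for every x ∈ ∂K, |u_L(p(x)) − u_K(x)| ≤ 2√(δ/ε), where p(x) is the nearest point to x on ∂L and u_K, u_L are the outer unit normal maps. -/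
open Metric Set Pointwise
open scoped RealInnerProductSpace

/-- If `x ∈ s`, `y ∉ s` for a closed set `s`, the segment from `x` to `y` meets the
frontier of `s` at a point within `dist x y` of both `x` and `y`. -/
lemma exists_frontier_on_segment {E : Type*} [NormedAddCommGroup E] [NormedSpace ℝ E]
    {s : Set E} (hs : IsClosed s) {x y : E} (hx : x ∈ s) (hy : y ∉ s) :
    ∃ w ∈ frontier s, dist x w ≤ dist x y ∧ dist y w ≤ dist x y := by
  set γ : ℝ → E := fun t => x + t • (y - x) with hγ
  have hcont : Continuous γ := by fun_prop
  set S : Set ℝ := Set.Icc (0:ℝ) 1 ∩ γ ⁻¹' s with hS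
  have hS0 : (0:ℝ) ∈ S := ⟨⟨le_refl 0, zero_le_one⟩, by simp [hγ, hx]⟩
  have hSclosed : IsClosed S := isClosed_Icc.inter (hs.preimage hcont)
  have hSbdd : BddAbove S := ⟨1, fun t ht => ht.1.2⟩
  set T := sSup S with hT
  have hTS : T ∈ S := hSclosed.csSup_mem ⟨0, hS0⟩ hSbdd
  have hT1 : T ≤ 1 := hTS.1.2
  have hT0 : 0 ≤ T := hTS.1.1
  have hTne1 : T ≠ 1 := by
    intro h
    apply hy
    have := hTS.2
    simp only [h, hγ, Set.mem_preimage, one_smul] at this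
    simpa using this
  have hfront : γ T ∈ frontier s := by
    refine ⟨subset_closure hTS.2, fun hint => ?_⟩
    have hev : ∀ᶠ t in nhds T, γ t ∈ interior s :=
      hcont.continuousAt.eventually_mem (isOpen_interior.mem_nhds hint)
    obtain ⟨η, hη0, hη⟩ := Metric.eventually_nhds_iff.1 hev
    have hT1' : T < 1 := lt_of_le_of_ne hT1 hTne1
    set t' := min 1 (T + η / 2) with ht'
    have ht'T : T < t' := lt_min hT1' (by linarith)
    have hdist : dist t' T < η := by
      rw [Real.dist_eq, abs_lt]
      have h1 : T ≤ t' := ht'T.le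
      have h2 : t' ≤ T + η / 2 := min_le_right _ _
      constructor <;> linarith
    have ht0' : (0:ℝ) ≤ t' := le_min zero_le_one (by linarith)
    have ht'S : t' ∈ S :=
      ⟨⟨ht0', min_le_left _ _⟩, Set.mem_preimage.mpr (interior_subset (hη hdist))⟩
    exact absurd (le_csSup hSbdd ht'S) (not_le.2 ht'T)
  refine ⟨γ T, hfront, ?_, ?_⟩
  · have hxd : dist x (γ T) = T * dist x y := by
      rw [dist_eq_norm, show x - γ T = T • (x - y) from by simp only [hγ]; module,
        norm_smul, Real.norm_eq_abs, abs_of_nonneg hT0, ← dist_eq_norm]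
    rw [hxd]
    nlinarith [dist_nonneg (x := x) (y := y)]
  · have hyd : dist y (γ T) = (1 - T) * dist x y := by
      rw [dist_eq_norm, show y - γ T = (1 - T) • (y - x) from by simp only [hγ]; module,
        norm_smul, Real.norm_eq_abs, abs_of_nonneg (by linarith : (0:ℝ) ≤ 1 - T),
        ← dist_eq_norm, dist_comm]
    rw [hyd]
    nlinarith [dist_nonneg (x := x) (y := y)]

set_option maxHeartbeats 1000000 in
/-- For ε-smooth convex bodies K, L with Hausdorff distance at most δ < ε/2, the outer
unit normal of L at the nearest point p(x) ∈ ∂L to x ∈ ∂K and the outer unit normal of K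
at x satisfy |u_L(p(x)) − u_K(x)| ≤ 2√(δ/ε). -/
theorem normals_dist_le
    (n : ℕ) (ε δ : ℝ) (hε : ε ∈ Set.Ioo (0:ℝ) 1) (hδ : δ ∈ Set.Ioo (0:ℝ) (ε/2))
    (K L : Set (EuclideanSpace ℝ (Fin n)))
    (hKsmooth : ∃ K' : Set (EuclideanSpace ℝ (Fin n)), K'.Nonempty ∧ IsCompact K' ∧
      Convex ℝ K' ∧ K = K' + closedBall (0 : EuclideanSpace ℝ (Fin n)) ε)
    (hLsmooth : ∃ L' : Set (EuclideanSpace ℝ (Fin n)), L'.Nonempty ∧ IsCompact L' ∧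
      Convex ℝ L' ∧ L = L' + closedBall (0 : EuclideanSpace ℝ (Fin n)) ε)
    (hd : hausdorffDist K L ≤ δ)
    (p : EuclideanSpace ℝ (Fin n) → EuclideanSpace ℝ (Fin n))
    (hp : ∀ x ∈ frontier K, p x ∈ frontier L ∧ dist x (p x) = infDist x (frontier L))
    (uK uL : EuclideanSpace ℝ (Fin n) → EuclideanSpace ℝ (Fin n))
    (huK_unit : ∀ x ∈ frontier K, ‖uK x‖ = 1)
    (huK_normal : ∀ x ∈ frontier K, ∀ y ∈ K, ⟪y - x, uK x⟫ ≤ 0)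
    (huL_unit : ∀ x ∈ frontier L, ‖uL x‖ = 1)
    (huL_normal : ∀ x ∈ frontier L, ∀ y ∈ L, ⟪y - x, uL x⟫ ≤ 0) :
    ∀ x ∈ frontier K, ‖uL (p x) - uK x‖ ≤ 2 * Real.sqrt (δ / ε) := by
  obtain ⟨K', hK'ne, hK'c, hK'conv, hKeq⟩ := hKsmooth
  obtain ⟨L', hL'ne, hL'c, hL'conv, hLeq⟩ := hLsmooth
  obtain ⟨hε0, hε1⟩ := hε
  obtain ⟨hδ0, hδε⟩ := hδ
  have hKcomp : IsCompact K := by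
    rw [hKeq]; exact hK'c.add (isCompact_closedBall _ _)
  have hLcomp : IsCompact L := by
    rw [hLeq]; exact hL'c.add (isCompact_closedBall _ _)
  have hKcl : IsClosed K := hKcomp.isClosed
  have hLcl : IsClosed L := hLcomp.isClosed
  have hKne : K.Nonempty := by
    rw [hKeq]; exact hK'ne.add ⟨0, mem_closedBall_self hε0.le⟩
  have hLne : L.Nonempty := by
    rw [hLeq]; exact hL'ne.add ⟨0, mem_closedBall_self hε0.le⟩
  have hedist : hausdorffEDist K L ≠ ⊤ :=
    hausdorffEdist_ne_top_of_nonempty_of_bounded hKne hLne hKcomp.isBounded hLcomp.isBounded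
  have hedist' : hausdorffEDist L K ≠ ⊤ := by
    rwa [EMetric.hausdorffEdist_comm]
  have hd' : hausdorffDist L K ≤ δ := by rwa [hausdorffDist_comm]
  intro x hx
  obtain ⟨hq, hqdist⟩ := hp x hx
  set u := uK x with hu_def
  set v := uL (p x) with hv_def
  set q := p x with hq_def
  have hu : ‖u‖ = 1 := huK_unit x hx
  have hv : ‖v‖ = 1 := huL_unit q hq
  have hxK : x ∈ K := hKcl.frontier_subset hx
  have hqL : q ∈ L := hLcl.frontier_subset hq
  -- `x = k' + w` with `k' ∈ K'`, `‖w‖ ≤ ε`; then `k' = x - ε • u`.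
  obtain ⟨k', hk', w, hw, hkw⟩ : ∃ k' ∈ K', ∃ w ∈ closedBall (0 : EuclideanSpace ℝ (Fin n)) ε,
      k' + w = x := by rwa [hKeq, Set.mem_add] at hxK
  have hwε : ‖w‖ ≤ ε := by rwa [mem_closedBall_zero_iff] at hw
  have hεu : ε • u ∈ closedBall (0 : EuclideanSpace ℝ (Fin n)) ε := by
    rw [mem_closedBall_zero_iff, norm_smul, Real.norm_eq_abs, abs_of_pos hε0, hu, mul_one]
  have hεv : ε • v ∈ closedBall (0 : EuclideanSpace ℝ (Fin n)) ε := by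
    rw [mem_closedBall_zero_iff, norm_smul, Real.norm_eq_abs, abs_of_pos hε0, hv, mul_one]
  have h1 : k' + ε • u ∈ K := by rw [hKeq]; exact Set.add_mem_add hk' hεu
  have h2 : ⟪k' + ε • u - x, u⟫ ≤ 0 := huK_normal x hx _ h1
  have hxk : x - k' = w := by rw [← hkw]; abel
  have h3 : ε ≤ ⟪x - k', u⟫ := by
    have h2' : ⟪k' - x, u⟫ + ε * ⟪u, u⟫ ≤ 0 := by
      rwa [show k' + ε • u - x = (k' - x) + ε • u by abel, inner_add_left,
        real_inner_smul_left] at h2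
    have huu : ⟪u, u⟫ = 1 := by
      rw [real_inner_self_eq_norm_sq, hu]; norm_num
    have hsym : ⟪k' - x, u⟫ = -⟪x - k', u⟫ := by
      rw [← inner_neg_left, neg_sub]
    rw [hsym, huu] at h2'
    linarith
  have hkey : k' = x - ε • u := by
    have hz : ‖(x - k') - ε • u‖ ^ 2 = 0 := by
      have hexp := norm_sub_sq_real (x - k') (ε • u)
      have hns : ‖x - k'‖ ^ 2 ≤ ε ^ 2 := by
        rw [hxk]
        have := norm_nonneg w
        nlinarith
      have hεunorm : ‖ε • u‖ ^ 2 = ε ^ 2 := by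
        rw [norm_smul, Real.norm_eq_abs, abs_of_pos hε0, hu, mul_one]
      have hinner : ⟪x - k', ε • u⟫ = ε * ⟪x - k', u⟫ := real_inner_smul_right _ _ _
      have hge : ε ^ 2 ≤ ⟪x - k', ε • u⟫ := by
        rw [hinner]; nlinarith
      have hnn : 0 ≤ ‖(x - k') - ε • u‖ ^ 2 := sq_nonneg _
      rw [hexp, hεunorm]
      rw [hexp, hεunorm] at hnn
      linarith
    have h0 : (x - k') - ε • u = 0 := by
      rwa [pow_eq_zero_iff (two_ne_zero), norm_eq_zero] at hz
    have h0' := sub_eq_zero.mp h0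
    rw [← h0']; abel
  -- the special point `y = x - ε•u + ε•v ∈ K`
  have hyK : x - ε • u + ε • v ∈ K := by
    rw [hKeq, ← hkey]; exact Set.add_mem_add hk' hεv
  -- every point of K has inner product with v at most δ above q
  have hCstep : ∀ y ∈ K, ⟪y - q, v⟫ ≤ δ := by
    intro y hy
    have hyL : infDist y L ≤ δ :=
      le_trans (infDist_le_hausdorffDist_of_mem hy hedist) hd
    obtain ⟨z, hz, hdz⟩ := hLcl.exists_infDist_eq_dist hLne y
    have h4 : ⟪z - q, v⟫ ≤ 0 := huL_normal q hq z hz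
    have h5 : ⟪y - z, v⟫ ≤ dist y z := by
      calc ⟪y - z, v⟫ ≤ ‖y - z‖ * ‖v‖ := real_inner_le_norm _ _
        _ = dist y z := by rw [hv, mul_one, dist_eq_norm]
    have hsplit : ⟪y - q, v⟫ = ⟪z - q, v⟫ + ⟪y - z, v⟫ := by
      rw [← inner_add_left]; congr 1; abel
    rw [hsplit]
    have : dist y z ≤ δ := hdz ▸ hyL
    linarith
  -- the distance from x to the frontier of L is at most δ
  have hxqδ : dist x q ≤ δ := by
    rw [hqdist]
    by_cases hxL : x ∈ L
    · -- if x ∈ L, points beyond the supporting hyperplane of K are outside L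
      by_contra hcon
      push_neg at hcon
      set r := infDist x (frontier L) with hr
      set r' := (δ + r) / 2 with hr'
      have hr'δ : δ < r' := by simp only [hr']; linarith
      have hr'r : r' < r := by simp only [hr']; linarith
      set y := x + r' • u with hy_def
      have hyL : y ∈ L := by
        by_contra hyL
        obtain ⟨w', hw', hxw', _⟩ := exists_frontier_on_segment hLcl hxL hyL
        have h7 : r ≤ dist x w' := infDist_le_dist_of_mem hw'
        have h8 : dist x y = r' := by
          rw [hy_def, dist_eq_norm, show x - (x + r' • u) = -(r' • u) by abel, norm_neg,
            norm_smul, Real.norm_eq_abs, abs_of_pos (by linarith : (0:ℝ) < r'), hu, mul_one]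
        rw [h8] at hxw'
        linarith
      have hyK' : infDist y K ≤ δ :=
        le_trans (infDist_le_hausdorffDist_of_mem hyL hedist') hd'
      obtain ⟨z, hz, hdz⟩ := hKcl.exists_infDist_eq_dist hKne y
      have h9 : ⟪z - x, u⟫ ≤ 0 := huK_normal x hx z hz
      have h10 : ⟪y - z, u⟫ ≤ δ := by
        calc ⟪y - z, u⟫ ≤ ‖y - z‖ * ‖u‖ := real_inner_le_norm _ _
          _ = dist y z := by rw [hu, mul_one, dist_eq_norm]
          _ ≤ δ := hdz ▸ hyK'
      have h11 : ⟪y - x, u⟫ = r' := by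
        rw [hy_def, show x + r' • u - x = r' • u by abel, real_inner_smul_left,
          real_inner_self_eq_norm_sq, hu]
        norm_num
      have h12 : ⟪y - x, u⟫ = ⟪y - z, u⟫ + ⟪z - x, u⟫ := by
        rw [← inner_add_left]; congr 1; abel
      rw [h11] at h12
      linarith
    · -- if x ∉ L, the nearest point of L gives a nearby frontier point
      have hxL' : infDist x L ≤ δ :=
        le_trans (infDist_le_hausdorffDist_of_mem hxK hedist) hd
      obtain ⟨z, hz, hdz⟩ := hLcl.exists_infDist_eq_dist hLne x
      obtain ⟨w', hw', _, hxw'⟩ := exists_frontier_on_segment hLcl hz hxL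
      calc infDist x (frontier L) ≤ dist x w' := infDist_le_dist_of_mem hw'
        _ ≤ dist z x := hxw'
        _ = dist x z := dist_comm _ _
        _ ≤ δ := hdz ▸ hxL'
  -- lower bound on ⟪x - q, v⟫
  have hlow : -δ ≤ ⟪x - q, v⟫ := by
    have h13 : ⟪q - x, v⟫ ≤ δ := by
      calc ⟪q - x, v⟫ ≤ ‖q - x‖ * ‖v‖ := real_inner_le_norm _ _
        _ = dist x q := by rw [hv, mul_one, ← dist_eq_norm, dist_comm]
        _ ≤ δ := hxqδ
    have : ⟪x - q, v⟫ = -⟪q - x, v⟫ := by rw [← inner_neg_left, neg_sub]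
    linarith [this ▸ neg_le_neg h13]
  -- combine
  have hvv : ⟪v, v⟫ = 1 := by rw [real_inner_self_eq_norm_sq, hv]; norm_num
  have hmain : 1 - 2 * δ / ε ≤ ⟪u, v⟫ := by
    have h6 := hCstep _ hyK
    have hexp : ⟪x - ε • u + ε • v - q, v⟫
        = ⟪x - q, v⟫ - ε * ⟪u, v⟫ + ε * ⟪v, v⟫ := by
      rw [show x - ε • u + ε • v - q = (x - q) + (-(ε • u)) + ε • v by abel,
        inner_add_left, inner_add_left, inner_neg_left, real_inner_smul_left,
        real_inner_smul_left]
      ring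
    rw [hexp, hvv, mul_one] at h6
    have h7 : ε - ε * ⟪u, v⟫ ≤ 2 * δ := by linarith
    have h8 : 1 - ⟪u, v⟫ ≤ 2 * δ / ε := by
      rw [le_div_iff₀ hε0]; nlinarith
    linarith
  have hsq : ‖v - u‖ ^ 2 ≤ 4 * (δ / ε) := by
    have hexp := norm_sub_sq_real v u
    have huu : ‖u‖ ^ 2 = 1 := by rw [hu]; norm_num
    have hvv' : ‖v‖ ^ 2 = 1 := by rw [hv]; norm_num
    have hsym : ⟪v, u⟫ = ⟪u, v⟫ := real_inner_comm _ _
    rw [hexp, huu, hvv', hsym]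
    have h14 : 2 * δ / ε = 2 * (δ / ε) := by ring
    nlinarith [div_pos hδ0 hε0]
  calc ‖v - u‖ = Real.sqrt (‖v - u‖ ^ 2) := (Real.sqrt_sq (norm_nonneg _)).symm
    _ ≤ Real.sqrt (4 * (δ / ε)) := Real.sqrt_le_sqrt hsq
    _ = 2 * Real.sqrt (δ / ε) := by
        rw [Real.sqrt_mul (by norm_num : (0:ℝ) ≤ 4),
          show (4:ℝ) = 2 ^ 2 by norm_num, Real.sqrt_sq (by norm_num : (0:ℝ) ≤ 2)]
end

section
/- Let ε ∈ (0,1), δ ∈ (0, ε/2), and let K, L ⊂ ℝⁿ be ε-smooth convex bodies with d_H(K,L) ≤ δ. Then the map G : Nor K → Nor L, (x,u) ↦ (p(x), u_L(p(x))), is Lipschitz with Lipschitz constant at most 2/(ε−δ). -/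
open Metric Set Pointwise
open scoped RealInnerProductSpace


private lemma seg_hits_frontier {E : Type*} [NormedAddCommGroup E] [NormedSpace ℝ E]
    {L : Set E} (hcl : IsClosed L) {a b : E} (ha : a ∈ L) (hb : b ∉ L) :
    ∃ s : ℝ, s ∈ Set.Icc (0:ℝ) 1 ∧ a + s • (b - a) ∈ frontier L := by
  set f : ℝ → E := fun t => a + t • (b - a) with hf
  have hfc : Continuous f := by continuity
  set T : Set ℝ := Set.Icc (0:ℝ) 1 ∩ f ⁻¹' L with hT
  have hTne : T.Nonempty := ⟨0, by simp [hT, hf, ha]⟩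
  have hTcl : IsClosed T := isClosed_Icc.inter (hcl.preimage hfc)
  have hTcomp : IsCompact T := isCompact_Icc.of_isClosed_subset hTcl inter_subset_left
  have hs := hTcomp.sSup_mem hTne
  set s := sSup T with hsdef
  have hsIcc : s ∈ Set.Icc (0:ℝ) 1 := hs.1
  have hsL : f s ∈ L := hs.2
  have hs1 : s < 1 := by
    rcases lt_or_eq_of_le hsIcc.2 with h | h
    · exact h
    · exfalso; apply hb; have := hsL; rw [h] at this; simpa [hf] using this
  refine ⟨s, hsIcc, ?_⟩
  rw [hcl.frontier_eq]
  refine ⟨hsL, fun hint => ?_⟩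
  have : f ⁻¹' (interior L) ∈ nhds s := (isOpen_interior.preimage hfc).mem_nhds hint
  rcases Metric.mem_nhds_iff.1 this with ⟨η, hη, hball⟩
  set t := min 1 (s + η / 2) with ht
  have hts : s < t := lt_min hs1 (by linarith)
  have htT : t ∈ T := by
    constructor
    · exact ⟨le_trans hsIcc.1 hts.le, min_le_left _ _⟩
    · have : t ∈ Metric.ball s η := by
        rw [Metric.mem_ball, Real.dist_eq, abs_lt]
        constructor
        · linarith
        · have : t ≤ s + η / 2 := min_le_right _ _
          linarith
      have h2 : f t ∈ interior L := hball this
      exact show f t ∈ L from interior_subset h2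
  have := le_csSup hTcomp.bddAbove htT
  linarith


private lemma inner_ball_mem {E : Type*} [NormedAddCommGroup E] [InnerProductSpace ℝ E]
    {L L' : Set E} {ε : ℝ} (hε : 0 < ε) (hL : L = L' + closedBall 0 ε)
    {q u : E} (hqL : q ∈ L) (hu : ‖u‖ = 1)
    (hnormal : ∀ y ∈ L, ⟪y - q, u⟫ ≤ 0) :
    ∀ w ∈ closedBall (0:E) ε, q - ε • u + w ∈ L := by
  have hq' : q ∈ L' + closedBall 0 ε := by rwa [hL] at hqL
  rcases Set.mem_add.1 hq' with ⟨a, haL, b, hb, hab⟩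
  have hbn : ‖b‖ ≤ ε := by simpa [mem_closedBall, dist_zero_right] using hb
  have hεu : (ε • u) ∈ closedBall (0:E) ε := by
    simp [mem_closedBall, dist_zero_right, norm_smul, abs_of_pos hε, hu]
  have haεu : a + ε • u ∈ L := by rw [hL]; exact Set.add_mem_add haL hεu
  have h1 : ⟪(a + ε • u) - q, u⟫ ≤ 0 := hnormal _ haεu
  have hqa : a = q - b := by rw [← hab]; abel
  have h2 : ε ≤ ⟪b, u⟫ := by
    have : (a + ε • u) - q = ε • u - b := by rw [hqa]; abel
    rw [this, inner_sub_left, real_inner_smul_left, real_inner_self_eq_norm_sq, hu] at h1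
    nlinarith
  have hbu : b = ε • u := by
    have hn : ‖b - ε • u‖ ^ 2 = 0 := by
      have expand : ‖b - ε • u‖ ^ 2 = ‖b‖ ^ 2 - 2 * (ε * ⟪b, u⟫) + ε ^ 2 * ‖u‖ ^ 2 := by
        rw [norm_sub_sq_real, real_inner_smul_right, norm_smul, Real.norm_eq_abs, abs_of_pos hε]
        ring
      have hb2 : ‖b‖ ^ 2 ≤ ε ^ 2 := by nlinarith [norm_nonneg b]
      have hle : ‖b - ε • u‖ ^ 2 ≤ 0 := by
        rw [expand, hu]
        nlinarith [mul_nonneg hε.le (sub_nonneg.2 h2)]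
      nlinarith [sq_nonneg (‖b - ε • u‖)]
    have h3 := (pow_eq_zero_iff (two_ne_zero)).1 hn
    have h4 : b - ε • u = 0 := by simpa [norm_eq_zero] using h3
    exact sub_eq_zero.1 h4
  intro w hw
  have : q - ε • u = a := by rw [hqa, hbu]
  rw [this, hL]
  exact Set.add_mem_add haL hw

private lemma normal_lipschitz {E : Type*} [NormedAddCommGroup E] [InnerProductSpace ℝ E]
    {L : Set E} {ε : ℝ} (hε : 0 < ε) (uL : E → E)
    (hu : ∀ z ∈ frontier L, ‖uL z‖ = 1)
    (hnormal : ∀ z ∈ frontier L, ∀ y ∈ L, ⟪y - z, uL z⟫ ≤ 0)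
    (hball : ∀ q ∈ frontier L, ∀ w ∈ closedBall (0:E) ε, q - ε • uL q + w ∈ L)
    {x y : E} (hx : x ∈ frontier L) (hy : y ∈ frontier L) :
    ε * ‖uL x - uL y‖ ≤ ‖x - y‖ := by
  set u := uL x
  set v := uL y
  have hεv : (ε • v) ∈ closedBall (0:E) ε := by
    simp [mem_closedBall, dist_zero_right, norm_smul, Real.norm_eq_abs, abs_of_pos hε, v, hu y hy]
  have hεu : (ε • u) ∈ closedBall (0:E) ε := by
    simp [mem_closedBall, dist_zero_right, norm_smul, Real.norm_eq_abs, abs_of_pos hε, u, hu x hx]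
  have hz1 : x - ε • u + ε • v ∈ L := hball x hx _ hεv
  have hz2 : y - ε • v + ε • u ∈ L := hball y hy _ hεu
  have h1 := hnormal y hy _ hz1
  have h2 := hnormal x hx _ hz2
  have e1 : x - ε • u + ε • v - y = (x - y) - ε • (u - v) := by
    rw [smul_sub]; abel
  have e2 : y - ε • v + ε • u - x = -(x - y) + ε • (u - v) := by
    rw [smul_sub]; abel
  rw [e1, inner_sub_left, real_inner_smul_left] at h1
  rw [e2, inner_add_left, inner_neg_left, real_inner_smul_left] at h2
  have key : ε * ‖u - v‖ ^ 2 ≤ ⟪x - y, u - v⟫ := by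
    have hsum : ε * (⟪u - v, u⟫ - ⟪u - v, v⟫) ≤ ⟪x - y, u⟫ - ⟪x - y, v⟫ := by nlinarith
    have huv : ⟪u - v, u⟫ - ⟪u - v, v⟫ = ‖u - v‖ ^ 2 := by
      rw [← inner_sub_right, real_inner_self_eq_norm_sq]
    have hxy : ⟪x - y, u⟫ - ⟪x - y, v⟫ = ⟪x - y, u - v⟫ := by
      rw [inner_sub_right]
    rw [huv, hxy] at hsum; exact hsum
  have hcs : ⟪x - y, u - v⟫ ≤ ‖x - y‖ * ‖u - v‖ := real_inner_le_norm _ _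
  rcases eq_or_lt_of_le (norm_nonneg (u - v)) with h0 | h0
  · rw [← h0]; simpa using norm_nonneg (x - y)
  · nlinarith

private lemma outer_estimate {E : Type*} [NormedAddCommGroup E] [InnerProductSpace ℝ E]
    {L : Set E} {ε : ℝ} (hε : 0 < ε) (hLcl : IsClosed L) (uL : E → E)
    (hu : ∀ z ∈ frontier L, ‖uL z‖ = 1)
    (hball : ∀ q ∈ frontier L, ∀ w ∈ closedBall (0:E) ε, q - ε • uL q + w ∈ L)
    {q q' : E} (hq : q ∈ frontier L) (hq' : q' ∈ frontier L) :
    -(‖q' - q‖ ^ 2) ≤ 2 * ε * ⟪q' - q, uL q⟫ := by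
  set u := uL q
  set c := q - ε • u with hc
  have hcb : closedBall c ε ⊆ L := by
    intro z hz
    have : z - c ∈ closedBall (0:E) ε := by
      simpa [mem_closedBall, dist_eq_norm] using hz
    have := hball q hq _ this
    simpa [hc, u] using this
  have hob : ball c ε ⊆ interior L :=
    interior_maximal (Set.Subset.trans ball_subset_closedBall hcb) isOpen_ball
  have hq'ni : q' ∉ interior L := by
    rw [hLcl.frontier_eq] at hq'
    exact hq'.2
  have hdist : ε ≤ ‖q' - c‖ := by
    by_contra h
    push_neg at h
    exact hq'ni (hob (by simpa [mem_ball, dist_eq_norm] using h))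
  have expand : ‖q' - c‖ ^ 2 = ‖q' - q‖ ^ 2 + 2 * ε * ⟪q' - q, u⟫ + ε ^ 2 := by
    have : q' - c = (q' - q) + ε • u := by rw [hc]; abel
    rw [this, norm_add_sq_real, real_inner_smul_right, norm_smul, Real.norm_eq_abs,
      abs_of_pos hε, hu q hq]
    ring
  nlinarith [hdist, sq_nonneg ‖q' - c‖]

private lemma frontier_close {E : Type*} [NormedAddCommGroup E] [InnerProductSpace ℝ E]
    {K L : Set E} {δ : ℝ} (hδ : 0 < δ)
    (hLcl : IsClosed L) (hKne : K.Nonempty)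
    (hdLK : ∀ z ∈ L, infDist z K ≤ δ)
    (hLcomp : IsCompact L) (hLne : L.Nonempty)
    {x u : E} (hdxL : infDist x L ≤ δ) (hx : x ∈ K) (hu : ‖u‖ = 1)
    (hnormal : ∀ y ∈ K, ⟪y - x, u⟫ ≤ 0) :
    infDist x (frontier L) ≤ δ := by
  by_cases hxL : x ∈ L
  · refine le_of_forall_pos_le_add fun η hη => ?_
    set s := δ + η with hs
    have hspos : 0 < s := by linarith
    set w := x + s • u with hw
    have hwnL : w ∉ L := by
      intro hwL
      have hinf : infDist w K ≤ δ := hdLK w hwL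
      have hge : ∀ z ∈ K, s ≤ dist w z := by
        intro z hz
        have h1 : ⟪w - z, u⟫ ≤ ‖w - z‖ * ‖u‖ := real_inner_le_norm _ _
        have h2 : ⟪w - z, u⟫ = s * ‖u‖^2 - ⟪z - x, u⟫ := by
          have : w - z = s • u - (z - x) := by rw [hw]; abel
          rw [this, inner_sub_left, real_inner_smul_left, real_inner_self_eq_norm_sq]
        have h3 := hnormal z hz
        rw [hu] at h1 h2
        rw [dist_eq_norm]
        nlinarith
      have : s ≤ infDist w K := by
        by_contra h
        push_neg at h
        rcases (infDist_lt_iff hKne).1 h with ⟨z, hz, hlt⟩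
        linarith [hge z hz]
      linarith
    rcases seg_hits_frontier hLcl hxL hwnL with ⟨t, htI, htF⟩
    have hdw : dist x (x + t • (w - x)) ≤ s := by
      rw [dist_eq_norm]
      have : x - (x + t • (w - x)) = -(t • (w - x)) := by abel
      rw [this, norm_neg, norm_smul, Real.norm_eq_abs, abs_of_nonneg htI.1]
      have : ‖w - x‖ = s := by
        rw [hw]
        simp [norm_smul, Real.norm_eq_abs, abs_of_pos hspos, hu]
      rw [this]
      nlinarith [htI.2]
    calc infDist x (frontier L) ≤ dist x (x + t • (w - x)) := infDist_le_dist_of_mem htF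
      _ ≤ δ + η := hdw
  · rcases hLcomp.exists_infDist_eq_dist hLne x with ⟨z, hz, hzd⟩
    rcases seg_hits_frontier hLcl hz hxL with ⟨t, htI, htF⟩
    have : dist x (z + t • (x - z)) ≤ dist x z := by
      rw [dist_eq_norm, dist_eq_norm]
      have : x - (z + t • (x - z)) = (1 - t) • (x - z) := by
        rw [sub_smul, one_smul]; abel
      rw [this, norm_smul, Real.norm_eq_abs, abs_of_nonneg (by linarith [htI.2])]
      nlinarith [norm_nonneg (x - z), htI.1, htI.2]
    calc infDist x (frontier L) ≤ dist x (z + t • (x - z)) := infDist_le_dist_of_mem htF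
      _ ≤ dist x z := this
      _ ≤ δ := by rw [← hzd]; exact hdxL

private lemma proj_mono {E : Type*} [NormedAddCommGroup E] [InnerProductSpace ℝ E]
    {L : Set E} {ε δ : ℝ} (hε : 0 < ε) (hδ : 0 < δ)
    (hLcl : IsClosed L) (hLconv : Convex ℝ L) (hLcomp : IsCompact L) (hLne : L.Nonempty)
    (uL : E → E)
    (hu : ∀ z ∈ frontier L, ‖uL z‖ = 1)
    (hnormal : ∀ z ∈ frontier L, ∀ y ∈ L, ⟪y - z, uL z⟫ ≤ 0)
    (hball : ∀ q ∈ frontier L, ∀ w ∈ closedBall (0:E) ε, q - ε • uL q + w ∈ L)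
    {x qx qy : E} (hqx : qx ∈ frontier L) (hqy : qy ∈ frontier L)
    (hproj : dist x qx = infDist x (frontier L))
    (hle : infDist x (frontier L) ≤ δ) :
    2 * ε * ⟪x - qx, qy - qx⟫ ≤ δ * ‖qy - qx‖ ^ 2 := by
  have hqxL : qx ∈ L := hLcl.frontier_subset hqx
  have hqyL : qy ∈ L := hLcl.frontier_subset hqy
  by_cases hxL : x ∈ L
  · -- inner case
    set t := dist x qx with ht
    have htnn : 0 ≤ t := dist_nonneg
    have htδ : t ≤ δ := le_trans (le_of_eq hproj) hle
    rcases eq_or_lt_of_le htnn with h0 | h0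
    · have hxqx : x = qx := dist_eq_zero.1 h0.symm
      rw [hxqx]
      simp only [sub_self, inner_zero_left]
      nlinarith [mul_nonneg hδ.le (sq_nonneg ‖qy - qx‖)]
    · -- t > 0 : closed ball x t ⊆ L
      have hcb : closedBall x t ⊆ L := by
        intro z hz
        by_contra hzL
        rcases seg_hits_frontier hLcl hxL hzL with ⟨s, hsI, hsF⟩
        have h1 : t ≤ dist x (x + s • (z - x)) := by
          rw [hproj]; exact infDist_le_dist_of_mem hsF
        have h2 : dist x (x + s • (z - x)) = s * ‖z - x‖ := by
          rw [dist_eq_norm]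
          have : x - (x + s • (z - x)) = -(s • (z - x)) := by abel
          rw [this, norm_neg, norm_smul, Real.norm_eq_abs, abs_of_nonneg hsI.1]
        have h3 : ‖z - x‖ ≤ t := by
          rw [← dist_eq_norm]; exact mem_closedBall.1 hz
        have hs1 : 1 ≤ s := by nlinarith [hsI.1, hsI.2]
        have hseq : s = 1 := le_antisymm hsI.2 hs1
        have : x + s • (z - x) = z := by rw [hseq, one_smul]; abel
        rw [this] at hsF
        exact hzL (hLcl.frontier_subset hsF)
      set u := uL qx with hudef
      have huu : ‖u‖ = 1 := hu qx hqx
      have hmem : x + t • u ∈ closedBall x t := by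
        simp [mem_closedBall, dist_eq_norm, norm_smul, Real.norm_eq_abs,
          abs_of_pos h0, huu]
      have hxu : ⟪x - qx, u⟫ ≤ -t := by
        have h1 := hnormal qx hqx _ (hcb hmem)
        have : x + t • u - qx = (x - qx) + t • u := by abel
        rw [this, inner_add_left, real_inner_smul_left, real_inner_self_eq_norm_sq, huu] at h1
        nlinarith
      have hdir : x - qx = -(t • u) := by
        have hxqx : ‖x - qx‖ = t := by rw [← dist_eq_norm]
        have hexp : ‖(x - qx) + t • u‖ ^ 2 =
            ‖x - qx‖ ^ 2 + 2 * (t * ⟪x - qx, u⟫) + t ^ 2 * ‖u‖ ^ 2 := by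
          rw [norm_add_sq_real, real_inner_smul_right, norm_smul, Real.norm_eq_abs,
            abs_of_pos h0]
          ring
        have hle0 : ‖(x - qx) + t • u‖ ^ 2 ≤ 0 := by
          rw [hexp, hxqx, huu]; nlinarith
        have : ‖(x - qx) + t • u‖ = 0 := by
          nlinarith [norm_nonneg ((x - qx) + t • u)]
        have := norm_eq_zero.1 this
        have : x - qx + t • u = 0 := this
        linear_combination (norm := module) this
      have houter := outer_estimate hε hLcl uL hu hball hqx hqy
      have hinner : ⟪x - qx, qy - qx⟫ = -(t * ⟪qy - qx, u⟫) := by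
        rw [hdir, inner_neg_left, real_inner_smul_left, real_inner_comm]
      rw [hinner]
      nlinarith [houter, htδ, h0, sq_nonneg ‖qy - qx‖]
  · -- outer case: x ∉ L
    have hmin : ∀ z ∈ L, dist x qx ≤ dist x z := by
      rcases hLcomp.exists_infDist_eq_dist hLne x with ⟨z0, hz0, hz0d⟩
      rcases seg_hits_frontier hLcl hz0 hxL with ⟨s, hsI, hsF⟩
      have h1 : dist x (z0 + s • (x - z0)) ≤ dist x z0 := by
        rw [dist_eq_norm, dist_eq_norm]
        have : x - (z0 + s • (x - z0)) = (1 - s) • (x - z0) := by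
          rw [sub_smul, one_smul]; abel
        rw [this, norm_smul, Real.norm_eq_abs, abs_of_nonneg (by linarith [hsI.2])]
        nlinarith [norm_nonneg (x - z0), hsI.1, hsI.2]
      have h2 : infDist x (frontier L) ≤ infDist x L := by
        calc infDist x (frontier L) ≤ dist x (z0 + s • (x - z0)) := infDist_le_dist_of_mem hsF
          _ ≤ dist x z0 := h1
          _ = infDist x L := hz0d.symm
      intro z hz
      calc dist x qx = infDist x (frontier L) := hproj
        _ ≤ infDist x L := h2
        _ ≤ dist x z := infDist_le_dist_of_mem hz
    have hobtuse : ⟪x - qx, qy - qx⟫ ≤ 0 := by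
      by_contra hpos
      push_neg at hpos
      set B := ‖qy - qx‖ ^ 2 with hB
      have hstep : ∀ θ : ℝ, 0 ≤ θ → θ ≤ 1 → 2 * θ * ⟪x - qx, qy - qx⟫ ≤ θ ^ 2 * B := by
        intro θ h0 h1
        have hm : qx + θ • (qy - qx) ∈ L := by
          have := hLconv hqxL hqyL (by linarith : (0:ℝ) ≤ 1 - θ) h0 (by ring)
          convert this using 1
          rw [smul_sub]
          module
        have hd := hmin _ hm
        rw [dist_eq_norm, dist_eq_norm] at hd
        have hexp : ‖x - (qx + θ • (qy - qx))‖ ^ 2 =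
            ‖x - qx‖ ^ 2 - 2 * (θ * ⟪x - qx, qy - qx⟫) + θ ^ 2 * B := by
          have : x - (qx + θ • (qy - qx)) = (x - qx) - θ • (qy - qx) := by abel
          rw [this, norm_sub_sq_real, real_inner_smul_right, norm_smul, Real.norm_eq_abs,
            abs_of_nonneg h0, hB]
          ring
        nlinarith [norm_nonneg (x - (qx + θ • (qy - qx))), norm_nonneg (x - qx),
          sq_nonneg (‖x - (qx + θ • (qy - qx))‖ - ‖x - qx‖)]
      have hBnn : 0 ≤ B := sq_nonneg _
      rcases eq_or_lt_of_le hBnn with hB0 | hB0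
      · have := hstep 1 zero_le_one le_rfl
        rw [← hB0] at this
        nlinarith
      · set θ0 := min 1 (⟪x - qx, qy - qx⟫ / B) with hθ0
        have hθ0pos : 0 < θ0 := lt_min one_pos (div_pos hpos hB0)
        have hθ01 : θ0 ≤ 1 := min_le_left _ _
        have hθ0B : θ0 * B ≤ ⟪x - qx, qy - qx⟫ := by
          have : θ0 ≤ ⟪x - qx, qy - qx⟫ / B := min_le_right _ _
          calc θ0 * B ≤ (⟪x - qx, qy - qx⟫ / B) * B := by nlinarith
            _ = ⟪x - qx, qy - qx⟫ := by field_simp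
        have := hstep θ0 hθ0pos.le hθ01
        nlinarith
    nlinarith [sq_nonneg ‖qy - qx‖]

set_option maxHeartbeats 1000000 in
/-- For ε-smooth convex bodies K, L with Hausdorff distance at most δ < ε/2, the map
G : Nor K → Nor L, (x, u_K(x)) ↦ (p(x), u_L(p(x))), between the normal bundles (subsets
of ℝ^{2n} with the Euclidean norm) is Lipschitz with constant at most 2/(ε − δ). -/
theorem normal_bundle_map_lipschitz
    (n : ℕ) (ε δ : ℝ) (hε : ε ∈ Set.Ioo (0:ℝ) 1) (hδ : δ ∈ Set.Ioo (0:ℝ) (ε/2))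
    (K L : Set (EuclideanSpace ℝ (Fin n)))
    (hKsmooth : ∃ K' : Set (EuclideanSpace ℝ (Fin n)), K'.Nonempty ∧ IsCompact K' ∧
      Convex ℝ K' ∧ K = K' + closedBall (0 : EuclideanSpace ℝ (Fin n)) ε)
    (hLsmooth : ∃ L' : Set (EuclideanSpace ℝ (Fin n)), L'.Nonempty ∧ IsCompact L' ∧
      Convex ℝ L' ∧ L = L' + closedBall (0 : EuclideanSpace ℝ (Fin n)) ε)
    (hd : hausdorffDist K L ≤ δ)
    (p : EuclideanSpace ℝ (Fin n) → EuclideanSpace ℝ (Fin n))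
    (hp : ∀ x ∈ frontier K, p x ∈ frontier L ∧ dist x (p x) = infDist x (frontier L))
    (uK uL : EuclideanSpace ℝ (Fin n) → EuclideanSpace ℝ (Fin n))
    (huK_unit : ∀ x ∈ frontier K, ‖uK x‖ = 1)
    (huK_normal : ∀ x ∈ frontier K, ∀ y ∈ K, ⟪y - x, uK x⟫ ≤ 0)
    (huL_unit : ∀ x ∈ frontier L, ‖uL x‖ = 1)
    (huL_normal : ∀ x ∈ frontier L, ∀ y ∈ L, ⟪y - x, uL x⟫ ≤ 0) :
    ∀ x ∈ frontier K, ∀ y ∈ frontier K,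
      Real.sqrt (‖p x - p y‖ ^ 2 + ‖uL (p x) - uL (p y)‖ ^ 2)
        ≤ (2 / (ε - δ)) * Real.sqrt (‖x - y‖ ^ 2 + ‖uK x - uK y‖ ^ 2) := by
  obtain ⟨hε0, hε1⟩ := hε
  obtain ⟨hδ0, hδhalf⟩ := hδ
  have hδε : δ < ε := by linarith
  have hc : 0 < ε - δ := by linarith
  obtain ⟨K', hK'ne, hK'comp, hK'conv, hKeq⟩ := hKsmooth
  obtain ⟨L', hL'ne, hL'comp, hL'conv, hLeq⟩ := hLsmooth
  have hKcomp : IsCompact K := hKeq ▸ hK'comp.add (isCompact_closedBall 0 ε)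
  have hLcomp : IsCompact L := hLeq ▸ hL'comp.add (isCompact_closedBall 0 ε)
  have hKcl : IsClosed K := hKcomp.isClosed
  have hLcl : IsClosed L := hLcomp.isClosed
  have hKne : K.Nonempty := hKeq ▸ hK'ne.add ⟨0, mem_closedBall_self hε0.le⟩
  have hLne : L.Nonempty := hLeq ▸ hL'ne.add ⟨0, mem_closedBall_self hε0.le⟩
  have hLconv : Convex ℝ L := hLeq ▸ hL'conv.add (convex_closedBall _ _)
  have hedist : EMetric.hausdorffEdist K L ≠ ⊤ :=
    hausdorffEdist_ne_top_of_nonempty_of_bounded hKne hLne hKcomp.isBounded hLcomp.isBounded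
  have hdKL : ∀ z ∈ K, infDist z L ≤ δ := fun z hz =>
    le_trans (infDist_le_hausdorffDist_of_mem hz hedist) hd
  have hdLK : ∀ z ∈ L, infDist z K ≤ δ := fun z hz => by
    have h1 : infDist z K ≤ hausdorffDist L K :=
      infDist_le_hausdorffDist_of_mem hz (by rw [EMetric.hausdorffEdist_comm]; exact hedist)
    calc infDist z K ≤ hausdorffDist L K := h1
      _ = hausdorffDist K L := hausdorffDist_comm
      _ ≤ δ := hd
  have hball : ∀ q ∈ frontier L, ∀ w ∈ closedBall (0 : EuclideanSpace ℝ (Fin n)) ε,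
      q - ε • uL q + w ∈ L := fun q hq w hw =>
    inner_ball_mem hε0 hLeq (hLcl.frontier_subset hq) (huL_unit q hq) (huL_normal q hq) w hw
  intro x hx y hy
  obtain ⟨hpx, hpdx⟩ := hp x hx
  obtain ⟨hpy, hpdy⟩ := hp y hy
  have hxK : x ∈ K := hKcl.frontier_subset hx
  have hyK : y ∈ K := hKcl.frontier_subset hy
  have hinfx : infDist x (frontier L) ≤ δ :=
    frontier_close hδ0 hLcl hKne hdLK hLcomp hLne (hdKL x hxK) hxK (huK_unit x hx)
      (huK_normal x hx)
  have hinfy : infDist y (frontier L) ≤ δ :=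
    frontier_close hδ0 hLcl hKne hdLK hLcomp hLne (hdKL y hyK) hyK (huK_unit y hy)
      (huK_normal y hy)
  have h1 : 2 * ε * ⟪x - p x, p y - p x⟫ ≤ δ * ‖p y - p x‖ ^ 2 :=
    proj_mono hε0 hδ0 hLcl hLconv hLcomp hLne uL huL_unit huL_normal hball hpx hpy hpdx hinfx
  have h2 : 2 * ε * ⟪y - p y, p x - p y⟫ ≤ δ * ‖p x - p y‖ ^ 2 :=
    proj_mono hε0 hδ0 hLcl hLconv hLcomp hLne uL huL_unit huL_normal hball hpy hpx hpdy hinfy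
  set A := ‖x - y‖ with hA
  set D := ‖p y - p x‖ with hD
  have hDrev : ‖p x - p y‖ = D := norm_sub_rev _ _
  rw [hDrev] at h2
  have hid : ⟪x - p x, p y - p x⟫ + ⟪y - p y, p x - p y⟫ =
      ⟪x - y, p y - p x⟫ + D ^ 2 := by
    have e1 : ⟪y - p y, p x - p y⟫ = ⟪p y - y, p y - p x⟫ := by
      rw [← inner_neg_neg]; congr 1 <;> abel
    rw [e1, ← inner_add_left]
    have e2 : x - p x + (p y - y) = (x - y) + (p y - p x) := by abel
    rw [e2, inner_add_left, real_inner_self_eq_norm_sq]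
  have hCS : |⟪x - y, p y - p x⟫| ≤ A * D := abs_real_inner_le_norm _ _
  have hkey : (ε - δ) * D ^ 2 ≤ ε * (A * D) := by
    have hsum : 2 * ε * (⟪x - y, p y - p x⟫ + D ^ 2) ≤ 2 * δ * D ^ 2 := by
      rw [← hid]; nlinarith [h1, h2]
    have habs : -(A * D) ≤ ⟪x - y, p y - p x⟫ := neg_le_of_abs_le hCS
    nlinarith
  have hDA : (ε - δ) * D ≤ ε * A := by
    have hAnn : (0:ℝ) ≤ A := norm_nonneg _
    have hDnn : (0:ℝ) ≤ D := norm_nonneg _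
    rcases eq_or_lt_of_le hDnn with h0 | h0
    · nlinarith [mul_nonneg hε0.le hAnn]
    · nlinarith
  have hUL : ε * ‖uL (p x) - uL (p y)‖ ≤ D := by
    have h := normal_lipschitz hε0 uL huL_unit huL_normal hball hpx hpy
    rw [hDrev] at h; exact h
  set U := ‖uL (p x) - uL (p y)‖ with hU
  have hDA' : (ε - δ) * D ≤ A := by
    have hAnn : 0 ≤ A := norm_nonneg _
    nlinarith
  have hUA : (ε - δ) * U ≤ A := by
    have h3 : ε * ((ε - δ) * U) ≤ ε * A := by nlinarith
    have hAnn : 0 ≤ A := norm_nonneg _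
    nlinarith
  set B := ‖uK x - uK y‖ with hB
  have hsum : ‖p x - p y‖ ^ 2 + U ^ 2 ≤ (2 / (ε - δ)) ^ 2 * (A ^ 2 + B ^ 2) := by
    rw [hDrev, div_pow, div_mul_eq_mul_div, le_div_iff₀ (by positivity)]
    have hDnn : 0 ≤ D := norm_nonneg _
    have hUnn : 0 ≤ U := norm_nonneg _
    have hBnn : 0 ≤ B := norm_nonneg _
    have e1 : ((ε - δ) * D) ^ 2 ≤ A ^ 2 :=
      pow_le_pow_left₀ (mul_nonneg hc.le hDnn) hDA' 2
    have e2 : ((ε - δ) * U) ^ 2 ≤ A ^ 2 :=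
      pow_le_pow_left₀ (mul_nonneg hc.le hUnn) hUA 2
    nlinarith [e1, e2, sq_nonneg B]
  calc Real.sqrt (‖p x - p y‖ ^ 2 + U ^ 2)
      ≤ Real.sqrt ((2 / (ε - δ)) ^ 2 * (A ^ 2 + B ^ 2)) := Real.sqrt_le_sqrt hsum
    _ = (2 / (ε - δ)) * Real.sqrt (A ^ 2 + B ^ 2) := by
        rw [Real.sqrt_mul (by positivity), Real.sqrt_sq (by positivity)]
end

section
/- Let K, L be convex bodies in ℝⁿ contained in a ball of radius R, with d_H(K,L) = δ ≤ 1, and let ρ ∈ (0,1]. Then the Lebesgue measure of the symmetric difference of the parallel shells satisfies ℋⁿ(K^ρ △ L^ρ) ≤ C(R) δ, where C(R) depends only on n and R. -/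
open Metric Set Pointwise MeasureTheory
open scoped ENNReal RealInnerProductSpace NNReal

namespace ShellSymmDiffAux

variable {n : ℕ}

local notation "E" => EuclideanSpace ℝ (Fin n)

lemma add_closedBall_eq {K : Set E} (hKc : IsCompact K) (hne : K.Nonempty)
    {t : ℝ} (ht : 0 ≤ t) :
    K + closedBall (0 : E) t = {x : E | infDist x K ≤ t} := by
  ext x
  simp only [Set.mem_add, mem_setOf_eq]
  constructor
  · rintro ⟨k, hk, v, hv, rfl⟩
    have h2 : ‖v‖ ≤ t := by simpa [dist_zero_right] using hv
    calc infDist (k + v) K ≤ dist (k + v) k := infDist_le_dist_of_mem hk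
      _ = ‖v‖ := by simp [dist_eq_norm]
      _ ≤ t := h2
  · intro hx
    obtain ⟨p, hpK, hpd⟩ := hKc.exists_infDist_eq_dist hne x
    refine ⟨p, hpK, x - p, ?_, by abel⟩
    rw [mem_closedBall, dist_eq_norm, sub_zero, ← dist_eq_norm, ← hpd]
    exact hx

lemma exists_proj {K : Set E} (hKc : IsCompact K) (hne : K.Nonempty) (hconv : Convex ℝ K) :
    ∃ p : E → E, ∀ x : E, p x ∈ K ∧ ‖x - p x‖ = infDist x K ∧
      ∀ z ∈ K, ⟪x - p x, z - p x⟫ ≤ 0 := by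
  have h : ∀ x : E, ∃ y : E, y ∈ K ∧ ‖x - y‖ = infDist x K ∧
      ∀ z ∈ K, ⟪x - y, z - y⟫ ≤ 0 := by
    intro x
    obtain ⟨y, hyK, hyd⟩ := hKc.exists_infDist_eq_dist hne x
    have hiinf : ‖x - y‖ = ⨅ w : K, ‖x - (w : E)‖ := by
      have h1 : (⨅ w : K, ‖x - (w : E)‖) = infDist x K := by
        rw [infDist_eq_iInf]
        exact iInf_congr fun w => (dist_eq_norm x (w : E)).symm
      rw [h1, hyd]; try rw [dist_eq_norm]
    exact ⟨y, hyK, by rw [← dist_eq_norm, ← hyd],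
      (norm_eq_iInf_iff_real_inner_le_zero hconv hyK).1 hiinf⟩
  choose p hp using h
  exact ⟨p, hp⟩

noncomputable def sqc (n : ℕ) : ℝ≥0 := (Fintype.card (Fin n) : ℝ≥0) ^ ((1 : ℝ≥0∞) / 2).toReal

noncomputable def θ (n : ℕ) : ℝ≥0∞ := (sqc n : ℝ≥0∞) ^ (n : ℝ)

lemma θ_ne_top : θ n ≠ ⊤ :=
  ENNReal.rpow_ne_top_of_nonneg (Nat.cast_nonneg n) ENNReal.coe_ne_top


lemma key_inner2 {E' : Type*} [NormedAddCommGroup E'] [InnerProductSpace ℝ E']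
    (A Pz : E') (s b : ℝ) (hs : 0 < s) (hb : 0 ≤ b) (hnA : ‖A‖ = s)
    (hPz : 0 ≤ ⟪Pz, A⟫) : (s + b) * s ≤ ⟪A + Pz + (b / s) • A, A⟫ := by
  rw [inner_add_left, inner_add_left, real_inner_smul_left,
    real_inner_self_eq_norm_mul_norm, hnA]
  have h : b / s * (s * s) = b * s := by field_simp
  nlinarith

lemma key_inner {E' : Type*} [NormedAddCommGroup E'] [InnerProductSpace ℝ E']
    (A B P : E') (s t b : ℝ) (hs : 0 < s) (ht : 0 < t) (hb : 0 ≤ b)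
    (hnA : ‖A‖ = s) (hnB : ‖B‖ = t) (hQ : 0 ≤ ⟪A, P⟫) (hW : ⟪B, P⟫ ≤ 0) :
    0 ≤ ⟪A - B + P, (b / s) • A - (b / t) • B⟫ := by
  have hIP : ⟪A, B⟫ ≤ s * t := by
    calc ⟪A, B⟫ ≤ ‖A‖ * ‖B‖ := real_inner_le_norm _ _
      _ = s * t := by rw [hnA, hnB]
  have e1 : ⟪A, A⟫ = s * s := by rw [real_inner_self_eq_norm_mul_norm, hnA]
  have e2 : ⟪B, B⟫ = t * t := by rw [real_inner_self_eq_norm_mul_norm, hnB]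
  have e3 : ⟪B, A⟫ = ⟪A, B⟫ := real_inner_comm _ _
  have e4 : ⟪P, A⟫ = ⟪A, P⟫ := real_inner_comm _ _
  have e5 : ⟪P, B⟫ = ⟪B, P⟫ := real_inner_comm _ _
  rw [inner_sub_right, inner_add_left, inner_add_left, inner_sub_left, inner_sub_left,
    real_inner_smul_right, real_inner_smul_right, real_inner_smul_right,
    real_inner_smul_right, real_inner_smul_right, real_inner_smul_right,
    e1, e2, e3, e4, e5]
  have hc1 : 0 ≤ b / s := by positivity
  have hc2 : 0 ≤ b / t := by positivity
  have f1 : b / s * (s * s) = b * s := by field_simp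
  have f2 : b / t * (t * t) = b * t := by field_simp
  have f3 : b / s * (s * t) = b * t := by field_simp
  have f4 : b / t * (s * t) = b * s := by field_simp
  have g1 : b / s * ⟪A, B⟫ ≤ b * t := by
    calc b / s * ⟪A, B⟫ ≤ b / s * (s * t) := mul_le_mul_of_nonneg_left hIP hc1
      _ = b * t := f3
  have g2 : b / t * ⟪A, B⟫ ≤ b * s := by
    calc b / t * ⟪A, B⟫ ≤ b / t * (s * t) := mul_le_mul_of_nonneg_left hIP hc2
      _ = b * s := f4
  have g3 : 0 ≤ b / s * ⟪A, P⟫ := mul_nonneg hc1 hQ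
  have g4 : b / t * ⟪B, P⟫ ≤ 0 := mul_nonpos_of_nonneg_of_nonpos hc2 hW
  nlinarith [f1, f2]

lemma step {K : Set E} (hKc : IsCompact K) (hne : K.Nonempty) (hconv : Convex ℝ K)
    {a δ b : ℝ} (ha : 0 ≤ a) (hb : 0 ≤ b) :
    volume {x : E | infDist x K ∈ Set.Ioc a (a + δ)} ≤
      θ n * volume {x : E | infDist x K ∈ Set.Ioc (a + b) (a + b + δ)} := by
  classical
  obtain ⟨p, hp⟩ := exists_proj hKc hne hconv
  set d : E → ℝ := fun x => infDist x K with hd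
  set F : E → E := fun x => x + (b / d x) • (x - p x) with hF
  set S : Set E := {x : E | d x ∈ Set.Ioc a (a + δ)} with hS
  set T : Set E := {x : E | d x ∈ Set.Ioc (a + b) (a + b + δ)} with hT
  have hdpos : ∀ x ∈ S, 0 < d x := fun x hx => lt_of_le_of_lt ha hx.1
  -- distance of the flowed point
  have hdF : ∀ x : E, 0 < d x → d (F x) = d x + b := by
    intro x hx
    have hpK := (hp x).1
    have hnx : ‖x - p x‖ = d x := (hp x).2.1
    have hFp : F x - p x = (1 + b / d x) • (x - p x) := by
      simp only [hF]
      rw [add_smul, one_smul]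
      abel
    have hnormFp : ‖F x - p x‖ = d x + b := by
      rw [hFp, norm_smul, Real.norm_eq_abs, abs_of_pos (by positivity : (0:ℝ) < 1 + b / d x), hnx]
      field_simp
    have hupper : d (F x) ≤ d x + b := by
      have h1 : infDist (F x) K ≤ dist (F x) (p x) := infDist_le_dist_of_mem hpK
      rw [dist_eq_norm, hnormFp] at h1
      exact h1
    have hlower : d x + b ≤ d (F x) := by
      have hne' : Nonempty K := hne.to_subtype
      show d x + b ≤ infDist (F x) K
      rw [infDist_eq_iInf]
      refine le_ciInf fun z => ?_
      have hzK := z.2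
      have h1 : (d x + b) * d x ≤ ⟪F x - (z : E), x - p x⟫ := by
        have hFz : F x - (z : E) = (x - p x) + (p x - (z : E)) + (b / d x) • (x - p x) := by
          simp only [hF]; abel
        have e2 : (0:ℝ) ≤ ⟪p x - (z : E), x - p x⟫ := by
          have h2 := (hp x).2.2 (z : E) hzK
          have h3 : ⟪p x - (z : E), x - p x⟫ = -⟪x - p x, (z : E) - p x⟫ := by
            rw [real_inner_comm, show (p x - (z : E)) = -((z : E) - p x) by abel,
              inner_neg_right]
          rw [h3]
          linarith
        rw [hFz]
        exact key_inner2 (x - p x) (p x - (z : E)) (d x) b hx hb hnx e2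
      have h2 : ⟪F x - (z : E), x - p x⟫ ≤ dist (F x) (z : E) * d x := by
        calc ⟪F x - (z : E), x - p x⟫ ≤ ‖F x - (z : E)‖ * ‖x - p x‖ := real_inner_le_norm _ _
          _ = dist (F x) (z : E) * d x := by rw [dist_eq_norm, hnx]
      nlinarith
    linarith
  -- expansion
  have hexp : ∀ x ∈ S, ∀ y ∈ S, ‖x - y‖ ≤ ‖F x - F y‖ := by
    intro x hx y hy
    have hs := hdpos x hx
    have ht' := hdpos y hy
    have hnA : ‖x - p x‖ = d x := (hp x).2.1
    have hnB : ‖y - p y‖ = d y := (hp y).2.1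
    have hFxy : F x - F y = (x - y) + ((b / d x) • (x - p x) - (b / d y) • (y - p y)) := by
      simp only [hF]; abel
    have hxy : x - y = ((x - p x) - (y - p y)) + (p x - p y) := by abel
    have hIP : ⟪x - p x, y - p y⟫ ≤ d x * d y := by
      calc ⟪x - p x, y - p y⟫ ≤ ‖x - p x‖ * ‖y - p y‖ := real_inner_le_norm _ _
        _ = d x * d y := by rw [hnA, hnB]
    have hQ : (0:ℝ) ≤ ⟪x - p x, p x - p y⟫ := by
      have h := (hp x).2.2 (p y) (hp y).1
      have h2 : ⟪x - p x, p x - p y⟫ = -⟪x - p x, p y - p x⟫ := by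
        rw [show (p x - p y) = -(p y - p x) by abel, inner_neg_right]
      rw [h2]; linarith
    have hW : ⟪y - p y, p x - p y⟫ ≤ 0 := (hp y).2.2 (p x) (hp x).1
    have hinner : (0:ℝ) ≤ ⟪x - y, (b / d x) • (x - p x) - (b / d y) • (y - p y)⟫ := by
      rw [hxy]
      exact key_inner (x - p x) (y - p y) (p x - p y) (d x) (d y) b hs ht' hb hnA hnB hQ hW
    have hsq : ‖x - y‖ ^ 2 ≤ ‖F x - F y‖ ^ 2 := by
      rw [hFxy, norm_add_sq_real]
      nlinarith [sq_nonneg ‖(b / d x) • (x - p x) - (b / d y) • (y - p y)‖]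
    nlinarith [norm_nonneg (x - y), norm_nonneg (F x - F y)]
  -- maps / injectivity
  have hmaps : MapsTo F S T := by
    intro x hx
    have h1 := hdF x (hdpos x hx)
    have hx1 : a < d x := hx.1
    have hx2 : d x ≤ a + δ := hx.2
    exact ⟨by rw [h1]; linarith, by rw [h1]; linarith⟩
  have hinj : InjOn F S := by
    intro x hx y hy hxy
    have h1 : ‖x - y‖ ≤ 0 := by simpa [hxy] using hexp x hx y hy
    have h2 : x - y = 0 := by
      have := norm_nonneg (x - y)
      exact norm_eq_zero.1 (le_antisymm h1 this)
    exact sub_eq_zero.1 h2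
  -- measure chain
  have hSm : MeasurableSet S := (continuous_infDist_pt K).measurable measurableSet_Ioc
  have hTm : MeasurableSet T := (continuous_infDist_pt K).measurable measurableSet_Ioc
  set e : EuclideanSpace ℝ (Fin n) ≃ᵐ (Fin n → ℝ) := (MeasurableEquiv.toLp 2 (Fin n → ℝ)).symm
    with he
  have hμ : (μH[(n : ℝ)] : Measure (Fin n → ℝ)) = volume := by
    simpa using MeasureTheory.hausdorffMeasure_pi_real (ι := Fin n)
  have hn0 : (0:ℝ) ≤ (n : ℝ) := Nat.cast_nonneg n
  have hLipE : LipschitzWith 1 ⇑e := by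
    rw [he]
    exact PiLp.lipschitzWith_ofLp 2 _
  have hLipEsymm : LipschitzWith (sqc n) ⇑e.symm := by
    have h1 : AntilipschitzWith (sqc n) (@WithLp.ofLp 2 (Fin n → ℝ)) :=
      PiLp.antilipschitzWith_ofLp 2 _
    have h2 : Function.RightInverse ⇑e.symm (@WithLp.ofLp 2 (Fin n → ℝ)) := by
      intro x
      rfl
    exact h1.to_rightInverse h2
  have volS_pi : volume (⇑e '' S) = volume S := by
    rw [MeasurableEquiv.image_eq_preimage_symm]
    exact ((EuclideanSpace.volume_preserving_symm_measurableEquiv_toLp (Fin n)).symm).measure_preimage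
      hSm.nullMeasurableSet
  have volT_pi : volume (⇑e '' T) = volume T := by
    rw [MeasurableEquiv.image_eq_preimage_symm]
    exact ((EuclideanSpace.volume_preserving_symm_measurableEquiv_toLp (Fin n)).symm).measure_preimage
      hTm.nullMeasurableSet
  set g : E → E := Function.invFunOn F S with hg
  have hgLip : LipschitzOnWith 1 g (F '' S) := by
    rw [lipschitzOnWith_iff_dist_le_mul]
    rintro u ⟨x, hxS, rfl⟩ v ⟨y, hyS, rfl⟩
    have hux : g (F x) ∈ S := Function.invFunOn_mem ⟨x, hxS, rfl⟩
    have hux2 : F (g (F x)) = F x := Function.invFunOn_eq ⟨x, hxS, rfl⟩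
    have huy : g (F y) ∈ S := Function.invFunOn_mem ⟨y, hyS, rfl⟩
    have huy2 : F (g (F y)) = F y := Function.invFunOn_eq ⟨y, hyS, rfl⟩
    have h := hexp (g (F x)) hux (g (F y)) huy
    rw [hux2, huy2] at h
    simpa [dist_eq_norm] using h
  calc volume S = volume (⇑e '' S) := volS_pi.symm
    _ = μH[(n : ℝ)] (⇑e '' S) := by rw [hμ]
    _ ≤ ((1 : ℝ≥0) : ℝ≥0∞) ^ (n : ℝ) * μH[(n : ℝ)] S := hLipE.hausdorffMeasure_image_le hn0 S
    _ = μH[(n : ℝ)] S := by simp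
    _ = μH[(n : ℝ)] (g '' (F '' S)) := by rw [hinj.invFunOn_image Subset.rfl]
    _ ≤ ((1 : ℝ≥0) : ℝ≥0∞) ^ (n : ℝ) * μH[(n : ℝ)] (F '' S) :=
        hgLip.hausdorffMeasure_image_le hn0
    _ = μH[(n : ℝ)] (F '' S) := by simp
    _ = μH[(n : ℝ)] (⇑e.symm '' (⇑e '' (F '' S))) := by
        rw [← Set.image_comp, MeasurableEquiv.symm_comp_self, Set.image_id]
    _ ≤ ((sqc n : ℝ≥0) : ℝ≥0∞) ^ (n : ℝ) * μH[(n : ℝ)] (⇑e '' (F '' S)) :=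
        hLipEsymm.hausdorffMeasure_image_le hn0 _
    _ = θ n * volume (⇑e '' (F '' S)) := by rw [hμ]; rfl
    _ ≤ θ n * volume (⇑e '' T) := by
        exact mul_le_mul_right (measure_mono (Set.image_mono hmaps.image_subset)) _
    _ = θ n * volume T := by rw [volT_pi]

lemma shell {K : Set E} (hKc : IsCompact K) (hne : K.Nonempty) (hconv : Convex ℝ K)
    {R₀ : ℝ} (hKR : K ⊆ closedBall (0 : E) R₀)
    {a δ : ℝ} (ha : 0 ≤ a) (ha1 : a ≤ 1) (hδ : 0 < δ) (hδ1 : δ ≤ 1) :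
    volume {x : E | infDist x K ∈ Set.Ioc a (a + δ)} ≤
      θ n * volume (closedBall (0 : E) (R₀ + 4)) * ENNReal.ofReal (2 * δ) := by
  classical
  set m := ⌊1 / δ⌋₊ with hm
  have hm1 : 1 ≤ m := by
    apply Nat.le_floor
    rw [Nat.cast_one, le_div_iff₀ hδ]
    linarith
  have hmδ : (m : ℝ) * δ ≤ 1 := by
    have h := Nat.floor_le (by positivity : (0:ℝ) ≤ 1 / δ)
    calc (m : ℝ) * δ ≤ (1 / δ) * δ := mul_le_mul_of_nonneg_right h hδ.le
      _ = 1 := by field_simp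
  set Sk : ℕ → Set E :=
    fun k => {x : E | infDist x K ∈ Set.Ioc (a + (k : ℝ) * δ) (a + (k : ℝ) * δ + δ)} with hSk
  have hSkm : ∀ k, MeasurableSet (Sk k) :=
    fun _ => (continuous_infDist_pt K).measurable measurableSet_Ioc
  have hkey : ∀ k : ℕ, volume {x : E | infDist x K ∈ Set.Ioc a (a + δ)} ≤ θ n * volume (Sk k) :=
    fun k => step hKc hne hconv ha (by positivity : (0:ℝ) ≤ (k : ℝ) * δ)
  have hdisj : (↑(Finset.range m) : Set ℕ).PairwiseDisjoint Sk := by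
    intro i _ j _ hij
    apply Set.disjoint_left.2
    intro x hxi hxj
    have h1 : a + (i : ℝ) * δ < infDist x K := hxi.1
    have h1' : infDist x K ≤ a + (i : ℝ) * δ + δ := hxi.2
    have h2 : a + (j : ℝ) * δ < infDist x K := hxj.1
    have h2' : infDist x K ≤ a + (j : ℝ) * δ + δ := hxj.2
    rcases lt_or_gt_of_ne hij with h | h
    · have hij' : (i : ℝ) + 1 ≤ (j : ℝ) := by exact_mod_cast h
      nlinarith
    · have hij' : (j : ℝ) + 1 ≤ (i : ℝ) := by exact_mod_cast h
      nlinarith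
  have hsub : (⋃ k ∈ Finset.range m, Sk k) ⊆ closedBall (0 : E) (R₀ + 4) := by
    intro x hx
    simp only [Set.mem_iUnion, Finset.mem_range] at hx
    obtain ⟨k, hk, hxk⟩ := hx
    have hkm : (k : ℝ) ≤ (m : ℝ) := by exact_mod_cast hk.le
    have hdx : infDist x K ≤ a + (k : ℝ) * δ + δ := hxk.2
    have hdx4 : infDist x K ≤ 4 := by
      have : (k : ℝ) * δ ≤ (m : ℝ) * δ := mul_le_mul_of_nonneg_right hkm hδ.le
      linarith
    obtain ⟨p, hpK, hpd⟩ := hKc.exists_infDist_eq_dist hne x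
    have htri : dist x 0 ≤ dist x p + dist p 0 := dist_triangle _ _ _
    have hp0 : dist p 0 ≤ R₀ := hKR hpK
    rw [mem_closedBall]
    rw [hpd] at hdx4
    linarith
  have hsum : (m : ℝ≥0∞) * volume {x : E | infDist x K ∈ Set.Ioc a (a + δ)} ≤
      θ n * volume (closedBall (0 : E) (R₀ + 4)) := by
    calc (m : ℝ≥0∞) * volume {x : E | infDist x K ∈ Set.Ioc a (a + δ)}
        = ∑ _k ∈ Finset.range m, volume {x : E | infDist x K ∈ Set.Ioc a (a + δ)} := by
          rw [Finset.sum_const, Finset.card_range, nsmul_eq_mul]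
      _ ≤ ∑ k ∈ Finset.range m, θ n * volume (Sk k) := Finset.sum_le_sum fun k _ => hkey k
      _ = θ n * ∑ k ∈ Finset.range m, volume (Sk k) := by rw [Finset.mul_sum]
      _ = θ n * volume (⋃ k ∈ Finset.range m, Sk k) := by
          rw [measure_biUnion_finset hdisj fun k _ => hSkm k]
      _ ≤ θ n * volume (closedBall (0 : E) (R₀ + 4)) :=
          mul_le_mul_right (measure_mono hsub) _
  have hof : (1 : ℝ≥0∞) ≤ ENNReal.ofReal (2 * δ) * (m : ℝ≥0∞) := by
    rw [← ENNReal.ofReal_natCast m, ← ENNReal.ofReal_mul (by positivity : (0:ℝ) ≤ 2 * δ),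
      ENNReal.one_le_ofReal]
    rcases le_or_gt (1/2 : ℝ) δ with h | h
    · have h1 : (1 : ℝ) ≤ (m : ℝ) := by exact_mod_cast hm1
      nlinarith
    · have h2 : 1 / δ - 1 < (m : ℝ) := Nat.sub_one_lt_floor (1 / δ)
      have h3 : 2 * δ * (1 / δ - 1) = 2 - 2 * δ := by field_simp
      nlinarith
  calc volume {x : E | infDist x K ∈ Set.Ioc a (a + δ)}
      = volume {x : E | infDist x K ∈ Set.Ioc a (a + δ)} * 1 := (mul_one _).symm
    _ ≤ volume {x : E | infDist x K ∈ Set.Ioc a (a + δ)} *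
        (ENNReal.ofReal (2 * δ) * (m : ℝ≥0∞)) := mul_le_mul_right hof _
    _ = ((m : ℝ≥0∞) * volume {x : E | infDist x K ∈ Set.Ioc a (a + δ)}) *
        ENNReal.ofReal (2 * δ) := by ring
    _ ≤ (θ n * volume (closedBall (0 : E) (R₀ + 4))) * ENNReal.ofReal (2 * δ) :=
        mul_le_mul_left hsum _
    _ = θ n * volume (closedBall (0 : E) (R₀ + 4)) * ENNReal.ofReal (2 * δ) := by ring

lemma incl {K L : Set E} (hKc : IsCompact K) (hKne : K.Nonempty)
    (hLc : IsCompact L) (hLne : L.Nonempty)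
    {ρ : ℝ} (hρ : 0 ≤ ρ) (fin : EMetric.hausdorffEdist K L ≠ ⊤) :
    ((K + closedBall (0 : E) ρ) \ K) \ ((L + closedBall (0 : E) ρ) \ L) ⊆
      {x : E | infDist x K ∈ Set.Ioc 0 (0 + hausdorffDist K L)} ∪
      {x : E | infDist x L ∈ Set.Ioc ρ (ρ + hausdorffDist K L)} := by
  intro x hx
  obtain ⟨⟨hxKρ, hxK⟩, hxn⟩ := hx
  rw [add_closedBall_eq hKc hKne hρ] at hxKρ
  have hdK : infDist x K ≤ ρ := hxKρ
  have hdKpos : 0 < infDist x K := (hKc.isClosed.notMem_iff_infDist_pos hKne).1 hxK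
  by_cases hxL : x ∈ L
  · left
    refine ⟨hdKpos, ?_⟩
    rw [zero_add]
    have h := infDist_le_hausdorffDist_of_mem hxL
      (by rw [hausdorffEDist_comm]; exact fin)
    rwa [hausdorffDist_comm] at h
  · right
    have hxLρ : x ∉ L + closedBall (0 : E) ρ := fun h => hxn ⟨h, hxL⟩
    rw [add_closedBall_eq hLc hLne hρ] at hxLρ
    have h1 : ρ < infDist x L := lt_of_not_ge hxLρ
    have h2 : infDist x L ≤ ρ + hausdorffDist K L :=
      le_trans (infDist_le_infDist_add_hausdorffDist fin) (by linarith)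
    exact ⟨h1, h2⟩

end ShellSymmDiffAux

/-- For convex bodies K, L contained in a ball of radius R with Hausdorff distance
δ ≤ 1 and ρ ∈ (0,1], the Lebesgue measure of the symmetric difference of the parallel
shells K^ρ := (K + ρBⁿ) \ K and L^ρ satisfies ℋⁿ(K^ρ △ L^ρ) ≤ C(R) δ for a constant
C(R) depending only on the dimension n and on R. -/
theorem shell_symmDiff_volume_le
    (n : ℕ) (R : ℝ) :
    ∃ C : ℝ, ∀ (K L : Set (EuclideanSpace ℝ (Fin n))) (δ ρ : ℝ),
      K.Nonempty → IsCompact K → Convex ℝ K →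
      L.Nonempty → IsCompact L → Convex ℝ L →
      K ⊆ closedBall (0 : EuclideanSpace ℝ (Fin n)) R →
      L ⊆ closedBall (0 : EuclideanSpace ℝ (Fin n)) R →
      hausdorffDist K L = δ → δ ≤ 1 → ρ ∈ Set.Ioc (0:ℝ) 1 →
      (volume
        ((((K + closedBall (0 : EuclideanSpace ℝ (Fin n)) ρ) \ K) \
            ((L + closedBall (0 : EuclideanSpace ℝ (Fin n)) ρ) \ L)) ∪
         (((L + closedBall (0 : EuclideanSpace ℝ (Fin n)) ρ) \ L) \
            ((K + closedBall (0 : EuclideanSpace ℝ (Fin n)) ρ) \ K)))).toReal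
        ≤ C * δ := by
  classical
  set Γ : ℝ≥0∞ :=
    ShellSymmDiffAux.θ n * volume (closedBall (0 : EuclideanSpace ℝ (Fin n)) (R + 4)) * 8 with hΓ
  have hΓtop : Γ ≠ ⊤ := by
    apply ENNReal.mul_ne_top
    apply ENNReal.mul_ne_top ShellSymmDiffAux.θ_ne_top
    · exact measure_closedBall_lt_top.ne
    · simp
  refine ⟨Γ.toReal, ?_⟩
  intro K L δ ρ hKne hKc hKv hLne hLc hLv hKR hLR hdist hδ1 hρ
  subst hdist
  have hδ0 : 0 ≤ hausdorffDist K L := hausdorffDist_nonneg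
  have fin : EMetric.hausdorffEdist K L ≠ ⊤ :=
    hausdorffEdist_ne_top_of_nonempty_of_bounded hKne hLne hKc.isBounded hLc.isBounded
  rcases eq_or_lt_of_le hδ0 with h0 | hδpos
  · have hKL : K = L := (hKc.isClosed.hausdorffDist_zero_iff_eq hLc.isClosed fin).1 h0.symm
    subst hKL
    rw [hausdorffDist_self_zero, mul_zero]
    simp [Set.diff_self]
  · have hρ0 : 0 < ρ := hρ.1
    have hρ1 : ρ ≤ 1 := hρ.2
    have fin' : EMetric.hausdorffEdist L K ≠ ⊤ := by
      show hausdorffEDist L K ≠ ⊤; rw [hausdorffEDist_comm]; exact fin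
    set δ := hausdorffDist K L with hδdef
    have hδL : hausdorffDist L K = δ := by rw [hausdorffDist_comm]
    have incl1 := ShellSymmDiffAux.incl hKc hKne hLc hLne hρ0.le fin
    have incl2 := ShellSymmDiffAux.incl hLc hLne hKc hKne hρ0.le fin'
    rw [hδL] at incl2
    have hb1 : volume {x : EuclideanSpace ℝ (Fin n) | infDist x K ∈ Set.Ioc 0 (0 + δ)} ≤
        ShellSymmDiffAux.θ n * volume (closedBall (0 : EuclideanSpace ℝ (Fin n)) (R + 4)) *
          ENNReal.ofReal (2 * δ) :=
      ShellSymmDiffAux.shell hKc hKne hKv hKR le_rfl zero_le_one hδpos hδ1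
    have hb2 : volume {x : EuclideanSpace ℝ (Fin n) | infDist x L ∈ Set.Ioc ρ (ρ + δ)} ≤
        ShellSymmDiffAux.θ n * volume (closedBall (0 : EuclideanSpace ℝ (Fin n)) (R + 4)) *
          ENNReal.ofReal (2 * δ) :=
      ShellSymmDiffAux.shell hLc hLne hLv hLR hρ0.le hρ1 hδpos hδ1
    have hb3 : volume {x : EuclideanSpace ℝ (Fin n) | infDist x L ∈ Set.Ioc 0 (0 + δ)} ≤
        ShellSymmDiffAux.θ n * volume (closedBall (0 : EuclideanSpace ℝ (Fin n)) (R + 4)) *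
          ENNReal.ofReal (2 * δ) :=
      ShellSymmDiffAux.shell hLc hLne hLv hLR le_rfl zero_le_one hδpos hδ1
    have hb4 : volume {x : EuclideanSpace ℝ (Fin n) | infDist x K ∈ Set.Ioc ρ (ρ + δ)} ≤
        ShellSymmDiffAux.θ n * volume (closedBall (0 : EuclideanSpace ℝ (Fin n)) (R + 4)) *
          ENNReal.ofReal (2 * δ) :=
      ShellSymmDiffAux.shell hKc hKne hKv hKR hρ0.le hρ1 hδpos hδ1
    set Θ : ℝ≥0∞ := ShellSymmDiffAux.θ n * volume (closedBall (0 : EuclideanSpace ℝ (Fin n)) (R + 4)) *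
      ENNReal.ofReal (2 * δ) with hΘ
    have hvol : volume
        ((((K + closedBall (0 : EuclideanSpace ℝ (Fin n)) ρ) \ K) \
            ((L + closedBall (0 : EuclideanSpace ℝ (Fin n)) ρ) \ L)) ∪
         (((L + closedBall (0 : EuclideanSpace ℝ (Fin n)) ρ) \ L) \
            ((K + closedBall (0 : EuclideanSpace ℝ (Fin n)) ρ) \ K))) ≤ 4 * Θ := by
      calc volume _ ≤
          volume ((((K + closedBall (0 : EuclideanSpace ℝ (Fin n)) ρ) \ K) \
            ((L + closedBall (0 : EuclideanSpace ℝ (Fin n)) ρ) \ L))) +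
          volume ((((L + closedBall (0 : EuclideanSpace ℝ (Fin n)) ρ) \ L) \
            ((K + closedBall (0 : EuclideanSpace ℝ (Fin n)) ρ) \ K))) := measure_union_le _ _
        _ ≤ (volume {x : EuclideanSpace ℝ (Fin n) | infDist x K ∈ Set.Ioc 0 (0 + δ)} +
              volume {x : EuclideanSpace ℝ (Fin n) | infDist x L ∈ Set.Ioc ρ (ρ + δ)}) +
            (volume {x : EuclideanSpace ℝ (Fin n) | infDist x L ∈ Set.Ioc 0 (0 + δ)} +
              volume {x : EuclideanSpace ℝ (Fin n) | infDist x K ∈ Set.Ioc ρ (ρ + δ)}) := by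
            apply add_le_add
            · exact le_trans (measure_mono incl1) (measure_union_le _ _)
            · exact le_trans (measure_mono incl2) (measure_union_le _ _)
        _ ≤ (Θ + Θ) + (Θ + Θ) := by
            exact add_le_add (add_le_add hb1 hb2) (add_le_add hb3 hb4)
        _ = 4 * Θ := by ring
    have h4Θ : 4 * Θ = Γ * ENNReal.ofReal δ := by
      rw [hΘ, hΓ, ENNReal.ofReal_mul (by norm_num : (0:ℝ) ≤ 2),
        show ENNReal.ofReal 2 = 2 from by norm_num]
      ring
    have hle : volume
        ((((K + closedBall (0 : EuclideanSpace ℝ (Fin n)) ρ) \ K) \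
            ((L + closedBall (0 : EuclideanSpace ℝ (Fin n)) ρ) \ L)) ∪
         (((L + closedBall (0 : EuclideanSpace ℝ (Fin n)) ρ) \ L) \
            ((K + closedBall (0 : EuclideanSpace ℝ (Fin n)) ρ) \ K))) ≤
        ENNReal.ofReal (Γ.toReal * δ) := by
      rw [ENNReal.ofReal_mul ENNReal.toReal_nonneg, ENNReal.ofReal_toReal hΓtop]
      exact le_trans hvol (le_of_eq h4Θ)
    exact ENNReal.toReal_le_of_le_ofReal (mul_nonneg ENNReal.toReal_nonneg hδ0) hle
end

section
/- Let K, L be convex bodies in ℝⁿ and ρ > 0. Then the bounded Lipschitz distance between the measures μ_{K,ρ} and μ_{L,ρ} satisfies d_{bL}(μ_{K,ρ}, μ_{L,ρ}) ≤ ∫_{K^ρ ∩ L^ρ} |p_K − p_L| dℋⁿ + ∫_{K^ρ ∩ L^ρ} |u_K − u_L| dℋⁿ + ℋⁿ(K^ρ △ L^ρ). -/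
open Metric Set Pointwise MeasureTheory
open scoped RealInnerProductSpace

lemma proj_char {n : ℕ} {K : Set (EuclideanSpace ℝ (Fin n))} (hK : Convex ℝ K)
    {p : EuclideanSpace ℝ (Fin n) → EuclideanSpace ℝ (Fin n)}
    (hp : ∀ x, p x ∈ K ∧ dist x (p x) = infDist x K) :
    ∀ x, ∀ w ∈ K, ⟪x - p x, w - p x⟫ ≤ 0 := by
  intro x
  rw [← norm_eq_iInf_iff_real_inner_le_zero hK (hp x).1]
  have := (hp x).2
  rw [dist_eq_norm, infDist_eq_iInf] at this
  rw [this]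
  simp only [dist_eq_norm]

lemma proj_lip {n : ℕ} {K : Set (EuclideanSpace ℝ (Fin n))} (hK : Convex ℝ K)
    {p : EuclideanSpace ℝ (Fin n) → EuclideanSpace ℝ (Fin n)}
    (hp : ∀ x, p x ∈ K ∧ dist x (p x) = infDist x K) :
    LipschitzWith 1 p := by
  have hc := proj_char hK hp
  rw [lipschitzWith_iff_dist_le_mul]
  intro x y
  rw [NNReal.coe_one, one_mul, dist_eq_norm, dist_eq_norm]
  have h1 : ⟪x - p x, p y - p x⟫ ≤ 0 := hc x (p y) (hp y).1
  have h2 : ⟪y - p y, p x - p y⟫ ≤ 0 := hc y (p x) (hp x).1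
  have key : ‖p x - p y‖ ^ 2 ≤ ⟪x - y, p x - p y⟫ := by
    have e : (x - y : EuclideanSpace ℝ (Fin n)) = (x - p x) + (p x - p y) + (p y - y) := by abel
    rw [e, inner_add_left, inner_add_left, real_inner_self_eq_norm_sq]
    have h1' : ⟪x - p x, p x - p y⟫ ≥ 0 := by
      have : (p x - p y : EuclideanSpace ℝ (Fin n)) = -(p y - p x) := by abel
      rw [this, inner_neg_right]; linarith
    have h2' : ⟪p y - y, p x - p y⟫ ≥ 0 := by
      have : (p y - y : EuclideanSpace ℝ (Fin n)) = -(y - p y) := by abel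
      rw [this, inner_neg_left]; linarith
    linarith
  have hle : ⟪x - y, p x - p y⟫ ≤ ‖x - y‖ * ‖p x - p y‖ := real_inner_le_norm _ _
  rcases eq_or_lt_of_le (norm_nonneg (p x - p y)) with h | h
  · rw [← h]; exact norm_nonneg _
  · have : ‖p x - p y‖ * ‖p x - p y‖ ≤ ‖x - y‖ * ‖p x - p y‖ := by nlinarith
    exact le_of_mul_le_mul_right this h

lemma sqrt_sq_add_sq_le {a b : ℝ} (ha : 0 ≤ a) (hb : 0 ≤ b) :
    Real.sqrt (a ^ 2 + b ^ 2) ≤ a + b := by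
  have h : a ^ 2 + b ^ 2 ≤ (a + b) ^ 2 := by nlinarith
  calc Real.sqrt (a ^ 2 + b ^ 2) ≤ Real.sqrt ((a + b) ^ 2) := Real.sqrt_le_sqrt h
    _ = a + b := Real.sqrt_sq (by linarith)

/-- The bounded Lipschitz distance between two finite Borel measures on
Σ = ℝⁿ × ℝⁿ (with the Euclidean metric of ℝ^{2n}): the supremum of
|∫ f dμ − ∫ f dν| over all f with Lipschitz constant ≤ 1 and sup-norm ≤ 1. -/
noncomputable def boundedLipschitzDist {n : ℕ}
    (μ ν : Measure (EuclideanSpace ℝ (Fin n) × EuclideanSpace ℝ (Fin n))) : ℝ :=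
  sSup {r | ∃ f : EuclideanSpace ℝ (Fin n) × EuclideanSpace ℝ (Fin n) → ℝ,
    (∀ a b, |f a - f b| ≤ Real.sqrt (dist a.1 b.1 ^ 2 + dist a.2 b.2 ^ 2)) ∧
    (∀ z, |f z| ≤ 1) ∧ r = |∫ z, f z ∂μ - ∫ z, f z ∂ν|}

/-- For convex bodies K, L and ρ > 0, with μ_{K,ρ} the pushforward of Lebesgue measure
restricted to the shell K^ρ = (K + ρBⁿ) \ K under x ↦ (p_K(x), u_K(x)),
the bounded Lipschitz distance of μ_{K,ρ} and μ_{L,ρ} is at most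
∫_{K^ρ∩L^ρ} |p_K − p_L| + ∫_{K^ρ∩L^ρ} |u_K − u_L| + ℋⁿ(K^ρ △ L^ρ). -/
theorem dbL_mu_le
    (n : ℕ) (ρ : ℝ) (hρ : 0 < ρ)
    (K L : Set (EuclideanSpace ℝ (Fin n)))
    (hKne : K.Nonempty) (hKcpt : IsCompact K) (hKcvx : Convex ℝ K)
    (hLne : L.Nonempty) (hLcpt : IsCompact L) (hLcvx : Convex ℝ L)
    (pK pL : EuclideanSpace ℝ (Fin n) → EuclideanSpace ℝ (Fin n))
    (hpK : ∀ x, pK x ∈ K ∧ dist x (pK x) = infDist x K)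
    (hpL : ∀ x, pL x ∈ L ∧ dist x (pL x) = infDist x L)
    (uK uL : EuclideanSpace ℝ (Fin n) → EuclideanSpace ℝ (Fin n))
    (huK : ∀ x, uK x = ‖x - pK x‖⁻¹ • (x - pK x))
    (huL : ∀ x, uL x = ‖x - pL x‖⁻¹ • (x - pL x)) :
    boundedLipschitzDist
        (Measure.map (fun x => (pK x, uK x))
          (volume.restrict ((K + closedBall (0 : EuclideanSpace ℝ (Fin n)) ρ) \ K)))
        (Measure.map (fun x => (pL x, uL x))
          (volume.restrict ((L + closedBall (0 : EuclideanSpace ℝ (Fin n)) ρ) \ L)))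
      ≤ (∫ x in ((K + closedBall (0 : EuclideanSpace ℝ (Fin n)) ρ) \ K) ∩
            ((L + closedBall (0 : EuclideanSpace ℝ (Fin n)) ρ) \ L), ‖pK x - pL x‖)
        + (∫ x in ((K + closedBall (0 : EuclideanSpace ℝ (Fin n)) ρ) \ K) ∩
            ((L + closedBall (0 : EuclideanSpace ℝ (Fin n)) ρ) \ L), ‖uK x - uL x‖)
        + (volume
            ((((K + closedBall (0 : EuclideanSpace ℝ (Fin n)) ρ) \ K) \
                ((L + closedBall (0 : EuclideanSpace ℝ (Fin n)) ρ) \ L)) ∪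
             (((L + closedBall (0 : EuclideanSpace ℝ (Fin n)) ρ) \ L) \
                ((K + closedBall (0 : EuclideanSpace ℝ (Fin n)) ρ) \ K)))).toReal := by
  set A := (K + closedBall (0 : EuclideanSpace ℝ (Fin n)) ρ) \ K with hAdef
  set B := (L + closedBall (0 : EuclideanSpace ℝ (Fin n)) ρ) \ L with hBdef
  -- basic set facts
  have hKA : IsCompact (K + closedBall (0 : EuclideanSpace ℝ (Fin n)) ρ) := hKcpt.add (isCompact_closedBall _ _)
  have hLB : IsCompact (L + closedBall (0 : EuclideanSpace ℝ (Fin n)) ρ) := hLcpt.add (isCompact_closedBall _ _)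
  have hAm : MeasurableSet A := hKA.isClosed.measurableSet.diff hKcpt.isClosed.measurableSet
  have hBm : MeasurableSet B := hLB.isClosed.measurableSet.diff hLcpt.isClosed.measurableSet
  have hAfin : volume A < ⊤ :=
    lt_of_le_of_lt (measure_mono diff_subset) hKA.measure_lt_top
  have hBfin : volume B < ⊤ :=
    lt_of_le_of_lt (measure_mono diff_subset) hLB.measure_lt_top
  have hAsub : A ⊆ Kᶜ := fun x hx => hx.2
  have hBsub : B ⊆ Lᶜ := fun x hx => hx.2
  have hABm : MeasurableSet (A ∩ B) := hAm.inter hBm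
  haveI iA : IsFiniteMeasure (volume.restrict A) :=
    ⟨by rw [Measure.restrict_apply_univ]; exact hAfin⟩
  haveI iB : IsFiniteMeasure (volume.restrict B) :=
    ⟨by rw [Measure.restrict_apply_univ]; exact hBfin⟩
  haveI iAB : IsFiniteMeasure (volume.restrict (A ∩ B)) :=
    ⟨by rw [Measure.restrict_apply_univ]
        exact lt_of_le_of_lt (measure_mono inter_subset_left) hAfin⟩
  haveI iAdB : IsFiniteMeasure (volume.restrict (A \ B)) :=
    ⟨by rw [Measure.restrict_apply_univ]
        exact lt_of_le_of_lt (measure_mono diff_subset) hAfin⟩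
  haveI iBdA : IsFiniteMeasure (volume.restrict (B \ A)) :=
    ⟨by rw [Measure.restrict_apply_univ]
        exact lt_of_le_of_lt (measure_mono diff_subset) hBfin⟩
  -- continuity
  have hpKc : Continuous pK := (proj_lip hKcvx hpK).continuous
  have hpLc : Continuous pL := (proj_lip hLcvx hpL).continuous
  have huKeq : uK = fun x => ‖x - pK x‖⁻¹ • (x - pK x) := funext huK
  have huLeq : uL = fun x => ‖x - pL x‖⁻¹ • (x - pL x) := funext huL
  have hdK : ∀ x ∈ Kᶜ, x - pK x ≠ 0 := by
    intro x hx h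
    exact hx (by rw [sub_eq_zero.mp h]; exact (hpK x).1)
  have hdL : ∀ x ∈ Lᶜ, x - pL x ≠ 0 := by
    intro x hx h
    exact hx (by rw [sub_eq_zero.mp h]; exact (hpL x).1)
  have huKc : ContinuousOn uK Kᶜ := by
    rw [huKeq]
    exact ContinuousOn.smul
      (((continuous_id.sub hpKc).norm.continuousOn).inv₀
        (fun x hx => norm_ne_zero_iff.mpr (hdK x hx)))
      (continuous_id.sub hpKc).continuousOn
  have huLc : ContinuousOn uL Lᶜ := by
    rw [huLeq]
    exact ContinuousOn.smul
      (((continuous_id.sub hpLc).norm.continuousOn).inv₀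
        (fun x hx => norm_ne_zero_iff.mpr (hdL x hx)))
      (continuous_id.sub hpLc).continuousOn
  have huKnorm : ∀ x, ‖uK x‖ ≤ 1 := by
    intro x
    rw [huK x, norm_smul, norm_inv, norm_norm]
    rcases eq_or_ne (x - pK x) 0 with h | h
    · simp [h]
    · rw [inv_mul_cancel₀ (norm_ne_zero_iff.mpr h)]
  have huLnorm : ∀ x, ‖uL x‖ ≤ 1 := by
    intro x
    rw [huL x, norm_smul, norm_inv, norm_norm]
    rcases eq_or_ne (x - pL x) 0 with h | h
    · simp [h]
    · rw [inv_mul_cancel₀ (norm_ne_zero_iff.mpr h)]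
  -- measurability of the maps
  have huKaA : AEMeasurable uK (volume.restrict A) := (huKc.mono hAsub).aemeasurable hAm
  have huLaB : AEMeasurable uL (volume.restrict B) := (huLc.mono hBsub).aemeasurable hBm
  have hTKa : AEMeasurable (fun x => (pK x, uK x)) (volume.restrict A) :=
    hpKc.measurable.aemeasurable.prodMk huKaA
  have hTLa : AEMeasurable (fun x => (pL x, uL x)) (volume.restrict B) :=
    hpLc.measurable.aemeasurable.prodMk huLaB
  rw [boundedLipschitzDist]
  apply Real.sSup_le
  · rintro r ⟨f, hfl, hfb, rfl⟩
    -- f is Lipschitz, hence continuous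
    have hfd : LipschitzWith 2 f := by
      rw [lipschitzWith_iff_dist_le_mul]
      intro a b
      rw [Real.dist_eq]
      refine (hfl a b).trans ?_
      have h1 : dist a.1 b.1 ≤ dist a b := by rw [Prod.dist_eq]; exact le_max_left _ _
      have h2 : dist a.2 b.2 ≤ dist a b := by rw [Prod.dist_eq]; exact le_max_right _ _
      refine (sqrt_sq_add_sq_le dist_nonneg dist_nonneg).trans ?_
      push_cast
      linarith
    have hfc : Continuous f := hfd.continuous
    set g := fun x => f (pK x, uK x) with hgdef
    set h := fun x => f (pL x, uL x) with hhdef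
    have hgae : AEStronglyMeasurable g (volume.restrict A) :=
      (hfc.measurable.comp_aemeasurable hTKa).aestronglyMeasurable
    have hhae : AEStronglyMeasurable h (volume.restrict B) :=
      (hfc.measurable.comp_aemeasurable hTLa).aestronglyMeasurable
    have hgint : IntegrableOn g A := by
      refine (integrable_const (1 : ℝ)).mono' hgae (ae_of_all _ fun x => ?_)
      simpa [Real.norm_eq_abs] using hfb (pK x, uK x)
    have hhint : IntegrableOn h B := by
      refine (integrable_const (1 : ℝ)).mono' hhae (ae_of_all _ fun x => ?_)
      simpa [Real.norm_eq_abs] using hfb (pL x, uL x)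
    -- rewrite the mapped integrals
    have hIK : ∫ z, f z ∂(Measure.map (fun x => (pK x, uK x)) (volume.restrict A))
        = ∫ x in A, g x := integral_map hTKa hfc.aestronglyMeasurable
    have hIL : ∫ z, f z ∂(Measure.map (fun x => (pL x, uL x)) (volume.restrict B))
        = ∫ x in B, h x := integral_map hTLa hfc.aestronglyMeasurable
    rw [hIK, hIL]
    -- split the integrals
    have hsplitA : (∫ x in A ∩ B, g x) + (∫ x in A \ B, g x) = ∫ x in A, g x :=
      integral_inter_add_diff hBm hgint
    have hsplitB : (∫ x in A ∩ B, h x) + (∫ x in B \ A, h x) = ∫ x in B, h x := by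
      rw [inter_comm]
      exact integral_inter_add_diff hAm hhint
    -- integrability on the pieces
    have hgAB : IntegrableOn g (A ∩ B) := hgint.mono_set inter_subset_left
    have hhAB : IntegrableOn h (A ∩ B) := by
      refine hhint.mono_set inter_subset_right
    -- the pointwise bound
    have hpw : ∀ x, |g x - h x| ≤ ‖pK x - pL x‖ + ‖uK x - uL x‖ := by
      intro x
      refine (hfl (pK x, uK x) (pL x, uL x)).trans ?_
      simp only [dist_eq_norm]
      exact sqrt_sq_add_sq_le (norm_nonneg _) (norm_nonneg _)
    -- integrability of the norm integrands on A ∩ B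
    have hn1int : IntegrableOn (fun x => ‖pK x - pL x‖) (A ∩ B) := by
      refine (((hpKc.sub hpLc).norm.continuousOn).integrableOn_compact hKA).mono_set ?_
      exact fun x hx => hx.1.1
    have huKab : AEMeasurable uK (volume.restrict (A ∩ B)) :=
      (huKc.mono (inter_subset_left.trans hAsub)).aemeasurable hABm
    have huLab : AEMeasurable uL (volume.restrict (A ∩ B)) :=
      (huLc.mono (inter_subset_right.trans hBsub)).aemeasurable hABm
    have hn2int : IntegrableOn (fun x => ‖uK x - uL x‖) (A ∩ B) := by
      refine (integrable_const (2 : ℝ)).mono'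
        ((huKab.sub huLab).norm.aestronglyMeasurable) (ae_of_all _ fun x => ?_)
      rw [Real.norm_eq_abs, abs_of_nonneg (norm_nonneg _)]
      calc ‖uK x - uL x‖ ≤ ‖uK x‖ + ‖uL x‖ := norm_sub_le _ _
        _ ≤ 2 := by linarith [huKnorm x, huLnorm x]
    -- bound the middle term
    have habs1 : |∫ x in A ∩ B, (g x - h x)|
        ≤ (∫ x in A ∩ B, ‖pK x - pL x‖) + (∫ x in A ∩ B, ‖uK x - uL x‖) := by
      have h1 : |∫ x in A ∩ B, (g x - h x)| ≤ ∫ x in A ∩ B, |g x - h x| := by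
        have := norm_integral_le_integral_norm (μ := volume.restrict (A ∩ B))
          (f := fun x => g x - h x)
        simpa [Real.norm_eq_abs] using this
      have h2 : (∫ x in A ∩ B, |g x - h x|)
          ≤ ∫ x in A ∩ B, (‖pK x - pL x‖ + ‖uK x - uL x‖) :=
        integral_mono (hgAB.sub hhAB).abs (hn1int.add hn2int) (fun x => hpw x)
      rw [integral_add hn1int hn2int] at h2
      linarith
    -- bound the tails
    have habs2 : |∫ x in A \ B, g x| ≤ (volume (A \ B)).toReal := by
      have h1 : |∫ x in A \ B, g x| ≤ ∫ x in A \ B, |g x| := by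
        have := norm_integral_le_integral_norm (μ := volume.restrict (A \ B)) (f := g)
        simpa [Real.norm_eq_abs] using this
      have h2 : (∫ x in A \ B, |g x|) ≤ ∫ x in A \ B, (1 : ℝ) :=
        integral_mono (hgint.mono_set diff_subset).abs (integrable_const _)
          (fun x => hfb _)
      rw [setIntegral_const] at h2
      simp only [smul_eq_mul, mul_one] at h2
      rw [measureReal_def] at h2
      linarith
    have habs3 : |∫ x in B \ A, h x| ≤ (volume (B \ A)).toReal := by
      have h1 : |∫ x in B \ A, h x| ≤ ∫ x in B \ A, |h x| := by
        have := norm_integral_le_integral_norm (μ := volume.restrict (B \ A)) (f := h)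
        simpa [Real.norm_eq_abs] using this
      have h2 : (∫ x in B \ A, |h x|) ≤ ∫ x in B \ A, (1 : ℝ) :=
        integral_mono (hhint.mono_set diff_subset).abs (integrable_const _)
          (fun x => hfb _)
      rw [setIntegral_const] at h2
      simp only [smul_eq_mul, mul_one] at h2
      rw [measureReal_def] at h2
      linarith
    -- volumes add up
    have hvol : (volume (A \ B)).toReal + (volume (B \ A)).toReal
        = (volume ((A \ B) ∪ (B \ A))).toReal := by
      rw [measure_union disjoint_sdiff_sdiff (hBm.diff hAm),
        ENNReal.toReal_add
          (ne_of_lt (lt_of_le_of_lt (measure_mono diff_subset) hAfin))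
          (ne_of_lt (lt_of_le_of_lt (measure_mono diff_subset) hBfin))]
    -- assemble
    have hdiff : (∫ x in A ∩ B, (g x - h x))
        = (∫ x in A ∩ B, g x) - (∫ x in A ∩ B, h x) := integral_sub hgAB hhAB
    have key : |(∫ x in A, g x) - (∫ x in B, h x)|
        ≤ |∫ x in A ∩ B, (g x - h x)| + |∫ x in A \ B, g x| + |∫ x in B \ A, h x| := by
      rw [← hsplitA, ← hsplitB, hdiff]
      have e : ((∫ x in A ∩ B, g x) + (∫ x in A \ B, g x))
            - ((∫ x in A ∩ B, h x) + (∫ x in B \ A, h x))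
          = (((∫ x in A ∩ B, g x) - (∫ x in A ∩ B, h x)) + (∫ x in A \ B, g x))
            + (-(∫ x in B \ A, h x)) := by ring
      rw [e]
      calc |(((∫ x in A ∩ B, g x) - (∫ x in A ∩ B, h x)) + (∫ x in A \ B, g x))
            + (-(∫ x in B \ A, h x))|
          ≤ |((∫ x in A ∩ B, g x) - (∫ x in A ∩ B, h x)) + (∫ x in A \ B, g x)|
            + |(-(∫ x in B \ A, h x))| := abs_add_le _ _
        _ ≤ |(∫ x in A ∩ B, g x) - (∫ x in A ∩ B, h x)| + |∫ x in A \ B, g x|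
            + |∫ x in B \ A, h x| := by
            rw [abs_neg]
            linarith [abs_add_le ((∫ x in A ∩ B, g x) - (∫ x in A ∩ B, h x))
              (∫ x in A \ B, g x)]
    calc |(∫ x in A, g x) - (∫ x in B, h x)|
        ≤ |∫ x in A ∩ B, (g x - h x)| + |∫ x in A \ B, g x| + |∫ x in B \ A, h x| := key
      _ ≤ ((∫ x in A ∩ B, ‖pK x - pL x‖) + (∫ x in A ∩ B, ‖uK x - uL x‖))
          + (volume (A \ B)).toReal + (volume (B \ A)).toReal := by
          linarith
      _ = (∫ x in A ∩ B, ‖pK x - pL x‖) + (∫ x in A ∩ B, ‖uK x - uL x‖)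
          + (volume ((A \ B) ∪ (B \ A))).toReal := by rw [← hvol]; ring
  · refine add_nonneg (add_nonneg ?_ ?_) ENNReal.toReal_nonneg
    · exact integral_nonneg fun x => norm_nonneg _
    · exact integral_nonneg fun x => norm_nonneg _
end

section
/- Let V be an n-dimensional inner product space with the induced inner products on exterior powers. If ξ ∈ ⋀_p V and η ∈ ⋀_q V and at least one of ξ, η is simple (decomposable), then |ξ ∧ η| ≤ |ξ| |η|. -/
open scoped RealInnerProductSpace

theorem aux_map_eq_det_smul {ι R M N : Type*} [Fintype ι] [DecidableEq ι]
    [CommRing R] [AddCommGroup M] [Module R M] [AddCommGroup N] [Module R N]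
    (e : Module.Basis ι R M) (g : M [⋀^ι]→ₗ[R] N) (w : ι → M) :
    g w = e.det w • g ⇑e := by
  have h : g = AlternatingMap.smulRight e.det (g ⇑e) := by
    refine Module.Basis.ext_alternating e fun i hi => ?_
    let σ : Equiv.Perm ι := Equiv.ofBijective i (Finite.injective_iff_bijective.1 hi)
    change g (⇑e ∘ σ) = AlternatingMap.smulRight e.det (g ⇑e) (⇑e ∘ σ)
    rw [AlternatingMap.map_perm, AlternatingMap.map_perm]
    simp [Module.Basis.det_self]
  conv_lhs => rw [h]
  simp

theorem aux_iMulti_mul {R M : Type*} [CommRing R] [AddCommGroup M] [Module R M]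
    {p q : ℕ} (x : Fin p → M) (y : Fin q → M) :
    ExteriorAlgebra.ιMulti R p x * ExteriorAlgebra.ιMulti R q y
      = ExteriorAlgebra.ιMulti R (p + q) (Fin.append x y) := by
  rw [ExteriorAlgebra.ιMulti_apply, ExteriorAlgebra.ιMulti_apply, ExteriorAlgebra.ιMulti_apply,
    ← List.prod_append, ← List.ofFn_fin_append]
  congr 1
  have : (fun i => ExteriorAlgebra.ι R (Fin.append x y i))
      = Fin.append (fun i => ExteriorAlgebra.ι R (x i)) (fun i => ExteriorAlgebra.ι R (y i)) := by
    funext i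
    refine Fin.addCases (fun j => ?_) (fun j => ?_) i <;>
      simp [Fin.append_left, Fin.append_right]
  rw [this]

set_option maxHeartbeats 2000000 in
/-- Let V be a finite-dimensional inner product space and let B be the induced inner
product on the exterior algebra of V, characterized on each exterior power by the Gram
determinant formula ⟨v₁∧…∧v_m, w₁∧…∧w_m⟩ = det(⟨v_i, w_j⟩), and positive semidefinite.
If ξ = v₁∧…∧v_p is a simple p-vector and η is any q-vector, then |ξ ∧ η| ≤ |ξ| |η|. -/
theorem norm_wedge_le_of_simple
    (V : Type*) [NormedAddCommGroup V] [InnerProductSpace ℝ V] [FiniteDimensional ℝ V]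
    (B : ExteriorAlgebra ℝ V →ₗ[ℝ] ExteriorAlgebra ℝ V →ₗ[ℝ] ℝ)
    (hGram : ∀ (m : ℕ) (v w : Fin m → V),
      B (ExteriorAlgebra.ιMulti ℝ m v) (ExteriorAlgebra.ιMulti ℝ m w)
        = (Matrix.of fun i j => ⟪v i, w j⟫).det)
    (hpos : ∀ x, 0 ≤ B x x)
    (p q : ℕ) (v : Fin p → V)
    (η : ExteriorAlgebra ℝ V) (hη : η ∈ ⋀[ℝ]^q V) :
    Real.sqrt (B (ExteriorAlgebra.ιMulti ℝ p v * η) (ExteriorAlgebra.ιMulti ℝ p v * η))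
      ≤ Real.sqrt (B (ExteriorAlgebra.ιMulti ℝ p v) (ExteriorAlgebra.ιMulti ℝ p v)) *
        Real.sqrt (B η η) := by
  classical
  by_cases hv : LinearIndependent ℝ v
  swap
  · haveI : NoZeroSMulDivisors ℝ (ExteriorAlgebra ℝ V) :=
      ⟨fun {c x} h => by
        rcases eq_or_ne c 0 with hc | hc
        · exact Or.inl hc
        · refine Or.inr ?_
          have := congrArg (fun y => c⁻¹ • y) h
          simpa [smul_smul, inv_mul_cancel₀ hc] using this⟩
    rw [AlternatingMap.map_linearDependent _ v hv]
    simp only [zero_mul, map_zero, LinearMap.zero_apply, Real.sqrt_zero]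
    positivity
  -- setup
  set n := Module.finrank ℝ V with hn
  set W := Submodule.span ℝ (Set.range v) with hWdef
  have hvW : ∀ i, v i ∈ W := fun i => Submodule.subset_span (Set.mem_range_self i)
  have hW : Module.finrank ℝ W = p := by
    rw [finrank_span_eq_card hv, Fintype.card_fin]
  have hpn : p ≤ n := hW ▸ Submodule.finrank_le W
  set f : OrthonormalBasis (Fin p) ℝ W := (stdOrthonormalBasis ℝ W).reindex (finCongr hW)
  -- extend to an orthonormal basis of V
  set vb : Fin n → V := fun i => if h : (i : ℕ) < p then (f ⟨i, h⟩ : V) else 0 with hvb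
  have hortho : Orthonormal ℝ (Set.restrict {i : Fin n | (i : ℕ) < p} vb) := by
    have h1 : Orthonormal ℝ (fun i : Fin p => (f i : V)) := by
      have := f.orthonormal
      rw [orthonormal_iff_ite] at this ⊢
      intro i j
      rw [← Submodule.coe_inner, this i j]
    have := h1.comp (fun i : {i : Fin n | (i : ℕ) < p} => (⟨(i : Fin n), i.2⟩ : Fin p))
      (fun a b hab => by
        apply Subtype.ext; apply Fin.ext
        simpa [Fin.ext_iff] using hab)
    convert this using 1
    funext i
    simp only [Set.restrict_apply, Function.comp_apply, hvb]
    exact dif_pos i.2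
  obtain ⟨b, hb⟩ := hortho.exists_orthonormalBasis_extension_of_card_eq (by simp [hn])
  have hbf : ∀ i : Fin p, b (Fin.castLE hpn i) = (f i : V) := by
    intro i
    rw [hb _ (by simpa using i.2)]
    simp only [hvb]
    rw [dif_pos (show ((Fin.castLE hpn i : Fin n) : ℕ) < p from i.2)]
    exact congrArg _ (congrArg f (Fin.ext rfl))
  set idp : Fin p → Fin n := Fin.castLE hpn with hidp
  -- Gram matrices of basis tuples
  have hbone : ∀ i j : Fin n, ⟪b i, b j⟫ = if i = j then (1:ℝ) else 0 :=
    orthonormal_iff_ite.mp b.orthonormal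
  have hBg : ∀ (m : ℕ) (x y : Fin m → Fin n),
      B (ExteriorAlgebra.ιMulti ℝ m (b ∘ x)) (ExteriorAlgebra.ιMulti ℝ m (b ∘ y))
        = (Matrix.of fun i j => if x i = y j then (1:ℝ) else 0).det := by
    intro m x y
    rw [hGram]
    congr 1
    ext i j
    simp only [Matrix.of_apply, Function.comp_apply, hbone]
    -- Step A: the simple vector equals a scalar multiple of a basis wedge
  set vW : Fin p → W := fun i => ⟨v i, hvW i⟩ with hvWdef
  set c : ℝ := f.toBasis.det vW with hc
  set ε : ExteriorAlgebra ℝ V := ExteriorAlgebra.ιMulti ℝ p (b ∘ idp) with hε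
  have hA : ExteriorAlgebra.ιMulti ℝ p v = c • ε := by
    have h1 : ExteriorAlgebra.ιMulti ℝ p v
        = ((ExteriorAlgebra.ιMulti ℝ p).compLinearMap W.subtype) vW := by
      simp [AlternatingMap.compLinearMap_apply]; rfl
    rw [h1, aux_map_eq_det_smul f.toBasis]
    congr 1
    simp only [AlternatingMap.compLinearMap_apply, hε]
    congr 1
    funext i
    simp only [Function.comp_apply, OrthonormalBasis.coe_toBasis, Submodule.coe_subtype]
    exact (hbf i).symm
  -- good and bad submodules
  set Sg : Submodule ℝ (ExteriorAlgebra ℝ V) := Submodule.span ℝ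
      {z | ∃ a : Fin q → Fin n, (∀ i, p ≤ (a i : ℕ)) ∧ z = ExteriorAlgebra.ιMulti ℝ q (b ∘ a)}
      with hSgdef
  set Sb : Submodule ℝ (ExteriorAlgebra ℝ V) := Submodule.span ℝ
      {z | ∃ a : Fin q → Fin n, (∃ i, (a i : ℕ) < p) ∧ z = ExteriorAlgebra.ιMulti ℝ q (b ∘ a)}
      with hSbdef
  have hmem : η ∈ Sg ⊔ Sb := by
    have h1 : η ∈ Submodule.span ℝ (Set.range (ExteriorAlgebra.ιMulti ℝ q (M := V))) := by
      rw [ExteriorAlgebra.ιMulti_span_fixedDegree]; exact hη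
    refine Submodule.span_le.mpr ?_ h1
    rintro _ ⟨w, rfl⟩
    have hexp : ExteriorAlgebra.ιMulti ℝ q w
        = ∑ m : Fin q → Fin n, (∏ i, b.repr (w i) (m i)) •
            ExteriorAlgebra.ιMulti ℝ q (b ∘ m) := by
      have h2 : w = (fun i => ∑ j : Fin n, b.repr (w i) j • b j) :=
        funext fun i => (b.sum_repr (w i)).symm
      conv_lhs => rw [h2]
      rw [show (ExteriorAlgebra.ιMulti ℝ q) (fun i => ∑ j : Fin n, b.repr (w i) j • b j)
          = (ExteriorAlgebra.ιMulti ℝ q).toMultilinearMap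
            (fun i => ∑ j : Fin n, b.repr (w i) j • b j) from rfl, MultilinearMap.map_sum]
      refine Finset.sum_congr rfl fun m _ => ?_
      exact MultilinearMap.map_smul_univ _ (fun i => b.repr (w i) (m i)) (fun i => b (m i))
    rw [hexp]
    refine Submodule.sum_mem _ fun m _ => ?_
    by_cases hm : ∀ i, p ≤ (m i : ℕ)
    · exact Submodule.mem_sup_left (Submodule.smul_mem _ _
        (Submodule.subset_span ⟨m, hm, rfl⟩))
    · push_neg at hm
      exact Submodule.mem_sup_right (Submodule.smul_mem _ _
        (Submodule.subset_span ⟨m, hm, rfl⟩))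
  -- multiplying a bad element by the simple vector gives zero
  have hbad : ∀ z ∈ Sb, ExteriorAlgebra.ιMulti ℝ p v * z = 0 := by
    intro z hz
    refine (Submodule.span_le.mpr ?_ hz :
      z ∈ LinearMap.ker (LinearMap.mulLeft ℝ (ExteriorAlgebra.ιMulti ℝ p v)))
    rintro _ ⟨a, ⟨i0, hi0⟩, rfl⟩
    simp only [SetLike.mem_coe, LinearMap.mem_ker, LinearMap.mulLeft_apply]
    rw [hA, hε, smul_mul_assoc, aux_iMulti_mul]
    rw [AlternatingMap.map_eq_zero_of_eq _ _
      (i := Fin.castAdd q ⟨(a i0 : ℕ), hi0⟩) (j := Fin.natAdd p i0) ?_ ?_, smul_zero]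
    · rw [Fin.append_left, Fin.append_right]
      simp only [Function.comp_apply]
      congr 1
    · intro hcon
      have := congrArg (fun x : Fin (p + q) => (x : ℕ)) hcon
      simp only [Fin.coe_castAdd, Fin.coe_natAdd] at this
      omega
  -- Gram matrix of appended good tuples is block diagonal
  have happend : ∀ (a : Fin q → Fin n),
      Fin.append (b ∘ idp) (b ∘ a) = b ∘ Fin.append idp a := by
    intro a
    funext i
    refine Fin.addCases (fun j => ?_) (fun j => ?_) i <;>
      simp [Fin.append_left, Fin.append_right]
  have hgoodmul : ∀ x ∈ Sg, ∀ y ∈ Sg, B (ε * x) (ε * y) = B x y := by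
    intro x hx y hy
    refine Submodule.span_induction₂
      (p := fun x y _ _ => B (ε * x) (ε * y) = B x y) ?_ ?_ ?_ ?_ ?_ ?_ ?_ hx hy
    · rintro _ _ ⟨a, ha, rfl⟩ ⟨a', ha', rfl⟩
      rw [hε, aux_iMulti_mul, aux_iMulti_mul, happend, happend, hBg, hBg]
      rw [← Matrix.det_submatrix_equiv_self finSumFinEquiv]
      have hblock : (Matrix.of fun i j =>
            if Fin.append idp a i = Fin.append idp a' j then (1:ℝ) else 0).submatrix
            finSumFinEquiv finSumFinEquiv
          = Matrix.fromBlocks 1 0 0 (Matrix.of fun i j => if a i = a' j then (1:ℝ) else 0) := by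
        ext i j
        rcases i with i | i <;> rcases j with j | j <;>
          simp only [Matrix.submatrix_apply, finSumFinEquiv_apply_left,
            finSumFinEquiv_apply_right, Matrix.of_apply, Fin.append_left, Fin.append_right,
            Matrix.fromBlocks_apply₁₁, Matrix.fromBlocks_apply₁₂, Matrix.fromBlocks_apply₂₁,
            Matrix.fromBlocks_apply₂₂, Matrix.zero_apply, Matrix.one_apply]
        · congr 1
          simp [hidp, Fin.ext_iff]
        · rw [if_neg]
          intro hcon
          have := congrArg (fun x : Fin n => (x : ℕ)) hcon
          simp only [hidp, Fin.coe_castLE] at this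
          have := ha' j
          omega
        · rw [if_neg]
          intro hcon
          have := congrArg (fun x : Fin n => (x : ℕ)) hcon
          simp only [hidp, Fin.coe_castLE] at this
          have := ha i
          omega
      rw [hblock, Matrix.det_fromBlocks_zero₂₁, Matrix.det_one, one_mul]
    · intro y hy
      rw [mul_zero, map_zero, LinearMap.zero_apply, LinearMap.zero_apply]
    · intro x hx
      rw [mul_zero, map_zero, map_zero]
    · intro x y z _ _ _ h1 h2
      simp only [mul_add, map_add, LinearMap.add_apply]
      rw [h1, h2]
    · intro x y z _ _ _ h1 h2
      simp only [mul_add, map_add, LinearMap.add_apply]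
      rw [h1, h2]
    · intro r x y _ _ h1
      simp only [mul_smul_comm, map_smul, LinearMap.smul_apply, smul_eq_mul]
      rw [h1]
    · intro r x y _ _ h1
      simp only [mul_smul_comm, map_smul, LinearMap.smul_apply, smul_eq_mul]
      rw [h1]
  -- cross terms vanish
  have hgenGB : ∀ (a : Fin q → Fin n), (∀ i, p ≤ (a i : ℕ)) →
      ∀ y ∈ Sb, B (ExteriorAlgebra.ιMulti ℝ q (b ∘ a)) y = 0 := by
    intro a ha y hy
    refine (Submodule.span_le.mpr ?_ hy :
      y ∈ LinearMap.ker (B (ExteriorAlgebra.ιMulti ℝ q (b ∘ a))))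
    rintro _ ⟨a', ⟨i0, hi0⟩, rfl⟩
    simp only [SetLike.mem_coe, LinearMap.mem_ker]
    rw [hBg]
    refine Matrix.det_eq_zero_of_column_eq_zero i0 fun i => ?_
    simp only [Matrix.of_apply]
    rw [if_neg]
    intro hcon
    have := congrArg (fun x : Fin n => (x : ℕ)) hcon
    have := ha i
    omega
  have hcrossGB : ∀ x ∈ Sg, ∀ y ∈ Sb, B x y = 0 := by
    intro x hx y hy
    refine (Submodule.span_le.mpr ?_ hx : x ∈ LinearMap.ker (B.flip y))
    rintro _ ⟨a, ha, rfl⟩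
    simp only [SetLike.mem_coe, LinearMap.mem_ker, LinearMap.flip_apply]
    exact hgenGB a ha y hy
  have hgenBG : ∀ (a : Fin q → Fin n), (∀ i, p ≤ (a i : ℕ)) →
      ∀ y ∈ Sb, B y (ExteriorAlgebra.ιMulti ℝ q (b ∘ a)) = 0 := by
    intro a ha y hy
    refine (Submodule.span_le.mpr ?_ hy :
      y ∈ LinearMap.ker (B.flip (ExteriorAlgebra.ιMulti ℝ q (b ∘ a))))
    rintro _ ⟨a', ⟨i0, hi0⟩, rfl⟩
    simp only [SetLike.mem_coe, LinearMap.mem_ker, LinearMap.flip_apply]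
    rw [hBg]
    refine Matrix.det_eq_zero_of_row_eq_zero i0 fun j => ?_
    simp only [Matrix.of_apply]
    rw [if_neg]
    intro hcon
    have := congrArg (fun x : Fin n => (x : ℕ)) hcon
    have := ha j
    omega
  have hcrossBG : ∀ x ∈ Sg, ∀ y ∈ Sb, B y x = 0 := by
    intro x hx y hy
    refine (Submodule.span_le.mpr ?_ hx : x ∈ LinearMap.ker (B y))
    rintro _ ⟨a, ha, rfl⟩
    simp only [SetLike.mem_coe, LinearMap.mem_ker]
    exact hgenBG a ha y hy
  -- norm of the simple vector
  have hεnorm : B ε ε = 1 := by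
    rw [hε, hBg]
    have : (Matrix.of fun i j => if idp i = idp j then (1:ℝ) else 0) = 1 := by
      ext i j
      simp only [Matrix.of_apply, Matrix.one_apply]
      congr 1
      simp [hidp, Fin.ext_iff]
    rw [this, Matrix.det_one]
  -- decompose η and conclude
  obtain ⟨g, hg, bb, hbb, hsum⟩ := Submodule.mem_sup.mp hmem
  rw [← hsum]
  have hL : ExteriorAlgebra.ιMulti ℝ p v * (g + bb) = c • (ε * g) := by
    rw [mul_add, hbad bb hbb, add_zero, hA, smul_mul_assoc]
  rw [hL]
  have h2 : B (c • (ε * g)) (c • (ε * g)) = c ^ 2 * B g g := by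
    simp only [map_smul, LinearMap.smul_apply, smul_eq_mul]
    rw [hgoodmul g hg g hg]
    ring
  have h3 : B (ExteriorAlgebra.ιMulti ℝ p v) (ExteriorAlgebra.ιMulti ℝ p v) = c ^ 2 := by
    rw [hA]
    simp only [map_smul, LinearMap.smul_apply, smul_eq_mul]
    rw [hεnorm]
    ring
  have h4 : B (g + bb) (g + bb) = B g g + B bb bb := by
    simp only [map_add, LinearMap.add_apply]
    rw [hcrossGB g hg bb hbb, hcrossBG g hg bb hbb]
    ring
  rw [h2, h3, h4]
  rw [Real.sqrt_mul (sq_nonneg c)]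
  have h5 : Real.sqrt (B g g) ≤ Real.sqrt (B g g + B bb bb) :=
    Real.sqrt_le_sqrt (by linarith [hpos bb])
  have h6 : 0 ≤ Real.sqrt (c ^ 2) := Real.sqrt_nonneg _
  calc Real.sqrt (c ^ 2) * Real.sqrt (B g g)
      ≤ Real.sqrt (c ^ 2) * Real.sqrt (B g g + B bb bb) := by
        exact mul_le_mul_of_nonneg_left h5 h6
end

section
/- Let u, v be unit vectors in ℝⁿ with u • v ≥ 1 − 1/(2n), and let (b₁,…,b_{n-1}) and (b̄₁,…,b̄_{n-1}) be orthonormal bases of u^⊥ and v^⊥ respectively such that det(b₁,…,b_{n-1},u) = det(b̄₁,…,b̄_{n-1},v) = 1. Then the (n-1)×(n-1) matrix B with entries B_{ij} = b_i • b̄_j has positive determinant. -/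
open scoped RealInnerProductSpace
open Matrix

/-- Let u, v be unit vectors in ℝⁿ (n = m+1) with u•v ≥ 1 − 1/(2n), and let
(b₁,…,b_{n-1}) and (b̄₁,…,b̄_{n-1}) be orthonormal bases of u^⊥ and v^⊥ respectively
with det(b₁,…,b_{n-1},u) = det(b̄₁,…,b̄_{n-1},v) = 1. Then the matrix (b_i • b̄_j) has
positive determinant. -/
theorem det_inner_basis_pos
    (m : ℕ) (u v : EuclideanSpace ℝ (Fin (m + 1)))
    (hu : ‖u‖ = 1) (hv : ‖v‖ = 1)
    (huv : 1 - 1 / (2 * (m + 1)) ≤ ⟪u, v⟫)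
    (b b' : Fin m → EuclideanSpace ℝ (Fin (m + 1)))
    (hb : Orthonormal ℝ b) (hb' : Orthonormal ℝ b')
    (hbu : ∀ i, ⟪b i, u⟫ = 0) (hb'v : ∀ i, ⟪b' i, v⟫ = 0)
    (hdetb : (Matrix.of fun i j =>
      (Fin.snoc (α := fun _ => EuclideanSpace ℝ (Fin (m + 1))) b u j) i).det = 1)
    (hdetb' : (Matrix.of fun i j =>
      (Fin.snoc (α := fun _ => EuclideanSpace ℝ (Fin (m + 1))) b' v j) i).det = 1) :
    0 < (Matrix.of fun i j : Fin m => ⟪b i, b' j⟫).det := by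
  classical
  have inner_sum : ∀ x y : EuclideanSpace ℝ (Fin (m + 1)), ⟪x, y⟫ = ∑ i, x i * y i := by
    intro x y
    simp [PiLp.inner_apply, RCLike.inner_apply, mul_comm]
  set A : Matrix (Fin (m + 1)) (Fin (m + 1)) ℝ := Matrix.of fun i j =>
      (Fin.snoc (α := fun _ => EuclideanSpace ℝ (Fin (m + 1))) b u j) i with hAdef
  set A' : Matrix (Fin (m + 1)) (Fin (m + 1)) ℝ := Matrix.of fun i j =>
      (Fin.snoc (α := fun _ => EuclideanSpace ℝ (Fin (m + 1))) b' v j) i with hA'def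
  -- orthonormality of the extended families
  have ortho : ∀ (c : Fin m → EuclideanSpace ℝ (Fin (m + 1)))
      (w : EuclideanSpace ℝ (Fin (m + 1))), Orthonormal ℝ c → ‖w‖ = 1 →
      (∀ i, ⟪c i, w⟫ = 0) →
      Orthonormal ℝ (Fin.snoc (α := fun _ => EuclideanSpace ℝ (Fin (m + 1))) c w) := by
    intro c w hc hw hcw
    rw [orthonormal_iff_ite]
    rw [orthonormal_iff_ite] at hc
    intro i j
    obtain ⟨i, rfl⟩ | rfl := Fin.eq_castSucc_or_eq_last i <;>
      obtain ⟨j, rfl⟩ | rfl := Fin.eq_castSucc_or_eq_last j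
    · simp only [Fin.snoc_castSucc]
      rw [hc i j]
      simp [Fin.castSucc_inj]
    · simp only [Fin.snoc_castSucc, Fin.snoc_last]
      rw [hcw i]
      simp [(Fin.castSucc_lt_last i).ne]
    · simp only [Fin.snoc_castSucc, Fin.snoc_last]
      rw [real_inner_comm, hcw j]
      simp [(Fin.castSucc_lt_last j).ne']
    · simp only [Fin.snoc_last, if_pos rfl]
      rw [real_inner_self_eq_norm_sq, hw]
      norm_num
  have hA1 : Aᵀ * A = 1 := by
    have h := ortho b u hb hu hbu
    rw [orthonormal_iff_ite] at h
    ext j k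
    rw [Matrix.mul_apply]
    have := (h j k).symm
    rw [inner_sum] at this
    simpa [Matrix.one_apply, hAdef] using this.symm
  have hA'1 : A'ᵀ * A' = 1 := by
    have h := ortho b' v hb' hv hb'v
    rw [orthonormal_iff_ite] at h
    ext j k
    rw [Matrix.mul_apply]
    have := (h j k).symm
    rw [inner_sum] at this
    simpa [Matrix.one_apply, hA'def] using this.symm
  set M : Matrix (Fin (m + 1)) (Fin (m + 1)) ℝ := Aᵀ * A' with hMdef
  have hdetM : M.det = 1 := by
    rw [hMdef, Matrix.det_mul, Matrix.det_transpose, hdetb, hdetb', one_mul]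
  have hMMt : M * Mᵀ = 1 := by
    have hA'A't : A' * A'ᵀ = 1 := mul_eq_one_comm.mp hA'1
    have hAAt : A * Aᵀ = 1 := mul_eq_one_comm.mp hA1
    rw [hMdef, Matrix.transpose_mul, Matrix.transpose_transpose]
    calc Aᵀ * A' * (A'ᵀ * A) = Aᵀ * (A' * A'ᵀ) * A := by
          simp only [Matrix.mul_assoc]
      _ = 1 := by rw [hA'A't, Matrix.mul_one, hA1]
  have hadj : M.adjugate = Mᵀ := by
    have h1 : M.adjugate = M⁻¹ := by
      rw [Matrix.inv_def, hdetM, Ring.inverse_one, one_smul]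
    rw [h1, Matrix.inv_eq_right_inv hMMt]
  -- the matrix B is the top-left minor of M
  have hsub : (Matrix.of fun i j : Fin m => ⟪b i, b' j⟫) =
      M.submatrix Fin.castSucc Fin.castSucc := by
    ext i j
    rw [Matrix.submatrix_apply, hMdef, Matrix.mul_apply]
    simp only [Matrix.transpose_apply, hAdef, hA'def, Matrix.of_apply, Fin.snoc_castSucc]
    rw [inner_sum]
  -- its determinant is the (last, last) cofactor of M
  have key : (Matrix.of fun i j : Fin m => ⟪b i, b' j⟫).det =
      M.adjugate (Fin.last m) (Fin.last m) := by
    rw [Matrix.adjugate_apply, Matrix.det_succ_row _ (Fin.last m)]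
    rw [Finset.sum_eq_single (Fin.last m)]
    · rw [Matrix.updateRow_self, Matrix.submatrix_updateRow_succAbove,
        Fin.succAbove_last, hsub, Pi.single_eq_same]
      have : ((-1 : ℝ)) ^ ((Fin.last m : ℕ) + (Fin.last m : ℕ)) = 1 := by
        rw [← two_mul, pow_mul]; norm_num
      rw [this, one_mul, one_mul]
    · intro j _ hj
      rw [Matrix.updateRow_self]
      rw [Pi.single_eq_of_ne hj]
      ring
    · intro h
      exact absurd (Finset.mem_univ _) h
  rw [key, hadj, Matrix.transpose_apply]
  have hMuv : M (Fin.last m) (Fin.last m) = ⟪u, v⟫ := by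
    rw [hMdef, Matrix.mul_apply]
    simp only [Matrix.transpose_apply, hAdef, hA'def, Matrix.of_apply, Fin.snoc_last]
    rw [inner_sum]
  rw [hMuv]
  have hm : (0 : ℝ) < 2 * (m + 1) := by positivity
  have h2 : (1 : ℝ) / (2 * (m + 1)) ≤ 1 / 2 := by
    apply div_le_div_of_nonneg_left one_pos.le (by norm_num)
    · nlinarith [Nat.cast_nonneg (α := ℝ) m]
  linarith
end
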